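/- arXiv:2005.00301 — 9 statements merged into one kernel-verified Lean document; each statement's English description precedes it below -/
import Mathlib

section
/- Let X be an alphabet with n ≥ 2 letters and let a ≤ b ≤ c be natural numbers. The number of prefix codes (w,v,u) with |w|=a, |v|=b, |u|=c (i.e., triples of words where no word is a proper prefix of another and all three are distinct as positioned, meaning w is not a prefix of v or u, and v is not a prefix of u, and vice versa) equals n^a·(n^b − n^{b−a})·(n^c − n^{c−a} − n^{c−b}), provided this quantity is nonnegative (which holds when n^{-a}+n^{-b}+n^{-c} ≤ 1). -/
/-- A sequence of code-words `C : Fin m → List X` is a uniquely decodable code if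
every word over `X` has at most one factorization into the code-words
(factorizations being compared as sequences of indices). -/
def IsUDCode {X : Type*} {m : ℕ} (C : Fin m → List X) : Prop :=
  ∀ l₁ l₂ : List (Fin m), (l₁.map C).flatten = (l₂.map C).flatten → l₁ = l₂

/-- A sequence of code-words is a prefix code if `C i` is a prefix of `C j`
only when `i = j`. -/
def IsPrefixCode {X : Type*} {m : ℕ} (C : Fin m → List X) : Prop :=
  ∀ i j : Fin m, C i <+: C j → i = j

open Finset Mathlib

lemma prefixCode_iff {X : Type*} {a b c : ℕ} (w v u : List X) (hw : w.length = a)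
    (hv : v.length = b) (hu : u.length = c) (hab : a ≤ b) (hbc : b ≤ c) :
    IsPrefixCode ![w, v, u] ↔ ¬ w <+: v ∧ ¬ w <+: u ∧ ¬ v <+: u := by
  have key : ∀ p q : List X, p.length ≤ q.length → ¬ p <+: q → ¬ q <+: p := by
    intro p q hle h hq
    exact h (hq.eq_of_length (le_antisymm hq.length_le hle) ▸ List.prefix_refl q)
  constructor
  · intro h
    refine ⟨fun hp => ?_, fun hp => ?_, fun hp => ?_⟩
    · exact absurd (h 0 1 (by simpa using hp)) (by decide)
    · exact absurd (h 0 2 (by simpa using hp)) (by decide)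
    · exact absurd (h 1 2 (by simpa using hp)) (by decide)
  · rintro ⟨h1, h2, h3⟩ i j hp
    have k1 := key w v (by omega) h1
    have k2 := key w u (by omega) h2
    have k3 := key v u (by omega) h3
    fin_cases i <;> fin_cases j <;> simp_all

lemma card_ext {X : Type*} [Fintype X] {j k : ℕ} (w : List X) (hw : w.length = j)
    (hjk : j ≤ k) [DecidablePred fun v : List.Vector X k => w <+: v.1] :
    (Finset.univ.filter fun v : List.Vector X k => w <+: v.1).card
      = Fintype.card X ^ (k - j) := by
  classical
  have e : {v : List.Vector X k // w <+: v.1} ≃ List.Vector X (k - j) :=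
    { toFun := fun v => ⟨v.1.1.drop j, by rw [List.length_drop, v.1.2]⟩
      invFun := fun t => ⟨⟨w ++ t.1, by
        rw [List.length_append, hw, t.2, Nat.add_sub_cancel' hjk]⟩, ⟨t.1, rfl⟩⟩
      left_inv := fun v => by
        apply Subtype.ext; apply Subtype.ext
        obtain ⟨s, hs⟩ := v.2
        simp only [← hs, List.drop_left' hw]
      right_inv := fun t => by
        apply Subtype.ext
        simp [List.drop_left' hw] }
  rw [← Fintype.card_subtype]
  rw [Fintype.card_congr e, card_vector]

def Q3 {X : Type*} {a b c : ℕ} (T : List.Vector X a × List.Vector X b × List.Vector X c) : Prop :=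
  ¬ T.1.1 <+: T.2.1.1 ∧ ¬ T.1.1 <+: T.2.2.1 ∧ ¬ T.2.1.1 <+: T.2.2.1

theorem count_prefix_codes_three {X : Type*} [Fintype X] (n a b c : ℕ) (hn : 2 ≤ n)
    (hX : Fintype.card X = n) (hab : a ≤ b) (hbc : b ≤ c)
    (hkraft : (1 : ℝ) / n ^ a + 1 / n ^ b + 1 / n ^ c ≤ 1) :
    Nat.card {T : List X × List X × List X //
        T.1.length = a ∧ T.2.1.length = b ∧ T.2.2.length = c ∧
        IsPrefixCode ![T.1, T.2.1, T.2.2]} =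
      n ^ a * (n ^ b - n ^ (b - a)) * (n ^ c - n ^ (c - a) - n ^ (c - b)) := by
  classical
  subst hX
  set N := Fintype.card X with hN
  have e : {T : List X × List X × List X //
        T.1.length = a ∧ T.2.1.length = b ∧ T.2.2.length = c ∧
        IsPrefixCode ![T.1, T.2.1, T.2.2]} ≃ {T : List.Vector X a × List.Vector X b × List.Vector X c // Q3 T} :=
    { toFun := fun T => ⟨(⟨T.1.1, T.2.1⟩, ⟨T.1.2.1, T.2.2.1⟩, ⟨T.1.2.2, T.2.2.2.1⟩),
        (prefixCode_iff _ _ _ T.2.1 T.2.2.1 T.2.2.2.1 hab hbc).mp T.2.2.2.2⟩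
      invFun := fun T => ⟨(T.1.1.1, T.1.2.1.1, T.1.2.2.1), T.1.1.2, T.1.2.1.2, T.1.2.2.2,
        (prefixCode_iff _ _ _ T.1.1.2 T.1.2.1.2 T.1.2.2.2 hab hbc).mpr T.2⟩
      left_inv := fun T => rfl
      right_inv := fun T => rfl }
  rw [Nat.card_congr e, Nat.card_eq_fintype_card, Fintype.card_subtype]
  have hK2 : ∀ (w : List.Vector X a) (v : List.Vector X b), ¬ w.1 <+: v.1 →
      (univ.filter fun u : List.Vector X c => ¬ w.1 <+: u.1 ∧ ¬ v.1 <+: u.1).card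
        = N ^ c - N ^ (c - a) - N ^ (c - b) := by
    intro w v hwv
    have hdisj : Disjoint (univ.filter fun u : List.Vector X c => w.1 <+: u.1)
        (univ.filter fun u : List.Vector X c => v.1 <+: u.1) := by
      rw [Finset.disjoint_left]
      intro u hu1 hu2
      simp only [mem_filter] at hu1 hu2
      rcases List.prefix_or_prefix_of_prefix hu1.2 hu2.2 with h | h
      · exact hwv h
      · have hlen : w.1.length ≤ v.1.length := by rw [w.2, v.2]; exact hab
        exact hwv (h.eq_of_length (le_antisymm h.length_le hlen) ▸ List.prefix_refl _)
    have hset : (univ.filter fun u : List.Vector X c => ¬ w.1 <+: u.1 ∧ ¬ v.1 <+: u.1)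
        = univ \ ((univ.filter fun u : List.Vector X c => w.1 <+: u.1)
            ∪ (univ.filter fun u : List.Vector X c => v.1 <+: u.1)) := by
      ext u; simp [not_or, and_assoc]
    rw [hset, Finset.card_sdiff_of_subset (Finset.subset_univ _), Finset.card_union_of_disjoint hdisj,
      card_ext w.1 w.2 (le_trans hab hbc), card_ext v.1 v.2 hbc, Finset.card_univ, card_vector,
      ← hN, Nat.sub_sub]
  have hsum : ∀ w : List.Vector X a,
      (∑ v : List.Vector X b, ∑ u : List.Vector X c, if Q3 (w, v, u) then 1 else 0)
        = (N ^ b - N ^ (b - a)) * (N ^ c - N ^ (c - a) - N ^ (c - b)) := by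
    intro w
    have step : ∀ v : List.Vector X b, (∑ u : List.Vector X c, if Q3 (w, v, u) then 1 else 0)
        = if ¬ w.1 <+: v.1 then N ^ c - N ^ (c - a) - N ^ (c - b) else 0 := by
      intro v
      by_cases hv : w.1 <+: v.1
      · simp [Q3, hv]
      · rw [if_pos hv, ← hK2 w v hv, Finset.card_filter]
        exact Finset.sum_congr rfl fun u _ => by simp [Q3, hv]
    rw [Finset.sum_congr rfl fun v _ => step v, Finset.sum_ite, Finset.sum_const,
      Finset.sum_const, smul_eq_mul, smul_eq_mul, mul_zero, add_zero]
    congr 1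
    rw [Finset.filter_not, Finset.card_sdiff_of_subset (Finset.filter_subset _ _),
      card_ext w.1 w.2 hab, Finset.card_univ, card_vector, ← hN]
  rw [Finset.card_filter, Fintype.sum_prod_type]
  simp only [Fintype.sum_prod_type]
  rw [Finset.sum_congr rfl fun w _ => hsum w, Finset.sum_const, Finset.card_univ,
    card_vector, ← hN, smul_eq_mul, mul_assoc]
end

section
/- For an alphabet X with n ≥ 2 letters and a ≤ b ≤ c with n^{a+b} ≥ 2n^b + n^a (ensuring prefix codes exist), the number of prefix codes with length distribution (a,b,c) equals n^c·(n^{a+b} − 2n^b − n^a + n^{b−a} + 1). -/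
private instance instLenFintype {X : Type*} [Fintype X] (k : ℕ) :
    Fintype {l : List X // l.length = k} :=
  (inferInstance : Fintype (List.Vector X k))

private lemma card_len (X : Type*) [Fintype X] (k : ℕ) :
    Fintype.card {l : List X // l.length = k} = Fintype.card X ^ k := by
  rw [← card_vector (α := X) k]
  exact Fintype.card_congr (Equiv.refl _)

/-- Words of length `k` extending a fixed word `w` of length `a` correspond to
words of length `k - a`. -/
private def prefixEquiv {X : Type*} (w : List X) {a k : ℕ} (hw : w.length = a) (hak : a ≤ k) :
    {l : {l : List X // l.length = k} // w <+: l.1} ≃ {l : List X // l.length = k - a} where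
  toFun l := ⟨l.1.1.drop a, by rw [List.length_drop, l.1.2]⟩
  invFun t := ⟨⟨w ++ t.1, by rw [List.length_append, hw, t.2, Nat.add_sub_cancel' hak]⟩,
    ⟨t.1, rfl⟩⟩
  left_inv := by
    rintro ⟨⟨l, hl⟩, hpre⟩
    apply Subtype.ext
    apply Subtype.ext
    show w ++ l.drop a = l
    obtain ⟨t, rfl⟩ := hpre
    rw [← hw, List.drop_left]
  right_inv := by
    rintro ⟨t, ht⟩
    apply Subtype.ext
    show (w ++ t).drop a = t
    rw [← hw, List.drop_left]

private lemma card_v {X : Type*} [Fintype X] (w : List X) {a b : ℕ}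
    (hw : w.length = a) (hab : a ≤ b) :
    Nat.card {v : {l : List X // l.length = b} // ¬ w <+: v.1} =
      Fintype.card X ^ b - Fintype.card X ^ (b - a) := by
  classical
  rw [Nat.card_eq_fintype_card, Fintype.card_subtype_compl, card_len,
    Fintype.card_congr (prefixEquiv w hw hab), card_len]

private lemma card_u {X : Type*} [Fintype X] (w v : List X) {a b c : ℕ}
    (hw : w.length = a) (hv : v.length = b) (hab : a ≤ b) (hbc : b ≤ c) (hwv : ¬ w <+: v) :
    Nat.card {u : {l : List X // l.length = c} // ¬ w <+: u.1 ∧ ¬ v <+: u.1} =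
      Fintype.card X ^ c - (Fintype.card X ^ (c - a) + Fintype.card X ^ (c - b)) := by
  classical
  have h1 : ∀ u : {l : List X // l.length = c},
      (¬ w <+: u.1 ∧ ¬ v <+: u.1) ↔ ¬ (w <+: u.1 ∨ v <+: u.1) := fun u => by tauto
  have hdisj : Disjoint (fun u : {l : List X // l.length = c} => w <+: u.1)
      (fun u : {l : List X // l.length = c} => v <+: u.1) := by
    rw [Pi.disjoint_iff]
    intro u
    rw [Prop.disjoint_iff]
    rintro ⟨hwu, hvu⟩
    rcases List.prefix_or_prefix_of_prefix hwu hvu with h | h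
    · exact hwv h
    · have hlen : v.length = w.length := le_antisymm h.length_le (by rw [hw, hv]; exact hab)
      exact hwv (h.eq_of_length hlen ▸ List.prefix_refl w)
  rw [Nat.card_congr (Equiv.subtypeEquivRight h1), Nat.card_eq_fintype_card,
    Fintype.card_subtype_compl, card_len, Fintype.card_subtype_or_disjoint _ _ hdisj,
    Fintype.card_congr (prefixEquiv w hw (hab.trans hbc)), card_len,
    Fintype.card_congr (prefixEquiv v hv hbc), card_len]

private lemma pc_iff {X : Type*} {w v u : List X} {a b c : ℕ} (hw : w.length = a)
    (hv : v.length = b) (hu : u.length = c) (hab : a ≤ b) (hbc : b ≤ c) :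
    IsPrefixCode ![w, v, u] ↔ ¬ w <+: v ∧ ¬ w <+: u ∧ ¬ v <+: u := by
  constructor
  · intro h
    refine ⟨fun hp => ?_, fun hp => ?_, fun hp => ?_⟩
    · exact absurd (h 0 1 (by simpa using hp)) (by decide)
    · exact absurd (h 0 2 (by simpa using hp)) (by decide)
    · exact absurd (h 1 2 (by simpa using hp)) (by decide)
  · rintro ⟨h1, h2, h3⟩ i j hij
    have key : ∀ x y : List X, ¬ x <+: y → x.length ≤ y.length → ¬ y <+: x := by
      intro x y hxy hl hyx
      have := hyx.eq_of_length (le_antisymm hyx.length_le hl)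
      subst this
      exact hxy (List.prefix_refl _)
    have h4 : ¬ v <+: w := key w v h1 (by rw [hw, hv]; exact hab)
    have h5 : ¬ u <+: w := key w u h2 (by rw [hw, hu]; exact hab.trans hbc)
    have h6 : ¬ u <+: v := key v u h3 (by rw [hv, hu]; exact hbc)
    fin_cases i <;> fin_cases j <;>
      simp_all [Matrix.cons_val_zero, Matrix.cons_val_one, Matrix.head_cons]

private def mainEquiv {X : Type*} {a b c : ℕ} (hab : a ≤ b) (hbc : b ≤ c) :
    {T : List X × List X × List X //
        T.1.length = a ∧ T.2.1.length = b ∧ T.2.2.length = c ∧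
        IsPrefixCode ![T.1, T.2.1, T.2.2]} ≃
    Σ (w : {l : List X // l.length = a}),
      Σ (v : {v : {l : List X // l.length = b} // ¬ w.1 <+: v.1}),
        {u : {l : List X // l.length = c} // ¬ w.1 <+: u.1 ∧ ¬ v.1.1 <+: u.1} where
  toFun := fun ⟨⟨w, v, u⟩, hw, hv, hu, hpc⟩ =>
    have h := (pc_iff hw hv hu hab hbc).1 hpc
    ⟨⟨w, hw⟩, ⟨⟨⟨v, hv⟩, h.1⟩, ⟨⟨u, hu⟩, h.2.1, h.2.2⟩⟩⟩
  invFun := fun ⟨⟨w, hw⟩, ⟨⟨⟨v, hv⟩, hwv⟩, ⟨⟨u, hu⟩, hwu, hvu⟩⟩⟩ =>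
    ⟨⟨w, v, u⟩, hw, hv, hu, (pc_iff hw hv hu hab hbc).2 ⟨hwv, hwu, hvu⟩⟩
  left_inv := fun ⟨⟨w, v, u⟩, hw, hv, hu, hpc⟩ => rfl
  right_inv := fun ⟨⟨w, hw⟩, ⟨⟨⟨v, hv⟩, hwv⟩, ⟨⟨u, hu⟩, hwu, hvu⟩⟩⟩ => rfl

theorem count_prefix_codes_three' {X : Type*} [Fintype X] (n a b c : ℕ) (hn : 2 ≤ n)
    (hX : Fintype.card X = n) (hab : a ≤ b) (hbc : b ≤ c)
    (hexist : 2 * n ^ b + n ^ a ≤ n ^ (a + b)) :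
    (Nat.card {T : List X × List X × List X //
        T.1.length = a ∧ T.2.1.length = b ∧ T.2.2.length = c ∧
        IsPrefixCode ![T.1, T.2.1, T.2.2]} : ℤ) =
      (n : ℤ) ^ c * ((n : ℤ) ^ (a + b) - 2 * (n : ℤ) ^ b - (n : ℤ) ^ a
        + (n : ℤ) ^ (b - a) + 1) := by
  classical
  have hcard : Nat.card {T : List X × List X × List X //
      T.1.length = a ∧ T.2.1.length = b ∧ T.2.2.length = c ∧
      IsPrefixCode ![T.1, T.2.1, T.2.2]} =
      n ^ a * ((n ^ b - n ^ (b - a)) * (n ^ c - (n ^ (c - a) + n ^ (c - b)))) := by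
    rw [Nat.card_congr (mainEquiv hab hbc), Nat.card_eq_fintype_card, Fintype.card_sigma]
    have step1 : ∀ w : {l : List X // l.length = a},
        (Fintype.card (Σ (v : {v : {l : List X // l.length = b} // ¬ w.1 <+: v.1}),
          {u : {l : List X // l.length = c} // ¬ w.1 <+: u.1 ∧ ¬ v.1.1 <+: u.1})) =
        (n ^ b - n ^ (b - a)) * (n ^ c - (n ^ (c - a) + n ^ (c - b))) := by
      intro w
      rw [Fintype.card_sigma]
      have step2 : ∀ v : {v : {l : List X // l.length = b} // ¬ w.1 <+: v.1},
          Fintype.card {u : {l : List X // l.length = c} //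
            ¬ w.1 <+: u.1 ∧ ¬ v.1.1 <+: u.1} =
          n ^ c - (n ^ (c - a) + n ^ (c - b)) := by
        intro v
        rw [← Nat.card_eq_fintype_card, card_u w.1 v.1.1 w.2 v.1.2 hab hbc v.2, hX]
      rw [Finset.sum_congr rfl fun v _ => step2 v, Finset.sum_const, Finset.card_univ,
        ← Nat.card_eq_fintype_card, card_v w.1 w.2 hab, hX, smul_eq_mul]
    rw [Finset.sum_congr rfl fun w _ => step1 w, Finset.sum_const, Finset.card_univ,
      card_len, hX, smul_eq_mul]
  have hn1 : 1 ≤ n := by omega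
  have hba : n ^ (b - a) ≤ n ^ b := Nat.pow_le_pow_right hn1 (Nat.sub_le b a)
  have key : n ^ (b - a) + 1 ≤ n ^ b := by
    have h1 : n ^ a * (n ^ (b - a) + 1) ≤ n ^ a * n ^ b := by
      rw [Nat.mul_add, ← pow_add, Nat.add_sub_cancel' hab, mul_one, ← pow_add]
      calc n ^ b + n ^ a ≤ 2 * n ^ b + n ^ a := by omega
        _ ≤ n ^ (a + b) := hexist
    exact Nat.le_of_mul_le_mul_left h1 (pow_pos (by omega : 0 < n) a)
  have hc2 : n ^ (c - a) + n ^ (c - b) ≤ n ^ c := by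
    have h1 : n ^ (c - b) * (n ^ (b - a) + 1) ≤ n ^ (c - b) * n ^ b :=
      Nat.mul_le_mul_left _ key
    have e1 : n ^ (c - b) * n ^ (b - a) = n ^ (c - a) := by
      rw [← pow_add]; congr 1; omega
    have e2 : n ^ (c - b) * n ^ b = n ^ c := by
      rw [← pow_add]; congr 1; omega
    rw [Nat.mul_add, mul_one, e1, e2] at h1
    omega
  rw [hcard]
  rw [Nat.cast_mul, Nat.cast_mul, Nat.cast_sub hba, Nat.cast_sub hc2]
  push_cast
  have e4 : (n : ℤ) ^ (a + b) = (n : ℤ) ^ a * (n : ℤ) ^ b := by rw [← pow_add]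
  have e2 : (n : ℤ) ^ c = (n : ℤ) ^ a * (n : ℤ) ^ (b - a) * (n : ℤ) ^ (c - b) := by
    rw [mul_assoc, ← pow_add, ← pow_add]; congr 1; omega
  have e3 : (n : ℤ) ^ (c - a) = (n : ℤ) ^ (b - a) * (n : ℤ) ^ (c - b) := by
    rw [← pow_add]; congr 1; omega
  have e1 : (n : ℤ) ^ b = (n : ℤ) ^ a * (n : ℤ) ^ (b - a) := by
    rw [← pow_add]; congr 1; omega
  rw [e4, e2, e3, e1]
  ring
end

section
/- Let X be an alphabet with n ≥ 2 letters and c ≥ 1. A triple (x, y, w) with x, y ∈ X and w ∈ X^c is a uniquely decodable code if and only if x ≠ y and w is not a word all of whose letters lie in {x, y}. -/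
section Aux
variable {X : Type*} {x y : X} {w : List X}

lemma splitForeign (x y : X) :
    ∀ w : List X, (¬ ∀ a ∈ w, a = x ∨ a = y) →
      ∃ r z t, w = r ++ z :: t ∧ (∀ a ∈ r, a = x ∨ a = y) ∧ ¬(z = x ∨ z = y) := by
  intro w
  induction w with
  | nil => intro h; exact absurd (by simp) h
  | cons a v ih =>
    intro h
    by_cases ha : a = x ∨ a = y
    · have hv : ¬ ∀ b ∈ v, b = x ∨ b = y := by
        intro hv
        exact h (by
          intro b hb
          rcases List.mem_cons.1 hb with rfl | hb
          exacts [ha, hv b hb])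
      obtain ⟨r, z, t, h1, h2, h3⟩ := ih hv
      refine ⟨a :: r, z, t, by simp [h1], ?_, h3⟩
      intro b hb
      rcases List.mem_cons.1 hb with rfl | hb
      exacts [ha, h2 b hb]
    · exact ⟨[], a, v, rfl, by simp, ha⟩

lemma structA (x y : X) (w : List X) :
    ∀ l : List (Fin 3),
      (∀ a ∈ (l.map ![[x],[y],w]).flatten, a = x ∨ a = y) ∨
      ∃ p rest, l = p ++ 2 :: rest ∧
        ∀ a ∈ (p.map ![[x],[y],w]).flatten, a = x ∨ a = y := by
  intro l
  induction l with
  | nil => left; simp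
  | cons i l ih =>
    have trich : ∀ k : Fin 3, k = 0 ∨ k = 1 ∨ k = 2 := by decide
    rcases trich i with rfl | rfl | rfl
    · rcases ih with hA | ⟨p, rest, hl, hp⟩
      · left
        simp only [List.map_cons, List.flatten_cons, Matrix.cons_val_zero]
        intro a ha
        rcases List.mem_append.1 ha with ha | ha
        · left; simpa using ha
        · exact hA a ha
      · right
        refine ⟨0 :: p, rest, by simp [hl], ?_⟩
        simp only [List.map_cons, List.flatten_cons, Matrix.cons_val_zero]
        intro a ha
        rcases List.mem_append.1 ha with ha | ha
        · left; simpa using ha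
        · exact hp a ha
    · rcases ih with hA | ⟨p, rest, hl, hp⟩
      · left
        simp only [List.map_cons, List.flatten_cons, Matrix.cons_val_one, Matrix.head_cons]
        intro a ha
        rcases List.mem_append.1 ha with ha | ha
        · right; simpa using ha
        · exact hA a ha
      · right
        refine ⟨1 :: p, rest, by simp [hl], ?_⟩
        simp only [List.map_cons, List.flatten_cons, Matrix.cons_val_one, Matrix.head_cons]
        intro a ha
        rcases List.mem_append.1 ha with ha | ha
        · right; simpa using ha
        · exact hp a ha
    · exact Or.inr ⟨[], l, rfl, by simp⟩

lemma no_mix (hw : ¬ ∀ a ∈ w, a = x ∨ a = y)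
    {a : X} (ha : a = x ∨ a = y) {B : List X} {l : List (Fin 3)}
    (h : w ++ B = a :: (l.map ![[x],[y],w]).flatten) : False := by
  obtain ⟨r, z, t, hsplit, hr, hz⟩ := splitForeign x y w hw
  rcases structA x y w l with hA | ⟨p, rest, hl, hp⟩
  · have hzw : z ∈ w := by rw [hsplit]; simp
    have : z ∈ a :: (l.map ![[x],[y],w]).flatten := h ▸ List.mem_append_left _ hzw
    rcases List.mem_cons.1 this with rfl | hmem
    · exact hz ha
    · exact hz (hA z hmem)
  · set J := (p.map ![[x],[y],w]).flatten with hJ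
    set R := (rest.map ![[x],[y],w]).flatten with hR
    have hjoin : (l.map ![[x],[y],w]).flatten = J ++ (w ++ R) := by
      rw [hl]; simp [hJ, hR]
    have hpre1 : r ++ [z] <+: w ++ B := by
      refine List.IsPrefix.trans ?_ (List.prefix_append w B)
      exact ⟨t, by rw [hsplit]; simp⟩
    have hpre2 : ((a :: J) ++ r) ++ [z] <+: w ++ B := by
      refine ⟨t ++ R, ?_⟩
      rw [h, hjoin, hsplit]
      simp
    have hle1 : (r ++ [z]).length ≤ (((a :: J) ++ r) ++ [z]).length := by
      simp; omega
    have hpre3 : r ++ [z] <+: ((a :: J) ++ r) ++ [z] :=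
      List.prefix_of_prefix_length_le hpre1 hpre2 hle1
    have hle2 : (r ++ [z]).length ≤ ((a :: J) ++ r).length := by simp
    have hpre4 : r ++ [z] <+: (a :: J) ++ r :=
      List.prefix_of_prefix_length_le hpre3 (List.prefix_append _ _) hle2
    have hzmem : z ∈ (a :: J) ++ r := hpre4.subset (by simp)
    rcases List.mem_append.1 hzmem with hmem | hmem
    · rcases List.mem_cons.1 hmem with rfl | hmem
      · exact hz ha
      · exact hz (hp z hmem)
    · exact hz (hr z hmem)

lemma head_eq (hxy : x ≠ y) (hw : ¬ ∀ a ∈ w, a = x ∨ a = y)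
    (i j : Fin 3) (l₁ l₂ : List (Fin 3))
    (h : ((i :: l₁).map ![[x],[y],w]).flatten = ((j :: l₂).map ![[x],[y],w]).flatten) :
    i = j := by
  simp only [List.map_cons, List.flatten_cons] at h
  have trich : ∀ k : Fin 3, k = 0 ∨ k = 1 ∨ k = 2 := by decide
  have hC0 : ![[x],[y],w] 0 = [x] := rfl
  have hC1 : ![[x],[y],w] 1 = [y] := rfl
  have hC2 : ![[x],[y],w] 2 = w := rfl
  rcases trich i with rfl | rfl | rfl <;> rcases trich j with rfl | rfl | rfl
  · rfl
  · rw [hC0, hC1] at h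
    exact absurd (List.head_eq_of_cons_eq h) hxy
  · rw [hC0, hC2] at h
    exact absurd (no_mix hw (Or.inl rfl) h.symm) id
  · rw [hC1, hC0] at h
    exact absurd (List.head_eq_of_cons_eq h) hxy.symm
  · rfl
  · rw [hC1, hC2] at h
    exact absurd (no_mix hw (Or.inr rfl) h.symm) id
  · rw [hC0, hC2] at h
    exact absurd (no_mix hw (Or.inl rfl) h) id
  · rw [hC1, hC2] at h
    exact absurd (no_mix hw (Or.inr rfl) h) id
  · rfl

lemma joinLetters [DecidableEq X] (x y : X) (w : List X) :
    ∀ v : List X, (∀ a ∈ v, a = x ∨ a = y) →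
      ((v.map (fun a => if a = x then (0 : Fin 3) else 1)).map ![[x],[y],w]).flatten = v := by
  intro v
  induction v with
  | nil => simp
  | cons a v ih =>
    intro hv
    have ha : a = x ∨ a = y := hv a (by simp)
    have hv' := ih (fun b hb => hv b (List.mem_cons_of_mem _ hb))
    simp only [List.map_cons, List.flatten_cons]
    by_cases hax : a = x
    · rw [if_pos hax, show ![[x],[y],w] 0 = [x] from rfl, hax]
      exact congrArg (List.cons x) hv'
    · have hay : a = y := ha.resolve_left hax
      rw [if_neg hax, show ![[x],[y],w] 1 = [y] from rfl, hay]
      exact congrArg (List.cons y) hv'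

end Aux

theorem ud_one_one_c_iff {X : Type*} [Fintype X] (n c : ℕ) (hn : 2 ≤ n)
    (hX : Fintype.card X = n) (hc : 1 ≤ c) (x y : X) (w : List X) (hw : w.length = c) :
    IsUDCode ![[x], [y], w] ↔ x ≠ y ∧ ¬ (∀ a ∈ w, a = x ∨ a = y) := by
  classical
  have hwne : w ≠ [] := by
    intro h; rw [h] at hw; simp at hw; omega
  constructor
  · intro hUD
    constructor
    · intro hxy
      have h01 := hUD [0] [1] (by simp [hxy])
      exact absurd h01 (by decide)
    · intro hall
      have key := joinLetters x y w w hall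
      have hbase : ((([2] : List (Fin 3)).map ![[x],[y],w]).flatten) = w := by
        show w ++ [] = w
        exact List.append_nil w
      have h2 := hUD [2] (w.map (fun a => if a = x then (0 : Fin 3) else 1))
        (hbase.trans key.symm)
      have h2' : (2 : Fin 3) ∈ w.map (fun a => if a = x then (0 : Fin 3) else 1) := by
        rw [← h2]; simp
      obtain ⟨a, _, hfa⟩ := List.mem_map.1 h2'
      have : (if a = x then (0 : Fin 3) else 1) ≠ 2 := by split <;> decide
      exact this hfa
  · rintro ⟨hxy, hforeign⟩
    intro l₁ l₂ h
    induction l₁ generalizing l₂ with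
    | nil =>
      cases l₂ with
      | nil => rfl
      | cons j l₂ =>
        exfalso
        simp only [List.map_nil, List.flatten_nil, List.map_cons, List.flatten_cons] at h
        have trich : ∀ k : Fin 3, k = 0 ∨ k = 1 ∨ k = 2 := by decide
        rcases trich j with rfl | rfl | rfl <;> simp [hwne] at h
    | cons i l₁ ih =>
      cases l₂ with
      | nil =>
        exfalso
        simp only [List.map_nil, List.flatten_nil, List.map_cons, List.flatten_cons] at h
        have trich : ∀ k : Fin 3, k = 0 ∨ k = 1 ∨ k = 2 := by decide
        rcases trich i with rfl | rfl | rfl <;> simp [hwne] at h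
      | cons j l₂ =>
        have hij : i = j := head_eq hxy hforeign i j l₁ l₂ h
        subst hij
        simp only [List.map_cons, List.flatten_cons] at h
        have := ih l₂ (List.append_cancel_left h)
        rw [this]
end

section
/- Let C = (v_1,...,v_m) be a sequence of non-empty words over an alphabet X, and suppose there exist distinct indices μ, κ with v_μ = v_κ · v for some word v. If C is not a uniquely decodable code, then the sequence C' obtained from C by replacing v_μ with v (keeping all other entries the same) is also not a uniquely decodable code. -/
/-- Replace every occurrence of `μ` by the pair `κ, μ`. -/
def replMap {m : ℕ} (μ κ : Fin m) : List (Fin m) → List (Fin m)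
  | [] => []
  | i :: t => if i = μ then κ :: μ :: replMap μ κ t else i :: replMap μ κ t

lemma replMap_head {m : ℕ} (μ κ : Fin m) (hμκ : μ ≠ κ) :
    ∀ (l t : List (Fin m)), replMap μ κ l ≠ μ :: t := by
  intro l t
  cases l with
  | nil => simp [replMap]
  | cons i s =>
    by_cases h : i = μ
    · simp only [replMap, if_pos h]
      intro he
      exact hμκ (List.cons_eq_cons.mp he).1.symm
    · simp only [replMap, if_neg h]
      intro he
      exact h (List.cons_eq_cons.mp he).1

lemma replMap_inj {m : ℕ} (μ κ : Fin m) (hμκ : μ ≠ κ) :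
    ∀ l₁ l₂ : List (Fin m), replMap μ κ l₁ = replMap μ κ l₂ → l₁ = l₂ := by
  intro l₁
  induction l₁ with
  | nil =>
    intro l₂ h
    cases l₂ with
    | nil => rfl
    | cons b t =>
      by_cases hb : b = μ <;> simp [replMap, hb] at h
  | cons a t ih =>
    intro l₂ h
    cases l₂ with
    | nil =>
      by_cases ha : a = μ <;> simp [replMap, ha] at h
    | cons b s =>
      by_cases ha : a = μ <;> by_cases hb : b = μ
      · simp [replMap, ha, hb] at h
        rw [ha, hb, ih s h]
      · simp [replMap, ha, hb] at h
        exact absurd h.2.symm (replMap_head μ κ hμκ s (replMap μ κ t))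
      · simp [replMap, ha, hb] at h
        exact absurd h.2 (replMap_head μ κ hμκ t (replMap μ κ s))
      · simp [replMap, ha, hb] at h
        rw [h.1, ih s h.2]

lemma replMap_join {X : Type*} {m : ℕ} (C : Fin m → List X) (μ κ : Fin m)
    (hμκ : μ ≠ κ) (v : List X) (hfac : C μ = C κ ++ v) :
    ∀ l : List (Fin m),
      ((replMap μ κ l).map (Function.update C μ v)).flatten = (l.map C).flatten := by
  intro l
  induction l with
  | nil => simp [replMap]
  | cons a t ih =>
    by_cases ha : a = μ
    · subst ha
      simp only [replMap, if_pos rfl, if_true, List.map_cons, List.flatten_cons, ih]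
      rw [Function.update_self, Function.update_of_ne (Ne.symm hμκ)]
      rw [hfac, List.append_assoc]
    · simp only [replMap, if_neg ha, List.map_cons, List.flatten_cons, ih]
      rw [Function.update_of_ne ha]

theorem not_ud_of_replace {X : Type*} {m : ℕ} (C : Fin m → List X)
    (hne : ∀ i, C i ≠ []) (μ κ : Fin m) (hμκ : μ ≠ κ) (v : List X)
    (hfac : C μ = C κ ++ v) (hC : ¬ IsUDCode C) :
    ¬ IsUDCode (Function.update C μ v) := by
  intro hud
  apply hC
  intro l₁ l₂ h
  apply replMap_inj μ κ hμκ
  apply hud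
  rw [replMap_join C μ κ hμκ v hfac, replMap_join C μ κ hμκ v hfac, h]
end

section
/- Over the binary alphabet {0,1}, for every odd c ≥ 1, the triple (1, 00, 1·0^c) is a uniquely decodable code, where 1·0^c denotes the word consisting of a 1 followed by c zeros. -/
/-- number of leading `false`s -/
private def lzc (L : List Bool) : ℕ := (L.takeWhile (· = false)).length

private lemma lzc_rep_append (c : ℕ) (L : List Bool) :
    lzc (List.replicate c false ++ L) = c + lzc L := by
  induction c with
  | zero => simp
  | succ n ih =>
    rw [List.replicate_succ, List.cons_append]
    simp only [lzc, List.takeWhile]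
    simp only [lzc] at ih
    simp [ih]
    ring

private lemma lzc_even (l : List (Fin 3)) :
    Even (lzc ((l.map ![[true], [false, false],
        true :: List.replicate (c : ℕ) false]).flatten)) := by
  induction l with
  | nil => simp [lzc]
  | cons i t ih =>
    fin_cases i
    · simp [lzc, List.takeWhile]
    · simp only [List.map_cons, List.flatten_cons]
      show Even (lzc (List.replicate 2 false ++ _))
      rw [lzc_rep_append]
      exact (even_two).add ih
    · simp [lzc, List.takeWhile]

theorem ud_one_doublezero_one_zeros (c : ℕ) (hc : 1 ≤ c) (hodd : Odd c) :
    IsUDCode ![[true], [false, false], true :: List.replicate c false] := by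
  intro l₁ l₂ h
  induction l₁ generalizing l₂ with
  | nil =>
    cases l₂ with
    | nil => rfl
    | cons j t =>
      exfalso
      fin_cases j <;> simp_all
  | cons i t ih =>
    cases l₂ with
    | nil =>
      exfalso
      fin_cases i <;> simp_all
    | cons j t₂ =>
      simp only [List.map_cons, List.flatten_cons] at h
      fin_cases i <;> fin_cases j <;> simp at h
      · -- 0 0
        rw [ih t₂ h]
      · -- 0 2
        exfalso
        have h2 : lzc ((t.map ![[true], [false, false],
            true :: List.replicate c false]).flatten) =
            c + lzc ((t₂.map ![[true], [false, false],
            true :: List.replicate c false]).flatten) := by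
          show lzc _ = _
          rw [show ((t.map ![[true], [false, false],
            true :: List.replicate c false]).flatten) = _ from h]
          exact lzc_rep_append c _
        have e1 := lzc_even (c := c) t
        have e2 := lzc_even (c := c) t₂
        rw [h2] at e1
        rcases e1 with ⟨k, hk⟩
        rcases e2 with ⟨k', hk'⟩
        rcases hodd with ⟨m, hm⟩
        omega
      · -- 1 1
        rw [ih t₂ h]
      · -- 2 0
        exfalso
        have h2 : lzc ((t₂.map ![[true], [false, false],
            true :: List.replicate c false]).flatten) =
            c + lzc ((t.map ![[true], [false, false],
            true :: List.replicate c false]).flatten) := by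
          show lzc _ = _
          rw [show ((t₂.map ![[true], [false, false],
            true :: List.replicate c false]).flatten) = _ from h.symm]
          exact lzc_rep_append c _
        have e1 := lzc_even (c := c) t
        have e2 := lzc_even (c := c) t₂
        rw [h2] at e2
        rcases e1 with ⟨k, hk⟩
        rcases e2 with ⟨k', hk'⟩
        rcases hodd with ⟨m, hm⟩
        omega
      · -- 2 2
        rw [ih t₂ h]
end

section
/- Over the binary alphabet {0,1}, for every c ≥ 1, a word w of length c makes the triple (1, 00, w) fail to be a uniquely decodable code if and only if w = 0^c or w is a concatenation of blocks each equal to 1 or 00 (i.e., w lies in the submonoid generated by the words 1 and 00). -/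
set_option linter.deprecated false

/-- words that are concatenations of blocks `[true]` and `[false, false]` -/
def Lang (u : List Bool) : Prop :=
  ∃ bs : List (List Bool), (∀ b ∈ bs, b = [true] ∨ b = [false, false]) ∧ bs.flatten = u

lemma lang_nil : Lang [] := ⟨[], by simp, rfl⟩

lemma lang_cons_true {u : List Bool} (h : Lang u) : Lang (true :: u) := by
  obtain ⟨bs, hb, hj⟩ := h
  refine ⟨[true] :: bs, ?_, by simp [hj]⟩
  intro b hbmem
  rcases List.mem_cons.1 hbmem with rfl | h2
  · exact Or.inl rfl
  · exact hb b h2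

lemma lang_cons_ff {u : List Bool} (h : Lang u) : Lang (false :: false :: u) := by
  obtain ⟨bs, hb, hj⟩ := h
  refine ⟨[false, false] :: bs, ?_, by simp [hj]⟩
  intro b hbmem
  rcases List.mem_cons.1 hbmem with rfl | h2
  · exact Or.inr rfl
  · exact hb b h2

lemma lang_true_inv {u : List Bool} (h : Lang (true :: u)) : Lang u := by
  obtain ⟨bs, hb, hj⟩ := h
  match bs with
  | [] => simp at hj
  | b :: bs' =>
    rcases hb b (by simp) with rfl | rfl
    · simp only [List.flatten_cons, List.singleton_append, List.cons.injEq] at hj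
      exact ⟨bs', fun x hx => hb x (by simp [hx]), hj.2⟩
    · simp only [List.flatten_cons, List.cons_append, List.cons.injEq] at hj
      exact absurd hj.1 (by simp)

lemma lang_false_inv {u : List Bool} (h : Lang (false :: u)) :
    ∃ u', u = false :: u' ∧ Lang u' := by
  obtain ⟨bs, hb, hj⟩ := h
  match bs with
  | [] => simp at hj
  | b :: bs' =>
    rcases hb b (by simp) with rfl | rfl
    · simp only [List.flatten_cons, List.singleton_append, List.cons.injEq] at hj
      exact absurd hj.1 (by simp)
    · simp only [List.flatten_cons, List.cons_append, List.cons.injEq, List.nil_append] at hj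
      exact ⟨bs'.flatten, hj.2.symm, bs', fun x hx => hb x (by simp [hx]), rfl⟩

lemma not_lang_block : ∀ (j : ℕ) (v : List Bool), (v = [] ∨ ∃ v', v = true :: v') →
    ¬ Lang (List.replicate (2*j+1) false ++ v) := by
  intro j
  induction j with
  | zero =>
    intro v hv hL
    simp only [Nat.mul_zero, Nat.zero_add, List.replicate_one, List.cons_append,
      List.nil_append] at hL
    obtain ⟨u', hu', _⟩ := lang_false_inv hL
    rcases hv with rfl | ⟨v', rfl⟩ <;> simp at hu'
  | succ n ih =>
    intro v hv hL
    have h2 : 2*(n+1)+1 = 2 + (2*n+1) := by ring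
    rw [h2, List.replicate_add] at hL
    simp only [List.append_assoc, List.replicate_succ, List.replicate_zero,
      List.cons_append, List.nil_append] at hL
    obtain ⟨u1, hu1, hL1⟩ := lang_false_inv hL
    simp only [List.cons.injEq] at hu1
    rw [← hu1.2] at hL1
    exact ih v hv hL1

lemma not_lang_defect : ∀ (n : ℕ) (a : List Bool), a.length ≤ n →
    (a = [] ∨ ∃ a', a = a' ++ [true]) → ∀ (j : ℕ) (v : List Bool),
    (v = [] ∨ ∃ v', v = true :: v') →
    ¬ Lang (a ++ (List.replicate (2*j+1) false ++ v)) := by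
  intro n
  induction n with
  | zero =>
    intro a ha _ j v hv
    rw [List.length_eq_zero_iff.1 (Nat.le_zero.1 ha), List.nil_append]
    exact not_lang_block j v hv
  | succ n ih =>
    intro a ha hae j v hv hL
    match a with
    | [] => exact not_lang_block j v hv (by simpa using hL)
    | true :: a' =>
      have hL' : Lang (a' ++ (List.replicate (2*j+1) false ++ v)) :=
        lang_true_inv (by simpa using hL)
      have hae' : a' = [] ∨ ∃ a'', a' = a'' ++ [true] := by
        rcases hae with h | ⟨a2, h2⟩
        · simp at h
        · match a' with
          | [] => exact Or.inl rfl
          | x :: a3 =>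
            right
            match a2 with
            | [] => simp at h2
            | y :: a4 =>
              simp only [List.cons_append, List.cons.injEq] at h2
              exact ⟨a4, h2.2⟩
      exact ih a' (by simp at ha; omega) hae' j v hv hL'
    | false :: a' =>
      simp only [List.cons_append] at hL
      obtain ⟨u', hu', hLu⟩ := lang_false_inv hL
      match a' with
      | [] =>
        rcases hae with h | ⟨a2, h2⟩
        · simp at h
        · match a2 with
          | [] => simp at h2
          | y :: a4 => simp at h2
      | x :: a'' =>
        simp only [List.cons_append, List.cons.injEq] at hu'
        have hx : x = false := hu'.1
        subst hx
        rw [← hu'.2] at hLu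
        have hae'' : a'' = [] ∨ ∃ a3, a'' = a3 ++ [true] := by
          rcases hae with h | ⟨a2, h2⟩
          · simp at h
          · match a'' with
            | [] =>
              exfalso
              have : a2 ++ [true] = [false, false] := h2.symm
              match a2 with
              | [] => simp at this
              | [z] => simp at this
              | z :: zz :: a5 => simp at this
            | x2 :: a3 =>
              right
              match a2 with
              | [] => simp at h2
              | [y] => simp at h2
              | y :: y2 :: a4 =>
                simp only [List.cons_append, List.cons.injEq] at h2
                exact ⟨a4, h2.2.2⟩
        have hlen : a''.length ≤ n := by simp at ha; omega
        exact ih a'' hlen hae'' j v hv hLu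

lemma decomp : ∀ (n : ℕ) (u : List Bool), u.length ≤ n → ¬ Lang u →
    ∃ (p : List Bool) (m : ℕ) (v : List Bool),
      u = p ++ (List.replicate (2*m+1) false ++ v) ∧ Lang p ∧
      (p = [] ∨ ∃ p', p = p' ++ [true]) ∧ (v = [] ∨ ∃ v', v = true :: v') := by
  intro n
  induction n with
  | zero =>
    intro u hu hL
    rw [List.length_eq_zero_iff.1 (Nat.le_zero.1 hu)] at hL
    exact absurd lang_nil hL
  | succ n ih =>
    intro u hu hL
    match u with
    | [] => exact absurd lang_nil hL
    | true :: u' =>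
      have hL' : ¬ Lang u' := fun h => hL (lang_cons_true h)
      obtain ⟨p, m, v, he, hp, hpe, hv⟩ := ih u' (by simp at hu; omega) hL'
      refine ⟨true :: p, m, v, by simp [he], lang_cons_true hp, ?_, hv⟩
      right
      rcases hpe with rfl | ⟨p', rfl⟩
      · exact ⟨[], rfl⟩
      · exact ⟨true :: p', rfl⟩
    | [false] =>
      exact ⟨[], 0, [], by simp, lang_nil, Or.inl rfl, Or.inl rfl⟩
    | false :: true :: u' =>
      exact ⟨[], 0, true :: u', by simp, lang_nil, Or.inl rfl, Or.inr ⟨u', rfl⟩⟩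
    | false :: false :: u' =>
      have hL' : ¬ Lang u' := fun h => hL (lang_cons_ff h)
      obtain ⟨p, m, v, he, hp, hpe, hv⟩ := ih u' (by simp at hu; omega) hL'
      rcases hpe with rfl | ⟨p', rfl⟩
      · refine ⟨[], m+1, v, ?_, lang_nil, Or.inl rfl, hv⟩
        simp only [List.nil_append] at he ⊢
        rw [show 2*(m+1)+1 = 2 + (2*m+1) from by ring, List.replicate_add]
        simp [he, List.replicate_succ]
      · refine ⟨false :: false :: (p' ++ [true]), m, v, by simp [he],
          lang_cons_ff hp, Or.inr ⟨false :: false :: p', by simp⟩, hv⟩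

def Phi (p : List Bool) (m k : ℕ) : Prop :=
  1 ≤ k ∧ (k ≤ p.length ∨ ∃ j, j ≤ m ∧ k = p.length + 2*j)

section Machine

variable {w p v : List Bool} {m : ℕ}

lemma wlen (hw : w = p ++ (List.replicate (2*m+1) false ++ v)) :
    w.length = p.length + (2*m+1) + v.length := by
  subst hw; simp; omega

lemma drop_eq_A (hw : w = p ++ (List.replicate (2*m+1) false ++ v)) {k : ℕ} (hk : k ≤ p.length) :
    w.drop k = p.drop k ++ (List.replicate (2*m+1) false ++ v) := by
  subst hw; exact List.drop_append_of_le_length hk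

lemma drop_eq_B (hw : w = p ++ (List.replicate (2*m+1) false ++ v)) {j : ℕ} (hj : j ≤ m) :
    w.drop (p.length + 2*j) = List.replicate (2*(m-j)+1) false ++ v := by
  subst hw
  rw [List.drop_length_add_append, List.drop_append_of_le_length (by simp; omega), List.drop_replicate]
  congr 2
  omega

lemma drop_last_p (hpe : p = [] ∨ ∃ p', p = p' ++ [true]) {k : ℕ} (hk : k + 1 = p.length) :
    p.drop k = [true] := by
  rcases hpe with rfl | ⟨p', rfl⟩
  · simp at hk
  · have hk' : k = p'.length := by simp at hk; omega
    subst hk'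
    exact List.drop_left

lemma cw1 (hw : w = p ++ (List.replicate (2*m+1) false ++ v))
    (hpe : p = [] ∨ ∃ p', p = p' ++ [true]) (hv : v = [] ∨ ∃ v', v = true :: v')
    {k : ℕ} (hφ : Phi p m k) : w.drop k ≠ [true] := by
  intro hcontra
  rcases hφ.2 with hk | ⟨j, hj, rfl⟩
  · rw [drop_eq_A hw hk] at hcontra
    have hl := congrArg List.length hcontra
    simp at hl
    have hm : m = 0 ∧ v.length = 0 ∧ p.length - k = 0 := by omega
    rw [List.eq_nil_of_length_eq_zero (by simp; omega : (p.drop k).length = 0),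
      List.eq_nil_of_length_eq_zero hm.2.1, hm.1] at hcontra
    simp at hcontra
  · rw [drop_eq_B hw hj, List.replicate_succ] at hcontra
    simp at hcontra

lemma cw00 (hw : w = p ++ (List.replicate (2*m+1) false ++ v))
    (hpe : p = [] ∨ ∃ p', p = p' ++ [true]) (hv : v = [] ∨ ∃ v', v = true :: v')
    {k : ℕ} (hφ : Phi p m k) : w.drop k ≠ [false, false] := by
  intro hcontra
  rcases hφ.2 with hk | ⟨j, hj, rfl⟩
  · rw [drop_eq_A hw hk] at hcontra
    have hl := congrArg List.length hcontra
    simp at hl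
    rcases (by omega : m = 0 ∧ ((p.length - k = 1 ∧ v.length = 0) ∨
        (p.length - k = 0 ∧ v.length = 1))) with ⟨hm, hc | hc⟩
    · rw [drop_last_p hpe (by omega)] at hcontra
      simp at hcontra
    · rw [List.eq_nil_of_length_eq_zero (by simp; omega : (p.drop k).length = 0)] at hcontra
      rcases hv with rfl | ⟨v', rfl⟩
      · simp at hc
      · have : v' = [] := by
          have := hc.2; simp at this; exact this
        subst this
        rw [hm] at hcontra
        simp at hcontra
  · rw [drop_eq_B hw hj] at hcontra
    have hl := congrArg List.length hcontra
    simp at hl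
    have h1 : m - j = 0 ∧ v.length = 1 := by omega
    rcases hv with rfl | ⟨v', rfl⟩
    · simp at h1
    · have : v' = [] := by
        have := h1.2; simp at this; exact this
      subst this
      rw [h1.1] at hcontra
      simp at hcontra

lemma step1 (hw : w = p ++ (List.replicate (2*m+1) false ++ v))
    {k : ℕ} (hφ : Phi p m k) {r : List Bool} (hd : w.drop k = true :: r) : Phi p m (k+1) := by
  rcases hφ.2 with hk | ⟨j, hj, rfl⟩
  · rcases Nat.lt_or_ge k p.length with hlt | hge
    · exact ⟨by omega, Or.inl (by omega)⟩
    · exfalso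
      have hk' : k = p.length := le_antisymm hk hge
      rw [drop_eq_A hw hk,
        List.eq_nil_of_length_eq_zero (by simp; omega : (p.drop k).length = 0),
        List.replicate_succ] at hd
      simp at hd
  · exfalso
    rw [drop_eq_B hw hj, List.replicate_succ] at hd
    simp at hd

lemma step00 (hw : w = p ++ (List.replicate (2*m+1) false ++ v))
    (hpe : p = [] ∨ ∃ p', p = p' ++ [true]) (hv : v = [] ∨ ∃ v', v = true :: v')
    {k : ℕ} (hφ : Phi p m k) {r : List Bool} (hd : w.drop k = false :: false :: r) :
    Phi p m (k+2) := by
  rcases hφ.2 with hk | ⟨j, hj, rfl⟩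
  · rcases Nat.lt_or_ge (k+1) p.length with hlt | hge
    · exact ⟨by omega, Or.inl (by omega)⟩
    · rcases Nat.lt_or_ge k p.length with hlt2 | hge2
      · exfalso
        rw [drop_eq_A hw hk, drop_last_p hpe (by omega)] at hd
        simp at hd
      · have hk' : k = p.length := le_antisymm hk hge2
        rcases Nat.eq_zero_or_pos m with rfl | hm
        · exfalso
          rw [drop_eq_A hw hk,
            List.eq_nil_of_length_eq_zero (by simp; omega : (p.drop k).length = 0)] at hd
          simp at hd
          rcases hv with rfl | ⟨v', rfl⟩
          · simp at hd
          · simp at hd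
        · exact ⟨by omega, Or.inr ⟨1, by omega, by omega⟩⟩
  · rcases Nat.lt_or_ge j m with hlt | hge
    · exact ⟨by omega, Or.inr ⟨j+1, by omega, by omega⟩⟩
    · exfalso
      have hj' : j = m := le_antisymm hj hge
      rw [drop_eq_B hw hj, hj'] at hd
      simp at hd
      rcases hv with rfl | ⟨v', rfl⟩
      · simp at hd
      · simp at hd

end Machine

lemma true_mem_ends_true {p p' : List Bool} (h : p = p' ++ [true]) {L : ℕ}
    (hrep : p = List.replicate L false) : False := by
  have : true ∈ p := by rw [h]; simp
  rw [hrep] at this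
  simp [List.mem_replicate] at this

section Machine2

variable {w p v : List Bool} {m : ℕ}

lemma flip_phi (hp : Lang p)
    (hpe : p = [] ∨ ∃ p', p = p' ++ [true]) (hv : v = [] ∨ ∃ v', v = true :: v')
    (hw : w = p ++ (List.replicate (2*m+1) false ++ v))
    (hz : w ≠ List.replicate w.length false)
    {k : ℕ} (hφ : Phi p m k) (hpre : w.drop k = w.take (w.length - k)) :
    Phi p m (w.length - k) := by
  have hwl : w.length = p.length + (2*m+1) + v.length := wlen hw
  have hk1 : 1 ≤ k := hφ.1
  rcases hφ.2 with hkp | ⟨j, hj, hkeq⟩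
  · -- CASE A : k ≤ p.length
    have hpne : p ≠ [] := by intro h; rw [h] at hkp; simp at hkp; omega
    have hpe' : ∃ p', p = p' ++ [true] := by
      rcases hpe with h | h
      · exact absurd h hpne
      · exact h
    obtain ⟨p', hp'⟩ := hpe'
    have hdropL1 : w.drop (p.length - 1) = true :: (List.replicate (2*m+1) false ++ v) := by
      rw [hw, List.drop_append_of_le_length (by omega),
        drop_last_p (Or.inr ⟨p', hp'⟩) (by omega)]
      simp
    rcases Nat.lt_or_ge (2*m+1) k with hbig | hsmall
    · -- k ≥ 2m+2
      rcases hv with rfl | ⟨v', rfl⟩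
      · simp only [List.length_nil] at hwl
        exact ⟨by omega, Or.inl (by omega)⟩
      · exfalso
        set x0 := p.length - k with hx0
        have hx0k : k + x0 = p.length := by omega
        have key : (w.drop x0).take (2*m+1 + (true :: v').length)
            = List.replicate (2*m+1) false ++ (true :: v') := by
          have h1 := congrArg (List.drop x0) hpre
          rw [List.drop_drop, List.drop_take, hx0k] at h1
          have e2 : w.length - k - x0 = 2*m+1 + (true :: v').length := by omega
          rw [e2] at h1
          have h2 : w.drop p.length = List.replicate (2*m+1) false ++ (true :: v') := by
            rw [hw]; exact List.drop_left
          rw [h2] at h1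
          exact h1.symm
        have hdx0 : w.drop x0 = p.drop x0 ++ (List.replicate (2*m+1) false ++ (true :: v')) := by
          rw [hw]; exact List.drop_append_of_le_length (by omega)
        have key2 : (p.drop x0).take (2*m+2) = List.replicate (2*m+1) false ++ [true] := by
          have h1 : (w.drop x0).take (2*m+2)
              = ((w.drop x0).take (2*m+1 + (true :: v').length)).take (2*m+2) := by
            rw [List.take_take]
            congr 1
            simp
            omega
          rw [key] at h1
          have h2 : (List.replicate (2*m+1) false ++ (true :: v')).take (2*m+2)
              = List.replicate (2*m+1) false ++ [true] := by
            have h3 := List.take_length_add_append (l₁ := List.replicate (2*m+1) false)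
              (l₂ := true :: v') 1
            simp only [List.length_replicate] at h3
            rw [h3]
            simp
          rw [h2] at h1
          rw [hdx0, List.take_append_of_le_length (by simp; omega)] at h1
          exact h1
        have hsplit : p = p.take x0 ++
            (List.replicate (2*m+1) false ++ (true :: (p.drop x0).drop (2*m+2))) := by
          conv_lhs => rw [← List.take_append_drop x0 p,
            ← List.take_append_drop (2*m+2) (p.drop x0), key2]
          simp
        have hleft : p.take x0 = [] ∨ ∃ a', p.take x0 = a' ++ [true] := by
          rcases Nat.eq_zero_or_pos x0 with h0 | h0
          · left; simp [h0]
          · right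
            have h1 := congrArg (List.drop (x0 - 1)) hpre
            rw [List.drop_drop, List.drop_take,
              (by omega : k + (x0 - 1) = p.length - 1), hdropL1] at h1
            have e4 : w.drop (x0 - 1) = p.drop (x0 - 1) ++
                (List.replicate (2*m+1) false ++ (true :: v')) := by
              rw [hw]; exact List.drop_append_of_le_length (by omega)
            rw [e4] at h1
            obtain ⟨b, t, hbt⟩ := List.exists_cons_of_ne_nil
              (show p.drop (x0 - 1) ≠ [] by
                intro hcon
                have := congrArg List.length hcon
                simp at this
                omega)
            rw [hbt] at h1
            simp only [List.cons_append] at h1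
            rcases hT : w.length - k - (x0 - 1) with _ | t2
            · omega
            · rw [hT, List.take_succ_cons] at h1
              have hb : b = true := (List.cons.inj h1).1.symm
              subst hb
              refine ⟨p.take (x0 - 1), ?_⟩
              have htk : p.take x0 = p.take (x0 - 1) ++ (p.drop (x0 - 1)).take 1 := by
                rw [← List.take_add]
                congr 1
                omega
              rw [htk, hbt]
              simp
        exact not_lang_defect p.length (p.take x0) (by simp) hleft m
          (true :: (p.drop x0).drop (2*m+2)) (Or.inr ⟨_, rfl⟩) (by rw [← hsplit]; exact hp)
    · -- k ≤ 2m+1 : contradiction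
      exfalso
      have h1 := congrArg (List.drop (p.length - 1)) hpre
      rw [List.drop_drop, List.drop_take,
        (by omega : k + (p.length - 1) = p.length + (k-1)), hdropL1] at h1
      have hLHS : w.drop (p.length + (k-1))
          = false :: (List.replicate (2*m+1-k) false ++ v) := by
        rw [hw, List.drop_length_add_append, List.drop_append_of_le_length (by simp; omega),
          List.drop_replicate, (by omega : 2*m+1 - (k-1) = (2*m+1-k) + 1),
          List.replicate_succ]
        simp
      rw [hLHS] at h1
      rcases hT : w.length - k - (p.length - 1) with _ | t2
      · omega
      · rw [hT, List.take_succ_cons] at h1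
        exact absurd (List.cons.inj h1).1 (by simp)
  · -- CASE B : k = p.length + 2*j
    subst hkeq
    have hq : w.drop (p.length + 2*j) = List.replicate (2*(m-j)+1) false ++ v :=
      drop_eq_B hw hj
    rw [hq] at hpre
    rcases hv with rfl | ⟨v', rfl⟩
    · -- v = []
      simp only [List.length_nil] at hwl
      have hck : w.length - (p.length + 2*j) = 2*(m-j)+1 := by omega
      have hqL : 2*(m-j)+1 ≤ p.length := by
        rcases hpe with rfl | ⟨p', hp'⟩
        · exfalso
          apply hz
          rw [hw]
          simp [hwl]
        · by_contra hq2
          push_neg at hq2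
          have htq : w.take (2*(m-j)+1) = List.replicate (2*(m-j)+1) false := by
            have h5 := hpre.symm
            rw [hck] at h5
            simpa using h5
          have hpw : p = w.take p.length := by
            rw [hw, List.take_append_of_le_length (le_refl _)]
            simp
          have h6 : w.take p.length = (w.take (2*(m-j)+1)).take p.length := by
            rw [List.take_take]
            congr 1
            omega
          have h7 : w.take p.length = List.replicate p.length false := by
            rw [h6, htq, List.take_replicate]
            congr 1
            omega
          exact true_mem_ends_true hp' (hpw.trans h7)
      exact ⟨by omega, Or.inl (by omega)⟩
    · -- v = true :: v'
      exfalso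
      set q := 2*(m-j)+1 with hqdef
      have hck : w.length - (p.length + 2*j) = q + (v'.length + 1) := by
        simp at hwl; omega
      have ht : w.take (q+1) = List.replicate q false ++ [true] := by
        have h1 : (w.take (w.length - (p.length + 2*j))).take (q+1) = w.take (q+1) := by
          rw [List.take_take]
          congr 1
          omega
        rw [← h1, ← hpre]
        have h3 := List.take_length_add_append (l₁ := List.replicate q false) (l₂ := true :: v') 1
        simp only [List.length_replicate] at h3
        rw [h3]
        simp
      rcases hpe with rfl | ⟨p', hp'⟩
      · -- p = [] : k = 2j ≥ 1 so j ≥ 1, q + 1 ≤ 2m+1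
        have hj1 : 1 ≤ j := by simp at hk1; omega
        have h4 : w.take (q+1) = List.replicate (q+1) false := by
          rw [hw]
          simp only [List.nil_append]
          rw [List.take_append_of_le_length (by simp; omega), List.take_replicate]
          congr 1
          omega
        rw [h4] at ht
        have : true ∈ List.replicate (q+1) false := by rw [ht]; simp
        simp [List.mem_replicate] at this
      · rcases Nat.lt_or_ge p.length (q+1) with hql | hql
        · -- p.length ≤ q
          have hpw : p = w.take p.length := by
            rw [hw, List.take_append_of_le_length (le_refl _)]
            simp
          have h7 : w.take p.length = List.replicate p.length false := by
            rw [show w.take p.length = (w.take (q+1)).take p.length from by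
              rw [List.take_take]; congr 1; omega, ht,
              List.take_append_of_le_length (by simp; omega), List.take_replicate]
            congr 1
            omega
          exact true_mem_ends_true hp' (hpw.trans h7)
        · -- q + 1 ≤ p.length
          have hptake : p.take (q+1) = List.replicate q false ++ [true] := by
            rw [← ht, hw, List.take_append_of_le_length hql]
          apply not_lang_defect p.length [] (by simp) (Or.inl rfl) (m-j)
            (true :: p.drop (q+1)) (Or.inr ⟨_, rfl⟩)
          rw [List.nil_append, ← hqdef]
          have : p = List.replicate q false ++ (true :: p.drop (q+1)) := by
            conv_lhs => rw [← List.take_append_drop (q+1) p, hptake]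
            simp
          rw [← this]
          exact hp

end Machine2

section Aux

variable {w p v : List Bool} {m : ℕ}

lemma vec3_two (x y z : List Bool) (h : 2 < 3) : (![x,y,z]) ⟨2, h⟩ = z := rfl

lemma aux_lemma (hp : Lang p)
    (hpe : p = [] ∨ ∃ p', p = p' ++ [true]) (hv : v = [] ∨ ∃ v', v = true :: v')
    (hw : w = p ++ (List.replicate (2*m+1) false ++ v))
    (hz : w ≠ List.replicate w.length false) :
    ∀ (N k : ℕ) (a b : List (Fin 3)), Phi p m k →
      (a.map ![[true],[false,false],w]).flatten
        = w.drop k ++ (b.map ![[true],[false,false],w]).flatten →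
      (a.map ![[true],[false,false],w]).flatten.length ≤ N → False := by
  have hwl : w.length = p.length + (2*m+1) + v.length := wlen hw
  intro N
  induction N using Nat.strong_induction_on with
  | _ N ih =>
    intro k a b hφ heq hlen
    have hkub : k ≤ p.length + 2*m := by rcases hφ.2 with h | ⟨j, hj, rfl⟩ <;> omega
    have hdlen : (w.drop k).length = w.length - k := List.length_drop
    have hdne : w.drop k ≠ [] := by
      intro hcon
      rw [hcon] at hdlen
      simp at hdlen
      omega
    match a with
    | [] =>
      simp only [List.map_nil, List.flatten_nil] at heq
      exact hdne (List.append_eq_nil_iff.mp heq.symm).1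
    | i :: a' =>
      simp only [List.map_cons, List.flatten_cons] at heq hlen
      obtain ⟨s0, s', hds⟩ := List.exists_cons_of_ne_nil hdne
      fin_cases i
      · simp only [Fin.zero_eta, Fin.isValue, Matrix.cons_val_zero] at heq hlen
        rw [hds] at heq
        simp only [List.singleton_append, List.cons_append, List.cons.injEq] at heq
        obtain ⟨hs0, heq'⟩ := heq
        match s' with
        | [] =>
          exact cw1 hw hpe hv hφ (by rw [hds, ← hs0])
        | s1 :: s'' =>
          have hφ' : Phi p m (k+1) := step1 hw hφ (by rw [hds, ← hs0])
          have hdk1 : w.drop (k+1) = s1 :: s'' := by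
            rw [← List.tail_drop, hds]
            rfl
          refine ih (a'.map ![[true],[false,false],w]).flatten.length ?_ (k+1) a' b hφ'
            (by rw [hdk1]; exact heq') (le_refl _)
          simp only [List.length_append, List.length_singleton] at hlen
          omega
      · simp only [Fin.mk_one, Fin.isValue, Matrix.cons_val_one, Matrix.head_cons,
          Matrix.cons_val_zero] at heq hlen
        rw [hds] at heq
        simp only [List.cons_append, List.nil_append, List.cons.injEq] at heq
        obtain ⟨hs0, heq'⟩ := heq
        match s' with
        | [] =>
          simp only [List.nil_append] at heq'
          refine ih (b.map ![[true],[false,false],w]).flatten.length ?_ k b a' hφ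
            (by rw [hds, ← hs0]; simpa using heq'.symm) (le_refl _)
          have := congrArg List.length heq'
          simp only [List.length_append, List.length_cons] at hlen this
          omega
        | s1 :: s'' =>
          simp only [List.cons_append, List.cons.injEq] at heq'
          obtain ⟨hs1, heq''⟩ := heq'
          match s'' with
          | [] =>
            exact cw00 hw hpe hv hφ (by rw [hds, ← hs0, ← hs1])
          | s2 :: s3 =>
            have hφ' : Phi p m (k+2) := step00 hw hpe hv hφ (by rw [hds, ← hs0, ← hs1])
            have hdk2 : w.drop (k+2) = s2 :: s3 := by
              rw [show k+2 = (k+1)+1 from rfl, ← List.tail_drop, ← List.tail_drop, hds]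
              rfl
            refine ih (a'.map ![[true],[false,false],w]).flatten.length ?_ (k+2) a' b hφ'
              (by rw [hdk2]; exact heq'') (le_refl _)
            simp only [List.length_append, List.length_cons] at hlen
            omega
      · simp only [Fin.isValue] at heq hlen
        rw [vec3_two] at heq hlen
        have hpref : w.drop k = w.take (w.length - k) := by
          have h1 : (w.drop k ++ (b.map ![[true],[false,false],w]).flatten).take (w.length - k)
              = w.drop k := by
            rw [show w.length - k = (w.drop k).length from hdlen.symm]
            exact List.take_left
          rw [← heq, List.take_append_of_le_length (by omega)] at h1
          exact h1.symm
        have hφ' : Phi p m (w.length - k) := flip_phi hp hpe hv hw hz hφ hpref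
        have hweq : w = w.drop k ++ w.drop (w.length - k) := by
          conv_lhs => rw [← List.take_append_drop (w.length - k) w]
          rw [← hpref]
        have heq' : w.drop k ++ (w.drop (w.length - k)
            ++ (a'.map ![[true],[false,false],w]).flatten)
            = w.drop k ++ (b.map ![[true],[false,false],w]).flatten := by
          rw [← List.append_assoc, ← hweq]
          exact heq
        have heq2 := List.append_cancel_left heq'
        refine ih (b.map ![[true],[false,false],w]).flatten.length ?_ (w.length - k) b a' hφ'
          heq2.symm (le_refl _)
        have hlb := congrArg List.length heq2
        have hd2 : (List.drop (w.length - k) w).length = w.length - (w.length - k) :=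
          List.length_drop
        simp only [List.length_append] at hlen hlb
        omega

end Aux

section MainUD

variable {w p v : List Bool} {m : ℕ}

lemma phi_one (hw : w = p ++ (List.replicate (2*m+1) false ++ v))
    (hpe : p = [] ∨ ∃ p', p = p' ++ [true])
    (h1 : w.take 1 = [true]) : Phi p m 1 := by
  refine ⟨le_refl _, Or.inl ?_⟩
  rcases hpe with rfl | ⟨p', rfl⟩
  · exfalso
    rw [hw] at h1
    simp only [List.nil_append, List.replicate_succ, List.cons_append] at h1
    simp at h1
  · simp

lemma phi_two (hw : w = p ++ (List.replicate (2*m+1) false ++ v))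
    (hpe : p = [] ∨ ∃ p', p = p' ++ [true]) (hv : v = [] ∨ ∃ v', v = true :: v')
    (h2 : w.take 2 = [false, false]) : Phi p m 2 := by
  refine ⟨by omega, ?_⟩
  rcases hpe with rfl | ⟨p', rfl⟩
  · match m with
    | 0 =>
      exfalso
      rw [hw] at h2
      simp only [List.nil_append, List.replicate_succ, List.replicate_zero,
        List.cons_append, List.nil_append] at h2
      rw [List.take_succ_cons] at h2
      simp only [List.cons.injEq, true_and] at h2
      rcases hv with rfl | ⟨v', rfl⟩
      · simp at h2
      · simp at h2
    | Nat.succ m' =>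
      exact Or.inr ⟨1, by omega, by simp⟩
  · match p' with
    | [] =>
      exfalso
      rw [hw] at h2
      simp only [List.nil_append, List.cons_append] at h2
      rw [List.take_succ_cons] at h2
      simp at h2
    | q :: q' =>
      exact Or.inl (by simp)

lemma take_one_of_append {A B C : List Bool} (hC : 1 ≤ C.length)
    (heq : [true] ++ A = C ++ B) : C.take 1 = [true] := by
  have h1 := congrArg (List.take 1) heq
  rw [List.take_append_of_le_length (by simp), List.take_append_of_le_length hC] at h1
  simpa using h1.symm

lemma drop_one_of_append {A B C : List Bool} (hC : 1 ≤ C.length)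
    (heq : [true] ++ A = C ++ B) : A = C.drop 1 ++ B := by
  have h1 := congrArg (List.drop 1) heq
  rw [List.drop_append_of_le_length (by simp), List.drop_append_of_le_length hC] at h1
  simpa using h1

lemma take_two_of_append {A B C : List Bool} (hC : 2 ≤ C.length)
    (heq : [false, false] ++ A = C ++ B) : C.take 2 = [false, false] := by
  have h1 := congrArg (List.take 2) heq
  rw [List.take_append_of_le_length (by simp), List.take_append_of_le_length hC] at h1
  simpa using h1.symm

lemma drop_two_of_append {A B C : List Bool} (hC : 2 ≤ C.length)
    (heq : [false, false] ++ A = C ++ B) : A = C.drop 2 ++ B := by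
  have h1 := congrArg (List.drop 2) heq
  rw [List.drop_append_of_le_length (by simp), List.drop_append_of_le_length hC] at h1
  simpa using h1

lemma main_ud (hp : Lang p)
    (hpe : p = [] ∨ ∃ p', p = p' ++ [true]) (hv : v = [] ∨ ∃ v', v = true :: v')
    (hw : w = p ++ (List.replicate (2*m+1) false ++ v))
    (hz : w ≠ List.replicate w.length false) :
    IsUDCode ![[true],[false,false],w] := by
  have hwl : w.length = p.length + (2*m+1) + v.length := wlen hw
  have hw1 : 1 ≤ w.length := by omega
  have hwne : w ≠ [] := by
    intro hcon
    rw [hcon] at hwl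
    simp at hwl
    omega
  have key : ∀ (N : ℕ) (l₁ l₂ : List (Fin 3)),
      (l₁.map ![[true],[false,false],w]).flatten = (l₂.map ![[true],[false,false],w]).flatten →
      (l₁.map ![[true],[false,false],w]).flatten.length ≤ N → l₁ = l₂ := by
    intro N
    induction N using Nat.strong_induction_on with
    | _ N ih =>
      intro l₁ l₂ heq hlen
      match l₁, l₂ with
      | [], [] => rfl
      | [], j :: t₂ =>
        exfalso
        simp only [List.map_nil, List.flatten_nil, List.map_cons, List.flatten_cons] at heq
        fin_cases j
        · simp only [Fin.zero_eta, Fin.isValue, Matrix.cons_val_zero] at heq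
          simp at heq
        · simp only [Fin.mk_one, Fin.isValue, Matrix.cons_val_one, Matrix.head_cons] at heq
          simp at heq
        · simp only [Fin.isValue] at heq
          rw [vec3_two] at heq
          exact hwne (List.append_eq_nil_iff.mp heq.symm).1
      | i :: t₁, [] =>
        exfalso
        simp only [List.map_nil, List.flatten_nil, List.map_cons, List.flatten_cons] at heq
        fin_cases i
        · simp only [Fin.zero_eta, Fin.isValue, Matrix.cons_val_zero] at heq
          simp at heq
        · simp only [Fin.mk_one, Fin.isValue, Matrix.cons_val_one, Matrix.head_cons] at heq
          simp at heq
        · simp only [Fin.isValue] at heq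
          rw [vec3_two] at heq
          exact hwne (List.append_eq_nil_iff.mp heq).1
      | i :: t₁, j :: t₂ =>
        simp only [List.map_cons, List.flatten_cons] at heq hlen
        fin_cases i <;> fin_cases j <;>
          simp only [Fin.zero_eta, Fin.mk_one, Fin.isValue, Matrix.cons_val_zero,
            Matrix.cons_val_one, Matrix.head_cons] at heq hlen <;>
          try rw [vec3_two] at heq hlen
        -- (0,0)
        · simp only [List.singleton_append, List.cons.injEq, true_and] at heq
          have ht := ih (t₁.map ![[true],[false,false],w]).flatten.length
            (by simp only [List.length_append, List.length_singleton] at hlen; omega)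
            t₁ t₂ heq (le_refl _)
          rw [ht]
        -- (0,1)
        · exfalso; simp at heq
        -- (0,2)
        · exact (aux_lemma hp hpe hv hw hz
            (t₁.map ![[true],[false,false],w]).flatten.length 1 t₁ t₂
            (phi_one hw hpe (take_one_of_append hw1 heq))
            (drop_one_of_append hw1 heq) (le_refl _)).elim
        -- (1,0)
        · exfalso; simp at heq
        -- (1,1)
        · simp only [List.cons_append, List.nil_append, List.cons.injEq, true_and] at heq
          have ht := ih (t₁.map ![[true],[false,false],w]).flatten.length
            (by simp only [List.length_append, List.length_cons] at hlen; omega)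
            t₁ t₂ heq (le_refl _)
          rw [ht]
        -- (1,2)
        · exfalso
          rcases Nat.lt_or_ge w.length 2 with hlen2 | hlen2
          · apply hz
            have hp0 : p = [] := List.eq_nil_of_length_eq_zero (by omega)
            have hv0 : v = [] := List.eq_nil_of_length_eq_zero (by omega)
            have hm0 : m = 0 := by omega
            rw [hw, hp0, hv0, hm0]
            simp [hwl, hw, hp0, hv0, hm0]
          · exact aux_lemma hp hpe hv hw hz
              (t₁.map ![[true],[false,false],w]).flatten.length 2 t₁ t₂
              (phi_two hw hpe hv (take_two_of_append hlen2 heq))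
              (drop_two_of_append hlen2 heq) (le_refl _)
        -- (2,0)
        · exact (aux_lemma hp hpe hv hw hz
            (t₂.map ![[true],[false,false],w]).flatten.length 1 t₂ t₁
            (phi_one hw hpe (take_one_of_append hw1 heq.symm))
            (drop_one_of_append hw1 heq.symm) (le_refl _)).elim
        -- (2,1)
        · exfalso
          rcases Nat.lt_or_ge w.length 2 with hlen2 | hlen2
          · apply hz
            have hp0 : p = [] := List.eq_nil_of_length_eq_zero (by omega)
            have hv0 : v = [] := List.eq_nil_of_length_eq_zero (by omega)
            have hm0 : m = 0 := by omega
            rw [hw, hp0, hv0, hm0]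
            simp [hwl, hw, hp0, hv0, hm0]
          · exact aux_lemma hp hpe hv hw hz
              (t₂.map ![[true],[false,false],w]).flatten.length 2 t₂ t₁
              (phi_two hw hpe hv (take_two_of_append hlen2 heq.symm))
              (drop_two_of_append hlen2 heq.symm) (le_refl _)
        -- (2,2)
        · have heqA := List.append_cancel_left heq
          have ht := ih (t₁.map ![[true],[false,false],w]).flatten.length
            (by simp only [List.length_append] at hlen; omega)
            t₁ t₂ heqA (le_refl _)
          rw [ht]
  intro l₁ l₂ h
  exact key (l₁.map ![[true],[false,false],w]).flatten.length l₁ l₂ h (le_refl _)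

end MainUD

theorem not_ud_one_doublezero_iff (c : ℕ) (hc : 1 ≤ c) (w : List Bool) (hw : w.length = c) :
    ¬ IsUDCode ![[true], [false, false], w] ↔
      w = List.replicate c false ∨
        ∃ bs : List (List Bool), (∀ b ∈ bs, b = [true] ∨ b = [false, false]) ∧
          bs.flatten = w := by
  constructor
  · intro hnud
    by_contra hcon
    obtain ⟨hA, hB⟩ := not_or.mp hcon
    have hnL : ¬ Lang w := hB
    obtain ⟨p, m, v, hw', hp, hpe, hv⟩ := decomp w.length w (le_refl _) hnL
    have hzz : w ≠ List.replicate w.length false := by rw [hw]; exact hA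
    exact hnud (main_ud hp hpe hv hw' hzz)
  · rintro (rfl | ⟨bs, hbs, hjoin⟩) hud
    · -- w = replicate c false
      have hrep : ∀ n : ℕ, ((List.replicate n (1 : Fin 3)).map
          ![[true],[false,false],List.replicate c false]).flatten
          = List.replicate (2*n) false := by
        intro n
        induction n with
        | zero => simp
        | succ k ihk =>
          rw [List.replicate_succ, List.map_cons, List.flatten_cons, ihk]
          show [false, false] ++ List.replicate (2*k) false = _
          rw [show 2*(k+1) = 2 + 2*k from by ring, List.replicate_add]
          rfl
      have hj : (([2,2] : List (Fin 3)).map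
            ![[true],[false,false],List.replicate c false]).flatten
          = ((List.replicate c (1 : Fin 3)).map
            ![[true],[false,false],List.replicate c false]).flatten := by
        rw [hrep c]
        show List.replicate c false ++ (List.replicate c false ++ []) = _
        rw [List.append_nil, ← List.replicate_add]
        congr 1
        ring
      have h1 := hud [2,2] (List.replicate c (1 : Fin 3)) hj
      have hc2 : c = 2 := by
        have := congrArg List.length h1
        simp at this
        omega
      rw [hc2] at h1
      exact absurd h1 (by decide)
    · -- w in Lang
      have hjoin2 : ∀ bs2 : List (List Bool), (∀ b ∈ bs2, b = [true] ∨ b = [false,false]) →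
          ((bs2.map (fun b => if b = [true] then (0 : Fin 3) else 1)).map
            ![[true],[false,false],w]).flatten = bs2.flatten := by
        intro bs2
        induction bs2 with
        | nil => simp
        | cons b t iht =>
          intro hmem
          simp only [List.map_cons, List.flatten_cons]
          rw [iht (fun x hx => hmem x (List.mem_cons_of_mem _ hx))]
          congr 1
          rcases hmem b (by simp) with rfl | rfl
          · simp
          · simp
      have hj : (([2] : List (Fin 3)).map ![[true],[false,false],w]).flatten
          = ((bs.map (fun b => if b = [true] then (0 : Fin 3) else 1)).map
            ![[true],[false,false],w]).flatten := by
        rw [hjoin2 bs hbs]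
        show w ++ [] = _
        rw [List.append_nil]
        exact hjoin.symm
      have h1 := hud [2] (bs.map (fun b => if b = [true] then (0 : Fin 3) else 1)) hj
      match bs, h1 with
      | [], h1 => simp at h1
      | b :: t, h1 =>
        simp only [List.map_cons, List.cons.injEq] at h1
        rcases h1 with ⟨h2, _⟩
        by_cases hb : b = [true]
        · rw [if_pos hb] at h2
          exact absurd h2 (by decide)
        · rw [if_neg hb] at h2
          exact absurd h2 (by decide)
end

section
/- Over the binary alphabet {0,1}, for every c ≥ 1, the number of words w of length c such that (1, 00, w) is not a uniquely decodable code equals F_{c+1} + (c mod 2), where F_n is the n-th Fibonacci number with F_1 = F_2 = 1. -/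
namespace CountUDAux

abbrev Cw (w : List Bool) : Fin 3 → List Bool := ![[true], [false, false], w]

@[simp] lemma Cw0 (w : List Bool) : Cw w 0 = [true] := rfl
@[simp] lemma Cw1 (w : List Bool) : Cw w 1 = [false, false] := rfl
@[simp] lemma Cw2 (w : List Bool) : Cw w 2 = w := rfl

def J (w : List Bool) (l : List (Fin 3)) : List Bool := (l.map (Cw w)).flatten

@[simp] lemma J_nil (w : List Bool) : J w [] = [] := rfl
@[simp] lemma J_cons (w : List Bool) (x : Fin 3) (l : List (Fin 3)) :
    J w (x :: l) = Cw w x ++ J w l := by simp [J]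

/-- factorable into {1, 00} -/
inductive Fact : List Bool → Prop
  | nil : Fact []
  | one {t : List Bool} : Fact t → Fact (true :: t)
  | two {t : List Bool} : Fact t → Fact (false :: false :: t)

/-- blocks to word -/
def ofB : List ℕ → List Bool
  | [] => []
  | [k] => List.replicate k false
  | k :: k' :: ks => List.replicate k false ++ true :: ofB (k' :: ks)

lemma ofB_cons {K : List ℕ} (hK : K ≠ []) (k : ℕ) :
    ofB (k :: K) = List.replicate k false ++ true :: ofB K := by
  cases K with
  | nil => exact absurd rfl hK
  | cons a l => rfl

lemma true_mem_ofB_cons {K : List ℕ} (hK : K ≠ []) (k : ℕ) : true ∈ ofB (k :: K) := by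
  rw [ofB_cons hK]
  simp

@[simp] lemma true_not_mem_replicate (n : ℕ) : true ∉ List.replicate n false := by
  simp [List.mem_replicate]

-- head analysis lemmas
lemma rep_true_eq_true_cons {j : ℕ} {z y : List Bool}
    (h : List.replicate j false ++ true :: z = true :: y) : j = 0 ∧ z = y := by
  cases j with
  | zero => simpa using h
  | succ j' => simp [List.replicate_succ] at h

lemma rep_true_eq_false_cons {j : ℕ} {z y : List Bool}
    (h : List.replicate j false ++ true :: z = false :: y) :
    ∃ j', j = j' + 1 ∧ y = List.replicate j' false ++ true :: z := by
  cases j with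
  | zero => simp at h
  | succ j' =>
    refine ⟨j', rfl, ?_⟩
    rw [List.replicate_succ] at h
    simpa using h.symm

/-- first-one lemma -/
lemma first_one {p q : ℕ} {A B : List Bool}
    (h : List.replicate p false ++ true :: A = List.replicate q false ++ true :: B) :
    p = q ∧ A = B := by
  induction p generalizing q with
  | zero =>
    cases q with
    | zero => simpa using h
    | succ q' => simp [List.replicate_succ] at h
  | succ p' ih =>
    cases q with
    | zero => simp [List.replicate_succ] at h
    | succ q' =>
      rw [List.replicate_succ, List.replicate_succ] at h
      obtain ⟨h1, h2⟩ := ih (by simpa using h)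
      exact ⟨by omega, h2⟩

lemma rep_le_of_eq_append {a b : ℕ} {v z : List Bool}
    (h : List.replicate a false ++ v = List.replicate b false ++ true :: z) : a ≤ b := by
  induction a generalizing b with
  | zero => omega
  | succ a' ih =>
    cases b with
    | zero =>
      rw [List.replicate_succ] at h
      simp at h
    | succ b' =>
      rw [List.replicate_succ, List.replicate_succ] at h
      have := ih (by simpa using h)
      omega

@[simp] lemma J_append (w : List Bool) (l l' : List (Fin 3)) :
    J w (l ++ l') = J w l ++ J w l' := by simp [J]
lemma rep_append_cancel {a b : ℕ} {v v' : List Bool} (hab : a ≤ b)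
    (h : List.replicate a false ++ v = (List.replicate b false : List Bool) ++ v') :
    v = List.replicate (b - a) false ++ v' := by
  have hb : (List.replicate b false : List Bool)
      = List.replicate a false ++ List.replicate (b - a) false := by
    rw [← List.replicate_add]; congr 1; omega
  rw [hb, List.append_assoc] at h
  exact (List.append_cancel_left h)

/-- Prefix-matching of block words. -/
lemma PRE : ∀ (A₀ : List ℕ) (a : ℕ) (v : List Bool) (B : List ℕ), B ≠ [] →
    ofB (A₀ ++ [a]) ++ v = ofB B →
    ∃ b D, B = A₀ ++ b :: D ∧ a ≤ b ∧ v = ofB ((b - a) :: D) := by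
  intro A₀
  induction A₀ with
  | nil =>
    intro a v B hB h
    cases B with
    | nil => exact absurd rfl hB
    | cons b D =>
      cases D with
      | nil =>
        simp only [List.nil_append, ofB] at h
        have hl : a ≤ b := by
          have := congrArg List.length h
          simp at this; omega
        refine ⟨b, [], rfl, hl, ?_⟩
        have h' : List.replicate a false ++ v = (List.replicate b false : List Bool) ++ [] := by
          simpa using h
        have := rep_append_cancel hl h'
        simpa [ofB] using this
      | cons d D₂ =>
        rw [ofB_cons (by simp) b] at h
        simp only [List.nil_append, ofB] at h
        have hl : a ≤ b := rep_le_of_eq_append h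
        refine ⟨b, d :: D₂, rfl, hl, ?_⟩
        have := rep_append_cancel hl h
        rw [ofB_cons (by simp)]
        exact this
  | cons a₀ A₀' ih =>
    intro a v B hB h
    cases B with
    | nil => exact absurd rfl hB
    | cons b D =>
      have hsh : ofB ((a₀ :: A₀') ++ [a]) = List.replicate a₀ false ++ true :: ofB (A₀' ++ [a]) := by
        rw [List.cons_append, ofB_cons (by simp)]
      cases D with
      | nil =>
        rw [hsh] at h
        simp only [ofB] at h
        have : true ∈ (List.replicate b false : List Bool) := by
          rw [← h]; simp
        simp [List.mem_replicate] at this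
      | cons d D₂ =>
        rw [hsh, ofB_cons (by simp) b] at h
        rw [List.append_assoc, List.cons_append] at h
        obtain ⟨hab, htail⟩ := first_one h
        obtain ⟨b', D, hBD, hle, hv⟩ := ih a v (d :: D₂) (by simp) htail
        exact ⟨b', D, by rw [hBD, hab, List.cons_append], hle, hv⟩

/-- Periodicity lemma: if M is a prefix of S ++ M with S nonempty, every element of M is in S -/
lemma PP : ∀ (n : ℕ) (M S : List ℕ), M.length ≤ n → S ≠ [] → M <+: S ++ M →
    ∀ x ∈ M, x ∈ S := by
  intro n
  induction n with
  | zero =>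
    intro M S hM hS hpre x hx
    have : M = [] := List.eq_nil_of_length_eq_zero (by omega)
    subst this
    simp at hx
  | succ n ih =>
    intro M S hM hS hpre x hx
    obtain ⟨t, ht⟩ := hpre
    by_cases hle : M.length ≤ S.length
    · have hM' : M = S.take M.length := by
        have h1 : M = (M ++ t).take M.length := (List.take_left' rfl).symm
        rw [ht] at h1
        rw [List.take_append_of_le_length hle] at h1
        exact h1
      rw [hM'] at hx
      exact List.mem_of_mem_take hx
    · push_neg at hle
      have hS' : S = M.take S.length := by
        have h1 : S = (S ++ M).take S.length := (List.take_left' rfl).symm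
        rw [← ht] at h1
        rw [List.take_append_of_le_length (le_of_lt hle)] at h1
        exact h1
      set M'' := M.drop S.length with hM''
      have hMsplit : M = S ++ M'' := by
        rw [hS', hM'']; exact (List.take_append_drop _ _).symm
      have hpre' : M'' <+: S ++ M'' := by
        refine ⟨t, ?_⟩
        have : (S ++ M'') ++ t = S ++ (S ++ M'') := by rw [← hMsplit]; exact ht
        rw [List.append_assoc] at this
        exact (List.append_cancel_left this)
      have hlen : M''.length ≤ n := by
        have l1 : M''.length = M.length - S.length := by simp [hM'']
        have : 1 ≤ S.length := List.length_pos_iff.mpr hS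
        omega
      rw [hMsplit] at hx
      rcases List.mem_append.mp hx with h | h
      · exact h
      · exact ih M'' S hlen hS hpre' x h

/-- Core lemma, case A : leading block odd. No dangling suffix of the shown form can be
completed. -/
lemma auxA (k₀ : ℕ) (K' : List ℕ) (hk : k₀ % 2 = 1) (hK' : K' ≠ []) :
    ∀ (l₂ : List (Fin 3)) (j : ℕ) (l₁ : List (Fin 3)),
      j % 2 = 1 → j + 2 ≤ k₀ →
      ofB (j :: K') ++ J (ofB (k₀ :: K')) l₁ = J (ofB (k₀ :: K')) l₂ → False := by
  set w : List Bool := ofB (k₀ :: K') with hw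
  intro l₂
  induction l₂ with
  | nil =>
    intro j l₁ hj hjk heq
    rw [J_nil, List.append_eq_nil_iff] at heq
    have : true ∈ ofB (j :: K') := true_mem_ofB_cons hK' j
    rw [heq.1] at this
    simp at this
  | cons x t₂ ih =>
    intro j l₁ hj hjk heq
    obtain ⟨j', rfl⟩ : ∃ j', j = j' + 1 := ⟨j - 1, by omega⟩
    have hu : ofB ((j' + 1) :: K') = false :: (List.replicate j' false ++ true :: ofB K') := by
      rw [ofB_cons hK', List.replicate_succ, List.cons_append]
    rw [J_cons] at heq
    rcases List.append_eq_append_iff.mp heq with ⟨v, hv1, hv2⟩ | ⟨u', hu1, hu2⟩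
    · -- Cw w x = u ++ v
      rcases show x = 0 ∨ x = 1 ∨ x = 2 by omega with rfl | rfl | rfl
      · rw [hu] at hv1; simp [List.cons_append] at hv1
      · have htm : true ∈ ofB ((j' + 1) :: K') := true_mem_ofB_cons hK' _
        have : true ∈ Cw w 1 := hv1 ▸ List.mem_append_left _ htm
        simp at this
      · -- w = u ++ v : prefix jump, contradiction via PRE
        have hA : (j' + 1) :: K'.dropLast ++ [K'.getLast hK'] = (j' + 1) :: K' := by
          rw [List.cons_append, List.dropLast_append_getLast hK']
        have hpre : ofB (((j' + 1) :: K'.dropLast) ++ [K'.getLast hK']) ++ v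
            = ofB (k₀ :: K') := by
          rw [List.cons_append] at hA ⊢
          rw [hA]
          exact hv1.symm
        obtain ⟨b, D, hBD, -, -⟩ := PRE _ _ _ _ (by simp) hpre
        rw [List.cons_append] at hBD
        have : k₀ = j' + 1 := (List.cons.injEq _ _ _ _ ▸ hBD).1
        omega
    · -- u = Cw w x ++ u'
      rcases show x = 0 ∨ x = 1 ∨ x = 2 by omega with rfl | rfl | rfl
      · rw [hu] at hu1; simp [List.cons_append] at hu1
      · -- u = [false, false] ++ u'
        rw [hu] at hu1
        simp only [Cw, List.cons_append, List.nil_append] at hu1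
        obtain ⟨h1⟩ := List.cons.injEq _ _ _ _ ▸ hu1
        -- replicate j' ++ true :: ofB K' = false :: u'
        rename_i h2
        cases j'' : j' with
        | zero => rw [j''] at h2; simp at h2
        | succ j₂ =>
          rw [j'', List.replicate_succ, List.cons_append] at h2
          have h3 : u' = List.replicate j₂ false ++ true :: ofB K' := by
            exact (List.cons.injEq _ _ _ _ ▸ h2).2.symm
          have h4 : u' = ofB (j₂ :: K') := by rw [ofB_cons hK']; exact h3
          exact ih j₂ l₁ (by omega) (by omega) (by rw [← h4, ← hu2])
      · -- u = w ++ u'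
        have hKne : k₀ :: K' ≠ [] := by simp
        have hA : (k₀ :: K').dropLast ++ [(k₀ :: K').getLast hKne] = k₀ :: K' :=
          List.dropLast_append_getLast hKne
        have hpre : ofB ((k₀ :: K').dropLast ++ [(k₀ :: K').getLast hKne]) ++ u'
            = ofB ((j' + 1) :: K') := by rw [hA]; exact hu1.symm
        obtain ⟨b, D, hBD, -, -⟩ := PRE _ _ _ _ (by simp) hpre
        rw [List.dropLast_cons_of_ne_nil hK', List.cons_append] at hBD
        have : j' + 1 = k₀ := (List.cons.injEq _ _ _ _ ▸ hBD).1
        omega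

lemma last_concat_inj {X K₀ : List ℕ} {e e' : ℕ} (h : X ++ [e] = K₀ ++ [e']) : e = e' :=
  (List.concat_inj.mp (by simpa [List.concat_eq_append] using h)).2

/-- Core lemma, case C : head block even,  last block even, some block odd. -/
lemma auxC (k₀ : ℕ) (K₁ : List ℕ) (hK₁ : K₁ ≠ []) (hk₀ : k₀ % 2 = 0)
    (hlast : ∃ K₀ e, k₀ :: K₁ = K₀ ++ [e] ∧ e % 2 = 0)
    (hodd : ∃ x ∈ k₀ :: K₁, x % 2 = 1) :
    ∀ (l₂ : List (Fin 3)) (P : List ℕ) (q j : ℕ) (D : List ℕ) (l₁ : List (Fin 3)),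
      k₀ :: K₁ = P ++ q :: D → D ≠ [] → (∀ p ∈ P, p % 2 = 0) → j % 2 = q % 2 →
      (P = [] → j < q) →
      ofB (j :: D) ++ J (ofB (k₀ :: K₁)) l₁ = J (ofB (k₀ :: K₁)) l₂ → False := by
  set w : List Bool := ofB (k₀ :: K₁) with hw
  -- all-even contradiction helper
  have allEven : ∀ (P : List ℕ) (q : ℕ) (D : List ℕ), k₀ :: K₁ = P ++ q :: D →
      (∀ p ∈ P, p % 2 = 0) → q % 2 = 0 → (∀ x ∈ D, x % 2 = 0) → False := by
    intro P q D hKs hP hq hD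
    obtain ⟨x, hx, hxo⟩ := hodd
    rw [hKs] at hx
    rcases List.mem_append.mp hx with h | h
    · have := hP x h; omega
    · rcases List.mem_cons.mp h with rfl | h
      · omega
      · have := hD x h; omega
  intro l₂
  induction l₂ with
  | nil =>
    intro P q j D l₁ hKs hD hP hpar hPnil heq
    rw [J_nil, List.append_eq_nil_iff] at heq
    have : true ∈ ofB (j :: D) := true_mem_ofB_cons hD j
    rw [heq.1] at this
    simp at this
  | cons x t₂ ih =>
    intro P q j D l₁ hKs hD hP hpar hPnil heq
    have hu : ofB (j :: D) = List.replicate j false ++ true :: ofB D := ofB_cons hD j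
    rw [J_cons] at heq
    rcases List.append_eq_append_iff.mp heq with ⟨v, hv1, hv2⟩ | ⟨u', hu1, hu2⟩
    · -- Cw w x = ofB (j :: D) ++ v
      rcases show x = 0 ∨ x = 1 ∨ x = 2 by omega with rfl | rfl | rfl
      · -- [true] = u ++ v
        rw [hu] at hv1
        cases j with
        | succ j' => simp [List.replicate_succ, List.cons_append] at hv1
        | zero =>
          simp only [List.replicate, List.nil_append, List.cons_append] at hv1
          have hnil : ofB D ++ v = [] := (List.cons.injEq _ _ _ _ ▸ hv1).2.symm
          have hofB : ofB D = [] := (List.append_eq_nil_iff.mp hnil).1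
          obtain ⟨d, D₂, rfl⟩ : ∃ d D₂, D = d :: D₂ := by
            cases D with
            | nil => exact absurd rfl hD
            | cons a l => exact ⟨a, l, rfl⟩
          cases D₂ with
          | cons e D₃ =>
            have := true_mem_ofB_cons (K := e :: D₃) (by simp) d
            rw [hofB] at this; simp at this
          | nil =>
            have hd0 : d = 0 := by
              have := congrArg List.length hofB
              simp [ofB] at this
              exact this
            exact allEven P q [d] hKs hP (by omega) (by simp [hd0])
      · have htm : true ∈ ofB (j :: D) := true_mem_ofB_cons hD j
        have : true ∈ Cw w 1 := hv1 ▸ List.mem_append_left _ htm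
        simp at this
      · -- w = u ++ v : prefix jump
        have hA : (j :: D.dropLast) ++ [D.getLast hD] = j :: D := by
          rw [List.cons_append, List.dropLast_append_getLast hD]
        have hpre : ofB ((j :: D.dropLast) ++ [D.getLast hD]) ++ v = ofB (k₀ :: K₁) := by
          rw [hA]; exact hv1.symm
        obtain ⟨b, D', hBD, hble, hv⟩ := PRE _ _ _ _ (by simp) hpre
        rw [List.cons_append] at hBD
        have hkj : k₀ = j := (List.cons.injEq _ _ _ _ ▸ hBD).1
        cases P with
        | nil =>
          have : k₀ = q := (List.cons.injEq _ _ _ _ ▸ hKs).1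
          have := hPnil rfl
          omega
        | cons p₀ P' =>
          have hp₀ : k₀ = p₀ := by
            rw [List.cons_append] at hKs
            exact (List.cons.injEq _ _ _ _ ▸ hKs).1
          have hqeven : q % 2 = 0 := by
            have := hP p₀ (by simp)
            omega
          obtain ⟨M, e, rfl⟩ : ∃ M e, D = M ++ [e] := by
            rcases List.eq_nil_or_concat D with h | ⟨L, b', h⟩
            · exact absurd h hD
            · exact ⟨L, b', by simpa [List.concat_eq_append] using h⟩
          have heeven : e % 2 = 0 := by
            obtain ⟨K₀, e', hKc, he'⟩ := hlast
            have h5 : (p₀ :: (P' ++ q :: M)) ++ [e] = K₀ ++ [e'] := by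
              rw [← hKc, hKs]
              simp [List.cons_append, List.append_assoc]
            have := last_concat_inj h5
            omega
          -- two representations of K₁
          have hK₁a : K₁ = P' ++ q :: (M ++ [e]) := by
            rw [List.cons_append] at hKs
            exact (List.cons.injEq _ _ _ _ ▸ hKs).2
          have hML : (M ++ [e]).dropLast = M := by simp
          have hK₁b : K₁ = M ++ b :: D' := by
            have := (List.cons.injEq _ _ _ _ ▸ hBD).2
            rw [hML] at this
            exact this
          -- periodicity
          have hpre1 : M <+: K₁ := ⟨b :: D', hK₁b.symm⟩
          have hpre2 : (P' ++ [q]) ++ M <+: K₁ := by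
            refine ⟨[e], ?_⟩
            rw [hK₁a]
            simp [List.append_assoc]
          have hMS : M <+: (P' ++ [q]) ++ M :=
            List.prefix_of_prefix_length_le hpre1 hpre2 (by simp; omega)
          have hMeven : ∀ x ∈ M, x % 2 = 0 := by
            intro x hx
            have := PP M.length M (P' ++ [q]) le_rfl (by simp) hMS x hx
            rcases List.mem_append.mp this with h | h
            · exact hP x (by simp [h])
            · simp at h; omega
          exact allEven (p₀ :: P') q (M ++ [e]) hKs hP hqeven (by
            intro y hy
            rcases List.mem_append.mp hy with h | h
            · exact hMeven y h
            · simp at h; omega)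
    · -- ofB (j :: D) = Cw w x ++ u'
      rcases show x = 0 ∨ x = 1 ∨ x = 2 by omega with rfl | rfl | rfl
      · -- u = true :: u'
        rw [hu] at hu1
        simp only [Cw, List.cons_append, List.nil_append] at hu1
        obtain ⟨hj0, hu'⟩ := rep_true_eq_true_cons hu1
        subst hj0
        obtain ⟨d, D₂, rfl⟩ : ∃ d D₂, D = d :: D₂ := by
          cases D with
          | nil => exact absurd rfl hD
          | cons a l => exact ⟨a, l, rfl⟩
        cases D₂ with
        | nil =>
          have hde : d % 2 = 0 := by
            obtain ⟨K₀, e', hKc, he'⟩ := hlast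
            have : (P ++ [q]) ++ [d] = K₀ ++ [e'] := by
              rw [← hKc, hKs]; simp
            have := last_concat_inj this
            omega
          exact allEven P q [d] hKs hP (by omega) (by simp [hde])
        | cons d₂ D₃ =>
          refine ih (P ++ [q]) d d (d₂ :: D₃) l₁ ?_ (by simp) ?_ rfl (by simp) ?_
          · rw [hKs]; simp
          · intro p hp
            rcases List.mem_append.mp hp with h | h
            · exact hP p h
            · simp at h; omega
          · have hu'' : u' = ofB (d :: d₂ :: D₃) := by simpa using hu'.symm
            rw [hu2, hu'']
      · -- u = false :: false :: u'
        rw [hu] at hu1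
        simp only [Cw, List.cons_append, List.nil_append] at hu1
        cases j with
        | zero => simp [List.replicate] at hu1
        | succ j' =>
          cases j' with
          | zero => simp [List.replicate_succ, List.replicate] at hu1
          | succ j₂ =>
            rw [List.replicate_succ, List.replicate_succ, List.cons_append,
              List.cons_append] at hu1
            have h3 : u' = List.replicate j₂ false ++ true :: ofB D := by
              have := (List.cons.injEq _ _ _ _ ▸ hu1).2
              exact ((List.cons.injEq _ _ _ _ ▸ this).2).symm
            refine ih P q j₂ D l₁ hKs hD hP (by omega) (fun h => by have := hPnil h; omega) ?_
            rw [ofB_cons hD, ← h3, ← hu2]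
      · -- u = w ++ u'
        have hKne : k₀ :: K₁ ≠ [] := by simp
        have hA : (k₀ :: K₁).dropLast ++ [(k₀ :: K₁).getLast hKne] = k₀ :: K₁ :=
          List.dropLast_append_getLast hKne
        have hpre : ofB ((k₀ :: K₁).dropLast ++ [(k₀ :: K₁).getLast hKne]) ++ u'
            = ofB (j :: D) := by rw [hA]; exact hu1.symm
        obtain ⟨b, D', hBD, -, -⟩ := PRE _ _ _ _ (by simp) hpre
        have hlen : (j :: D).length = ((k₀ :: K₁).dropLast ++ b :: D').length := by
          rw [hBD]
        rw [List.dropLast_cons_of_ne_nil hK₁] at hBD hlen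
        have hKlen := congrArg List.length hKs
        simp at hKlen hlen
        have hK₁pos : 1 ≤ K₁.length := List.length_pos_iff.mpr hK₁
        have hPnil' : P = [] := by
          have : P.length = 0 := by omega
          exact List.eq_nil_of_length_eq_zero this
        subst hPnil'
        have hqk : k₀ = q := (List.cons.injEq _ _ _ _ ▸ hKs).1
        rw [List.cons_append] at hBD
        have hjk : j = k₀ := (List.cons.injEq _ _ _ _ ▸ hBD).1
        have := hPnil rfl
        omega

lemma Cw_ne_nil {w : List Bool} (hw : w ≠ []) (x : Fin 3) : Cw w x ≠ [] := by
  rcases show x = 0 ∨ x = 1 ∨ x = 2 by omega with rfl | rfl | rfl <;> simp [hw]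

lemma J_eq_nil {w : List Bool} (hw : w ≠ []) {l : List (Fin 3)} (h : J w l = []) : l = [] := by
  cases l with
  | nil => rfl
  | cons x t =>
    rw [J_cons, List.append_eq_nil_iff] at h
    exact absurd h.1 (Cw_ne_nil hw x)

lemma ofB_cons_ne_nil {K : List ℕ} (hK : K ≠ []) (k : ℕ) : ofB (k :: K) ≠ [] := by
  rw [ofB_cons hK]
  simp

/-- Case A main : leading block odd. -/
lemma udA (k₀ : ℕ) (K' : List ℕ) (hk : k₀ % 2 = 1) (hK' : K' ≠ []) :
    ∀ l₁ l₂, J (ofB (k₀ :: K')) l₁ = J (ofB (k₀ :: K')) l₂ → l₁ = l₂ := by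
  set w : List Bool := ofB (k₀ :: K') with hw
  have hwne : w ≠ [] := ofB_cons_ne_nil hK' k₀
  intro l₁
  induction l₁ with
  | nil => intro l₂ h; exact (J_eq_nil hwne h.symm).symm
  | cons x₁ t₁ ih =>
    intro l₂ h
    cases l₂ with
    | nil =>
      exfalso
      exact (Cw_ne_nil hwne x₁) (List.append_eq_nil_iff.mp (by simpa using h)).1
    | cons x₂ t₂ =>
      rw [J_cons, J_cons] at h
      by_cases hx : x₁ = x₂
      · subst hx
        rw [List.append_cancel_left_eq] at h
        rw [ih t₂ h]
      · exfalso
        -- decompose w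
        obtain ⟨k', rfl⟩ : ∃ k', k₀ = k' + 1 := ⟨k₀ - 1, by omega⟩
        have hw1 : w = false :: (List.replicate k' false ++ true :: ofB K') := by
          rw [hw, ofB_cons hK', List.replicate_succ, List.cons_append]
        have key : ∀ (y₁ y₂ : Fin 3) (s₁ s₂ : List (Fin 3)), y₁ ≠ y₂ →
            Cw w y₁ ++ J w s₁ = Cw w y₂ ++ J w s₂ → y₁.val < y₂.val → False := by
          intro y₁ y₂ s₁ s₂ hne heq hlt
          rcases show (y₁ = 0 ∧ y₂ = 1) ∨ (y₁ = 0 ∧ y₂ = 2) ∨ (y₁ = 1 ∧ y₂ = 2) by omega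
            with ⟨rfl, rfl⟩ | ⟨rfl, rfl⟩ | ⟨rfl, rfl⟩
          · rw [show Cw w 0 = [true] from rfl, show Cw w 1 = [false, false] from rfl] at heq
            simp [List.cons_append] at heq
          · have h3 : [true] ++ J w s₁
                = (false :: (List.replicate k' false ++ true :: ofB K')) ++ J w s₂ := by
              rw [← hw1]; exact heq
            simp [List.cons_append] at h3
          · -- [false,false] vs w
            have hk' : k' % 2 = 0 := by omega
            rcases show k' = 0 ∨ ∃ k'', k' = k'' + 2 by
                rcases Nat.eq_zero_or_pos k' with h0 | h0
                · exact Or.inl h0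
                · exact Or.inr ⟨k' - 2, by omega⟩
              with rfl | ⟨k'', rfl⟩
            · -- w = false :: true :: …
              have h3 : [false, false] ++ J w s₁
                  = (false :: (List.replicate 0 false ++ true :: ofB K')) ++ J w s₂ := by
                rw [← hw1]; exact heq
              simp [List.cons_append, List.replicate] at h3
            · -- w = false :: false :: (ofB ((k''+1) :: K'))
              have hw2 : w = false :: false :: ofB ((k'' + 1) :: K') := by
                rw [hw1, List.replicate_succ, List.cons_append, ofB_cons hK']
              have h3 : [false, false] ++ J w s₁
                  = (false :: false :: ofB ((k'' + 1) :: K')) ++ J w s₂ := by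
                rw [← hw2]; exact heq
              simp only [List.cons_append, List.nil_append, List.cons.injEq, true_and] at h3
              exact auxA (k'' + 3) K' hk hK' s₁ (k'' + 1) s₂ (by omega) (by omega) h3.symm
        rcases Ne.lt_or_gt hx with hlt | hlt
        · exact key x₁ x₂ t₁ t₂ hx h hlt
        · exact key x₂ x₁ t₂ t₁ (Ne.symm hx) h.symm hlt

/-- Case C main : head block even, last block even, some block odd. -/
lemma udC (k₀ : ℕ) (K₁ : List ℕ) (hK₁ : K₁ ≠ []) (hk₀ : k₀ % 2 = 0)
    (hlast : ∃ K₀ e, k₀ :: K₁ = K₀ ++ [e] ∧ e % 2 = 0)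
    (hodd : ∃ x ∈ k₀ :: K₁, x % 2 = 1) :
    ∀ l₁ l₂, J (ofB (k₀ :: K₁)) l₁ = J (ofB (k₀ :: K₁)) l₂ → l₁ = l₂ := by
  set w : List Bool := ofB (k₀ :: K₁) with hw
  have hwne : w ≠ [] := ofB_cons_ne_nil hK₁ k₀
  intro l₁
  induction l₁ with
  | nil => intro l₂ h; exact (J_eq_nil hwne h.symm).symm
  | cons x₁ t₁ ih =>
    intro l₂ h
    cases l₂ with
    | nil =>
      exfalso
      exact (Cw_ne_nil hwne x₁) (List.append_eq_nil_iff.mp (by simpa using h)).1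
    | cons x₂ t₂ =>
      rw [J_cons, J_cons] at h
      by_cases hx : x₁ = x₂
      · subst hx
        rw [List.append_cancel_left_eq] at h
        rw [ih t₂ h]
      · exfalso
        have hwsh : w = List.replicate k₀ false ++ true :: ofB K₁ := ofB_cons hK₁ k₀
        have key : ∀ (y₁ y₂ : Fin 3) (s₁ s₂ : List (Fin 3)), y₁ ≠ y₂ →
            Cw w y₁ ++ J w s₁ = Cw w y₂ ++ J w s₂ → y₁.val < y₂.val → False := by
          intro y₁ y₂ s₁ s₂ hne heq hlt
          rcases show (y₁ = 0 ∧ y₂ = 1) ∨ (y₁ = 0 ∧ y₂ = 2) ∨ (y₁ = 1 ∧ y₂ = 2) by omega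
            with ⟨rfl, rfl⟩ | ⟨rfl, rfl⟩ | ⟨rfl, rfl⟩
          · rw [show Cw w 0 = [true] from rfl, show Cw w 1 = [false, false] from rfl] at heq
            simp [List.cons_append] at heq
          · -- [true] vs w : needs k₀ = 0
            cases hk : k₀ with
            | succ k' =>
              have hw1 : w = false :: (List.replicate k' false ++ true :: ofB K₁) := by
                rw [hwsh, hk, List.replicate_succ, List.cons_append]
              have h3 : [true] ++ J w s₁
                  = (false :: (List.replicate k' false ++ true :: ofB K₁)) ++ J w s₂ := by
                rw [← hw1]; exact heq
              simp [List.cons_append] at h3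
            | zero =>
              have hw1 : w = true :: ofB K₁ := by rw [hwsh, hk]; simp
              have h3 : [true] ++ J w s₁ = (true :: ofB K₁) ++ J w s₂ := by
                rw [← hw1]; exact heq
              simp only [List.cons_append, List.nil_append, List.cons.injEq, true_and] at h3
              obtain ⟨q₁, D₁, rfl⟩ : ∃ q₁ D₁, K₁ = q₁ :: D₁ := by
                cases K₁ with
                | nil => exact absurd rfl hK₁
                | cons a l => exact ⟨a, l, rfl⟩
              cases D₁ with
              | nil =>
                -- K = [0, q₁] : all blocks even, contradiction
                obtain ⟨x, hxm, hxo⟩ := hodd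
                obtain ⟨K₀, e, hKc, he⟩ := hlast
                have hq₁ : q₁ = e := by
                  cases K₀ with
                  | nil => simp at hKc
                  | cons a K₀' =>
                    cases K₀' with
                    | nil => simp at hKc; exact hKc.2
                    | cons b K₀'' =>
                      have := congrArg List.length hKc
                      simp at this
                simp at hxm
                rcases hxm with rfl | rfl <;> omega
              | cons d₂ D₂ =>
                refine auxC k₀ (q₁ :: d₂ :: D₂) (by simp) hk₀ hlast hodd s₁
                  [k₀] q₁ q₁ (d₂ :: D₂) s₂ (by simp) (by simp) ?_ rfl (by simp) ?_
                · intro p hp; simp at hp; omega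
                · rw [ofB_cons (by simp)] at h3 ⊢
                  exact h3.symm
          · -- [false,false] vs w
            rcases show k₀ = 0 ∨ k₀ = 1 ∨ ∃ k', k₀ = k' + 2 from by
                by_cases h0 : k₀ = 0
                · exact Or.inl h0
                · by_cases h1 : k₀ = 1
                  · exact Or.inr (Or.inl h1)
                  · exact Or.inr (Or.inr ⟨k₀ - 2, by omega⟩)
              with hk | hk | ⟨k', hk⟩
            · have hw1 : w = true :: ofB K₁ := by rw [hwsh, hk]; simp
              have h3 : [false, false] ++ J w s₁ = (true :: ofB K₁) ++ J w s₂ := by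
                rw [← hw1]; exact heq
              simp [List.cons_append] at h3
            · omega
            · have hw2 : w = false :: false :: ofB (k' :: K₁) := by
                rw [hwsh, hk, List.replicate_succ, List.replicate_succ, List.cons_append,
                  List.cons_append, ofB_cons hK₁]
              have h3 : [false, false] ++ J w s₁
                  = (false :: false :: ofB (k' :: K₁)) ++ J w s₂ := by
                rw [← hw2]; exact heq
              simp only [List.cons_append, List.nil_append, List.cons.injEq, true_and] at h3
              exact auxC k₀ K₁ hK₁ hk₀ hlast hodd s₁ [] k₀ k' K₁ s₂ rfl hK₁
                (by simp) (by omega) (fun _ => by omega) h3.symm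
        rcases Ne.lt_or_gt hx with hlt | hlt
        · exact key x₁ x₂ t₁ t₂ hx h hlt
        · exact key x₂ x₁ t₂ t₁ (Ne.symm hx) h.symm hlt

lemma ofB_succ_head (k : ℕ) (Ks : List ℕ) :
    ofB ((k + 1) :: Ks) = false :: ofB (k :: Ks) := by
  cases Ks with
  | nil => simp [ofB, List.replicate_succ]
  | cons a l => simp [ofB, List.replicate_succ]

lemma exists_blocks (w : List Bool) : ∃ K, K ≠ [] ∧ w = ofB K := by
  induction w with
  | nil => exact ⟨[0], by simp, by simp [ofB]⟩
  | cons b w' ih =>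
    obtain ⟨K, hK, rfl⟩ := ih
    cases b with
    | true => exact ⟨0 :: K, by simp, by rw [ofB_cons hK]; simp⟩
    | false =>
      obtain ⟨k, Ks, rfl⟩ : ∃ k Ks, K = k :: Ks := by
        cases K with
        | nil => exact absurd rfl hK
        | cons a l => exact ⟨a, l, rfl⟩
      exact ⟨(k + 1) :: Ks, by simp, by rw [ofB_succ_head]⟩

lemma ofB_concat {K : List ℕ} (hK : K ≠ []) (k : ℕ) :
    ofB (K ++ [k]) = ofB K ++ true :: List.replicate k false := by
  induction K with
  | nil => exact absurd rfl hK
  | cons k' Ks ih =>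
    cases Ks with
    | nil => simp [ofB]
    | cons a l =>
      rw [List.cons_append, ofB_cons (by simp), ofB_cons (by simp), ih (by simp)]
      simp

lemma ofB_reverse {K : List ℕ} (hK : K ≠ []) : (ofB K).reverse = ofB K.reverse := by
  induction K with
  | nil => exact absurd rfl hK
  | cons k Ks ih =>
    cases Ks with
    | nil => simp [ofB]
    | cons a l =>
      rw [ofB_cons (by simp)]
      have hrev : (k :: (a :: l)).reverse = (a :: l).reverse ++ [k] := by simp
      rw [hrev, ofB_concat (by simp), ← ih (by simp)]
      simp

lemma Cw_reverse (w : List Bool) (x : Fin 3) : Cw w.reverse x = (Cw w x).reverse := by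
  rcases show x = 0 ∨ x = 1 ∨ x = 2 by omega with rfl | rfl | rfl <;> rfl

lemma J_reverse (w : List Bool) (l : List (Fin 3)) :
    J w.reverse l.reverse = (J w l).reverse := by
  induction l with
  | nil => rfl
  | cons x t ih =>
    rw [J_cons, List.reverse_cons, J_append, ih, List.reverse_append]
    simp [J, Cw_reverse]

lemma ud_reverse {w : List Bool}
    (h : ∀ l₁ l₂, J w.reverse l₁ = J w.reverse l₂ → l₁ = l₂) :
    ∀ l₁ l₂, J w l₁ = J w l₂ → l₁ = l₂ := by
  intro l₁ l₂ heq
  have h2 : J w.reverse l₁.reverse = J w.reverse l₂.reverse := by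
    rw [J_reverse, J_reverse, heq]
  have := h _ _ h2
  simpa using congrArg List.reverse this

lemma fact_rep_append : ∀ c, c % 2 = 0 → ∀ z, Fact z → Fact (List.replicate c false ++ z) := by
  intro c
  induction c using Nat.strong_induction_on with
  | _ c ih =>
    intro hc z hz
    match c, hc with
    | 0, _ => simpa using hz
    | (c' + 2), hc =>
      rw [List.replicate_succ, List.replicate_succ, List.cons_append, List.cons_append]
      exact Fact.two (ih c' (by omega) (by omega) z hz)

lemma fact_ofB : ∀ K : List ℕ, K ≠ [] → (∀ x ∈ K, x % 2 = 0) → Fact (ofB K) := by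
  intro K
  induction K with
  | nil => intro h; exact absurd rfl h
  | cons k Ks ih =>
    intro _ hev
    cases Ks with
    | nil =>
      have : Fact (List.replicate k false ++ []) :=
        fact_rep_append k (hev k (by simp)) [] Fact.nil
      simpa [ofB] using this
    | cons a l =>
      rw [ofB_cons (by simp)]
      exact fact_rep_append k (hev k (by simp)) _
        (Fact.one (ih (by simp) (fun x hx => hev x (by simp [hx]))))

lemma fact_rep_of : ∀ w, Fact w → ∀ c, w = List.replicate c false → c % 2 = 0 := by
  intro w hw
  induction hw with
  | nil =>
    intro c hc
    have := congrArg List.length hc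
    simp at this
    omega
  | one _ _ =>
    intro c hc
    cases c with
    | zero => simp at hc
    | succ c' => rw [List.replicate_succ] at hc; simp at hc
  | two _ ih =>
    intro c hc
    match c, hc with
    | 0, hc => simp at hc
    | 1, hc => rw [List.replicate_succ] at hc; simp at hc
    | (c' + 2), hc =>
      rw [List.replicate_succ, List.replicate_succ] at hc
      simp at hc
      have := ih c' hc
      omega

/-- The hard direction: a good word gives a uniquely decodable code. -/
lemma good_ud (w : List Bool) (hnf : ¬ Fact w)
    (hnrep : ¬ (w.length % 2 = 1 ∧ w = List.replicate w.length false)) :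
    ∀ l₁ l₂, J w l₁ = J w l₂ → l₁ = l₂ := by
  obtain ⟨K, hK, rfl⟩ := exists_blocks w
  have hodd : ∃ x ∈ K, x % 2 = 1 := by
    by_contra hcon
    push_neg at hcon
    exact hnf (fact_ofB K hK (fun x hx => by have := hcon x hx; omega))
  obtain ⟨k₀, K₁, rfl⟩ : ∃ k₀ K₁, K = k₀ :: K₁ := by
    cases K with
    | nil => exact absurd rfl hK
    | cons a l => exact ⟨a, l, rfl⟩
  cases K₁ with
  | nil =>
    exfalso
    obtain ⟨x, hx, hxo⟩ := hodd
    simp at hx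
    subst hx
    refine hnrep ⟨?_, ?_⟩ <;> simp [ofB, hxo]
  | cons k₁ Ks =>
    set K₁ : List ℕ := k₁ :: Ks with hK₁def
    have hK₁ : K₁ ≠ [] := by simp [hK₁def]
    by_cases hk₀ : k₀ % 2 = 1
    · exact udA k₀ K₁ hk₀ hK₁
    · -- head even
      have hk₀e : k₀ % 2 = 0 := by omega
      obtain ⟨K₀, e, hKc⟩ : ∃ K₀ e, k₀ :: K₁ = K₀ ++ [e] := by
        rcases List.eq_nil_or_concat (k₀ :: K₁) with h | ⟨L, b, h⟩
        · simp at h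
        · exact ⟨L, b, by simpa [List.concat_eq_append] using h⟩
      by_cases he : e % 2 = 1
      · -- last block odd : use reversal
        apply ud_reverse
        have hrev : (ofB (k₀ :: K₁)).reverse = ofB (e :: K₀.reverse) := by
          rw [ofB_reverse (by simp), hKc]
          simp
        rw [hrev]
        have hK₀ne : K₀.reverse ≠ [] := by
          intro hcon
          have : K₀ = [] := by simpa using congrArg List.reverse hcon
          subst this
          have h2 := congrArg List.length hKc
          simp [hK₁def] at h2
        exact udA e K₀.reverse he hK₀ne
      · exact udC k₀ K₁ hK₁ hk₀e ⟨K₀, e, hKc, by omega⟩ hodd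

lemma isUD_iff (w : List Bool) :
    IsUDCode (Cw w) ↔ ∀ l₁ l₂, J w l₁ = J w l₂ → l₁ = l₂ := by
  constructor
  · intro h l₁ l₂ heq
    exact h l₁ l₂ heq
  · intro h l₁ l₂ heq
    exact h l₁ l₂ heq

lemma fact_decode {w₀ : List Bool} (h : Fact w₀) (w : List Bool) :
    ∃ l : List (Fin 3), (2 : Fin 3) ∉ l ∧ J w l = w₀ := by
  induction h with
  | nil => exact ⟨[], by simp, rfl⟩
  | one _ ih =>
    obtain ⟨l, hl, hJ⟩ := ih
    exact ⟨0 :: l, by simp [hl], by simp [hJ]⟩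
  | two _ ih =>
    obtain ⟨l, hl, hJ⟩ := ih
    exact ⟨1 :: l, by simp [hl], by simp [hJ]⟩

lemma notud_of_fact {w : List Bool} (h : Fact w) : ¬ IsUDCode (Cw w) := by
  rw [isUD_iff]
  intro hud
  obtain ⟨l, hl, hJ⟩ := fact_decode h w
  have h2 : J w [2] = w := by simp
  have := hud l [2] (by rw [hJ, h2])
  rw [this] at hl
  simp at hl

lemma J_rep_ones (w : List Bool) : ∀ c, J w (List.replicate c 1) = List.replicate (2 * c) false := by
  intro c
  induction c with
  | zero => simp
  | succ c' ih =>
    rw [List.replicate_succ, J_cons, ih]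
    have : 2 * (c' + 1) = 2 * c' + 2 := by omega
    rw [this]
    simp [List.replicate_succ, List.replicate_add]

lemma notud_of_rep_odd {c : ℕ} (hc : c % 2 = 1) :
    ¬ IsUDCode (Cw (List.replicate c false)) := by
  rw [isUD_iff]
  intro hud
  set w : List Bool := List.replicate c false with hw
  have h1 : J w (List.replicate c 1) = List.replicate (2 * c) false := J_rep_ones w c
  have h2 : J w [2, 2] = List.replicate (2 * c) false := by
    show w ++ (w ++ []) = _
    rw [List.append_nil, hw, ← List.replicate_add]
    congr 1
    omega
  have := hud (List.replicate c 1) [2, 2] (by rw [h1, h2])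
  have hlen := congrArg List.length this
  simp at hlen
  omega

/-- the Finset of factorable words of length `c` -/
def FA : ℕ → Finset (List Bool)
  | 0 => {([] : List Bool)}
  | 1 => {[true]}
  | (c + 2) => ((FA (c + 1)).image (List.cons true)) ∪ ((FA c).image (fun t => false :: false :: t))

lemma mem_FA : ∀ c (w : List Bool), w ∈ FA c ↔ (w.length = c ∧ Fact w) := by
  intro c
  induction c using Nat.strong_induction_on with
  | _ c ih =>
    intro w
    match c with
    | 0 =>
      simp only [FA, Finset.mem_singleton]
      constructor
      · rintro rfl; exact ⟨rfl, Fact.nil⟩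
      · rintro ⟨h1, -⟩; exact List.eq_nil_of_length_eq_zero h1
    | 1 =>
      simp only [FA, Finset.mem_singleton]
      constructor
      · rintro rfl; exact ⟨rfl, Fact.one Fact.nil⟩
      · rintro ⟨h1, h2⟩
        cases h2 with
        | nil => simp at h1
        | one h => simp at h1; rw [h1]
        | two h => simp at h1
    | (c + 2) =>
      simp only [FA, Finset.mem_union, Finset.mem_image]
      constructor
      · rintro (⟨t, ht, rfl⟩ | ⟨t, ht, rfl⟩)
        · obtain ⟨h1, h2⟩ := (ih (c + 1) (by omega) t).mp ht
          exact ⟨by simp [h1], Fact.one h2⟩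
        · obtain ⟨h1, h2⟩ := (ih c (by omega) t).mp ht
          exact ⟨by simp [h1], Fact.two h2⟩
      · rintro ⟨h1, h2⟩
        cases h2 with
        | nil => simp at h1
        | @one t h =>
          exact Or.inl ⟨t, (ih (c + 1) (by omega) t).mpr ⟨by simpa using h1, h⟩, rfl⟩
        | @two t h =>
          exact Or.inr ⟨t, (ih c (by omega) t).mpr ⟨by simpa using h1, h⟩, rfl⟩

lemma card_FA : ∀ c, (FA c).card = Nat.fib (c + 1) ∧ (FA (c + 1)).card = Nat.fib (c + 2) := by
  intro c
  induction c with
  | zero => constructor <;> simp [FA]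
  | succ c ih =>
    refine ⟨ih.2, ?_⟩
    show (FA (c + 2)).card = Nat.fib (c + 3)
    rw [FA]
    have hdisj : Disjoint ((FA (c + 1)).image (List.cons true))
        ((FA c).image (fun t => false :: false :: t)) := by
      rw [Finset.disjoint_left]
      rintro a ha hb
      simp only [Finset.mem_image] at ha hb
      obtain ⟨t, -, rfl⟩ := ha
      obtain ⟨t', -, h⟩ := hb
      simp at h
    rw [Finset.card_union_of_disjoint hdisj,
      Finset.card_image_of_injective _ (fun a b h => by simpa using h),
      Finset.card_image_of_injective _ (fun a b h => by simpa using h),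
      ih.1, ih.2]
    have : Nat.fib (c + 3) = Nat.fib (c + 1) + Nat.fib (c + 2) := Nat.fib_add_two
    omega

end CountUDAux

open CountUDAux in
theorem count_not_ud_one_doublezero (c : ℕ) (hc : 1 ≤ c) :
    Nat.card {w : List Bool // w.length = c ∧
        ¬ IsUDCode ![[true], [false, false], w]} = Nat.fib (c + 1) + c % 2 := by
  classical
  set G : Finset (List Bool) :=
    if c % 2 = 1 then insert (List.replicate c false) (FA c) else FA c with hG
  have hmem : ∀ w : List Bool, w ∈ G ↔ (w.length = c ∧ ¬ IsUDCode (Cw w)) := by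
    intro w
    constructor
    · intro hw
      rw [hG] at hw
      split_ifs at hw with hodd
      · rcases Finset.mem_insert.mp hw with rfl | hw
        · exact ⟨by simp, notud_of_rep_odd hodd⟩
        · obtain ⟨h1, h2⟩ := (mem_FA c w).mp hw
          exact ⟨h1, notud_of_fact h2⟩
      · obtain ⟨h1, h2⟩ := (mem_FA c w).mp hw
        exact ⟨h1, notud_of_fact h2⟩
    · rintro ⟨h1, h2⟩
      by_contra hcon
      have hnf : ¬ Fact w := by
        intro hf
        apply hcon
        rw [hG]
        have : w ∈ FA c := (mem_FA c w).mpr ⟨h1, hf⟩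
        split_ifs
        · exact Finset.mem_insert_of_mem this
        · exact this
      have hnrep : ¬ (w.length % 2 = 1 ∧ w = List.replicate w.length false) := by
        rintro ⟨ho, hr⟩
        apply hcon
        rw [h1] at hr ho
        rw [hG, if_pos ho, hr]
        exact Finset.mem_insert_self _ _
      exact h2 ((isUD_iff w).mpr (good_ud w hnf hnrep))
  have hcard1 : Nat.card {w : List Bool // w.length = c ∧ ¬ IsUDCode (Cw w)}
      = G.card := by
    rw [← Nat.card_eq_finsetCard]
    exact Nat.card_congr (Equiv.subtypeEquivRight (fun w => (hmem w))).symm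
  show Nat.card {w : List Bool // w.length = c ∧ ¬ IsUDCode (Cw w)}
      = Nat.fib (c + 1) + c % 2
  rw [hcard1, hG]
  split_ifs with hodd
  · rw [Finset.card_insert_of_notMem (by
      intro hmem2
      have := (mem_FA c _).mp hmem2
      have := fact_rep_of _ this.2 c rfl
      omega)]
    rw [(card_FA c).1]
    omega
  · rw [(card_FA c).1]
    omega
end

section
/- Over the binary alphabet {0,1}, for every c ≥ 1, a word w of length c makes the triple (1, 01, w) fail to be a uniquely decodable code if and only if w contains no two consecutive 0's. -/
/-- The code `{1, 01, w}`. -/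
@[reducible] def Cw (w : List Bool) : Fin 3 → List Bool := ![[true], [false, true], w]

@[simp] lemma Cw_zero (w : List Bool) : Cw w 0 = [true] := rfl
@[simp] lemma Cw_one (w : List Bool) : Cw w 1 = [false, true] := rfl
@[simp] lemma Cw_two (w : List Bool) : Cw w 2 = w := rfl

/-- Words that are concatenations of `1` and `01`. -/
inductive Good : List Bool → Prop
  | nil : Good []
  | one {s : List Bool} : Good s → Good (true :: s)
  | zeroone {s : List Bool} : Good s → Good (false :: true :: s)

lemma lt_len_of_get {α : Type*} {l : List α} {n : ℕ} {a : α} (h : l[n]? = some a) :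
    n < l.length := by
  by_contra hh; rw [List.getElem?_eq_none (le_of_not_gt hh)] at h; cases h

lemma good_get {s : List Bool} (h : Good s) :
    ∀ i, s[i]? = some false → s[i+1]? = some true := by
  induction h with
  | nil => intro i hi; simp at hi
  | one _ ih =>
    intro i hi
    match i with
    | 0 => simp at hi
    | n + 1 => simpa using ih n (by simpa using hi)
  | zeroone _ ih =>
    intro i hi
    match i with
    | 0 => simp
    | 1 => simp at hi
    | n + 2 => simpa using ih n (by simpa using hi)

lemma good_append_one {s : List Bool} (h : Good s) : Good (s ++ [true]) := by
  induction h with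
  | nil => exact Good.one Good.nil
  | one _ ih => exact Good.one ih
  | zeroone _ ih => exact Good.zeroone ih

lemma good_append_zeroone {s : List Bool} (h : Good s) : Good (s ++ [false, true]) := by
  induction h with
  | nil => exact Good.zeroone Good.nil
  | one _ ih => exact Good.one ih
  | zeroone _ ih => exact Good.zeroone ih

/-- The overlap argument: a copy of `w` shifted by a nonempty good word cannot
match, because of the first occurrence of `00` in `w`. -/
lemma overlap (w : List Bool) (k : ℕ)
    (hk0 : w[k]? = some false) (hk1 : w[k+1]? = some false)
    (hmin : ∀ j < k, ¬(w[j]? = some false ∧ w[j+1]? = some false))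
    (g x y : List Bool) (hg : Good g) (hgne : g ≠ [])
    (heq : g ++ (w ++ x) = w ++ y) : False := by
  have hc1 : k + 1 < w.length := lt_len_of_get hk1
  have hq : 1 ≤ g.length := List.length_pos_iff.mpr hgne
  have hsk : (w ++ y)[k]? = some false := by
    rw [List.getElem?_append_left (by omega)]; exact hk0
  have hsk1 : (w ++ y)[k+1]? = some false := by
    rw [List.getElem?_append_left hc1]; exact hk1
  rcases lt_or_ge k g.length with hkq | hqk
  · have hgk : g[k]? = some false := by
      have h1 : (g ++ (w ++ x))[k]? = some false := by rw [heq]; exact hsk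
      rwa [List.getElem?_append_left hkq] at h1
    have hgk1 : g[k+1]? = some true := good_get hg k hgk
    have hk1q : k + 1 < g.length := lt_len_of_get hgk1
    have h2 : (g ++ (w ++ x))[k+1]? = some true := by
      rw [List.getElem?_append_left hk1q]; exact hgk1
    rw [heq, hsk1] at h2
    simp at h2
  · have h1 : w[k - g.length]? = some false := by
      have h1 : (g ++ (w ++ x))[k]? = some false := by rw [heq]; exact hsk
      rw [List.getElem?_append_right hqk] at h1
      rwa [List.getElem?_append_left (by omega)] at h1
    have h2 : w[k + 1 - g.length]? = some false := by
      have h2 : (g ++ (w ++ x))[k+1]? = some false := by rw [heq]; exact hsk1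
      rw [List.getElem?_append_right (by omega)] at h2
      rwa [List.getElem?_append_left (by omega)] at h2
    have hk' : k + 1 - g.length = (k - g.length) + 1 := by omega
    exact hmin (k - g.length) (by omega) ⟨h1, by rwa [hk'] at h2⟩

lemma aux_no_cover (w : List Bool) (k : ℕ)
    (hk0 : w[k]? = some false) (hk1 : w[k+1]? = some false)
    (hmin : ∀ j < k, ¬(w[j]? = some false ∧ w[j+1]? = some false)) :
    ∀ (l : List (Fin 3)) (g r : List Bool), Good g → g ≠ [] →
      g ++ (l.map (Cw w)).flatten = w ++ r → False := by
  intro l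
  induction l with
  | nil =>
    intro g r hg _ heq
    simp only [List.map_nil, List.flatten_nil, List.append_nil] at heq
    have hc1 : k + 1 < w.length := lt_len_of_get hk1
    have hgk : g[k]? = some false := by
      rw [heq, List.getElem?_append_left (by omega)]; exact hk0
    have hgk1 : g[k+1]? = some true := good_get hg k hgk
    rw [heq, List.getElem?_append_left hc1, hk1] at hgk1
    simp at hgk1
  | cons i t ih =>
    intro g r hg hgne heq
    fin_cases i
    · refine ih (g ++ [true]) r (good_append_one hg) (by simp) ?_
      simpa using heq
    · refine ih (g ++ [false, true]) r (good_append_zeroone hg) (by simp) ?_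
      simpa using heq
    · exact overlap w k hk0 hk1 hmin g ((t.map (Cw w)).flatten) r hg hgne (by simpa using heq)

lemma ud_of_infix (w : List Bool) (hwne : w ≠ []) (h00 : [false, false] <:+: w) :
    IsUDCode (Cw w) := by
  obtain ⟨u, v, huv⟩ := h00
  have hw' : w = u ++ false :: false :: v := by rw [← huv]; simp
  have hex : ∃ n, w[n]? = some false ∧ w[n+1]? = some false := by
    refine ⟨u.length, ?_, ?_⟩
    · rw [hw', List.getElem?_append_right le_rfl]; simp
    · rw [hw', List.getElem?_append_right (by omega)]
      have : u.length + 1 - u.length = 1 := by omega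
      rw [this]; simp
  set k := Nat.find hex with hkdef
  obtain ⟨hk0, hk1⟩ := Nat.find_spec hex
  have hmin : ∀ j < k, ¬(w[j]? = some false ∧ w[j+1]? = some false) :=
    fun j hj => Nat.find_min hex hj
  suffices H : ∀ n (l₁ l₂ : List (Fin 3)), l₁.length + l₂.length ≤ n →
      (l₁.map (Cw w)).flatten = (l₂.map (Cw w)).flatten → l₁ = l₂ by
    intro l₁ l₂ h; exact H (l₁.length + l₂.length) l₁ l₂ le_rfl h
  intro n
  induction n with
  | zero =>
    intro l₁ l₂ hn _
    rw [Nat.le_zero, Nat.add_eq_zero] at hn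
    rw [List.length_eq_zero_iff.mp hn.1, List.length_eq_zero_iff.mp hn.2]
  | succ n ih =>
    intro l₁ l₂ hn heq
    rcases l₁ with _ | ⟨i, t₁⟩ <;> rcases l₂ with _ | ⟨j, t₂⟩
    · rfl
    · exfalso
      simp only [List.map_nil, List.flatten_nil, List.map_cons, List.flatten_cons] at heq
      have hj : Cw w j = [] ∧ (t₂.map (Cw w)).flatten = [] := List.append_eq_nil_iff.mp heq.symm
      fin_cases j
      · simp at hj
      · simp at hj
      · exact hwne hj.1
    · exfalso
      simp only [List.map_nil, List.flatten_nil, List.map_cons, List.flatten_cons] at heq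
      have hj : Cw w i = [] ∧ (t₁.map (Cw w)).flatten = [] := List.append_eq_nil_iff.mp heq
      fin_cases i
      · simp at hj
      · simp at hj
      · exact hwne hj.1
    · simp only [List.map_cons, List.flatten_cons] at heq
      by_cases hij : i = j
      · subst hij
        have ht : (t₁.map (Cw w)).flatten = (t₂.map (Cw w)).flatten :=
          List.append_cancel_left heq
        have hlen : t₁.length + t₂.length ≤ n := by
          simp only [List.length_cons] at hn; omega
        rw [ih t₁ t₂ hlen ht]
      · exfalso
        fin_cases i <;> fin_cases j <;> (try exact hij rfl) <;>
          simp only [Cw_zero, Cw_one, Cw_two] at heq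
        · -- 0 vs 1
          simp at heq
        · -- 0 vs 2
          exact aux_no_cover w k hk0 hk1 hmin t₁ [true] ((t₂.map (Cw w)).flatten)
            (Good.one Good.nil) (by simp) heq
        · -- 1 vs 0
          simp at heq
        · -- 1 vs 2
          exact aux_no_cover w k hk0 hk1 hmin t₁ [false, true] ((t₂.map (Cw w)).flatten)
            (Good.zeroone Good.nil) (by simp) heq
        · -- 2 vs 0
          exact aux_no_cover w k hk0 hk1 hmin t₂ [true] ((t₁.map (Cw w)).flatten)
            (Good.one Good.nil) (by simp) heq.symm
        · -- 2 vs 1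
          exact aux_no_cover w k hk0 hk1 hmin t₂ [false, true] ((t₁.map (Cw w)).flatten)
            (Good.zeroone Good.nil) (by simp) heq.symm

/-- A word with no factor `00` decodes over `{1, 01}`, possibly after removing a
trailing `0`. -/
lemma decode (z : List Bool) : ∀ (n : ℕ) (w : List Bool), w.length ≤ n →
    ¬ [false, false] <:+: w →
    (∃ l : List (Fin 3), 2 ∉ l ∧ (l.map (Cw z)).flatten = w) ∨
    (∃ l : List (Fin 3), 2 ∉ l ∧ (l.map (Cw z)).flatten ++ [false] = w) := by
  intro n
  induction n with
  | zero =>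
    intro w hlen _
    left
    refine ⟨[], by simp, ?_⟩
    rw [List.length_eq_zero_iff.mp (Nat.le_zero.mp hlen)]; simp
  | succ n ih =>
    intro w hlen hninf
    rcases w with _ | ⟨b, w'⟩
    · exact Or.inl ⟨[], by simp, by simp⟩
    cases b
    · -- w = false :: w'
      rcases w' with _ | ⟨b', w''⟩
      · exact Or.inr ⟨[], by simp, by simp⟩
      cases b'
      · -- w begins with 00
        exact absurd ⟨[], w'', rfl⟩ hninf
      · -- w = false :: true :: w''
        have h' : ¬ [false, false] <:+: w'' := fun h =>
          hninf ((h.trans (List.suffix_cons true w'').isInfix).trans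
            (List.suffix_cons false (true :: w'')).isInfix)
        have hlen' : w''.length ≤ n := by simp at hlen; omega
        rcases ih w'' hlen' h' with ⟨l, hl, hj⟩ | ⟨l, hl, hj⟩
        · exact Or.inl ⟨1 :: l, by simp [hl], by simp [hj]⟩
        · exact Or.inr ⟨1 :: l, by simp [hl], by simp [hj]⟩
    · -- w = true :: w'
      have h' : ¬ [false, false] <:+: w' := fun h =>
        hninf (h.trans (List.suffix_cons true w').isInfix)
      have hlen' : w'.length ≤ n := by simp at hlen; omega
      rcases ih w' hlen' h' with ⟨l, hl, hj⟩ | ⟨l, hl, hj⟩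
      · exact Or.inl ⟨0 :: l, by simp [hl], by simp [hj]⟩
      · exact Or.inr ⟨0 :: l, by simp [hl], by simp [hj]⟩

theorem not_ud_one_zeroone_iff (c : ℕ) (hc : 1 ≤ c) (w : List Bool) (hw : w.length = c) :
    ¬ IsUDCode ![[true], [false, true], w] ↔ ¬ [false, false] <:+: w := by
  have hwne : w ≠ [] := by
    intro h; rw [h] at hw; simp at hw; omega
  constructor
  · intro hnud
    intro hinf
    exact hnud (ud_of_infix w hwne hinf)
  · intro hninf hud
    rcases decode w w.length w le_rfl hninf with ⟨l, hl, hj⟩ | ⟨l, hl, hj⟩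
    · have h2 := hud [2] l (by
        show ([2].map (Cw w)).flatten = (l.map (Cw w)).flatten
        simpa using hj.symm)
      apply hl
      rw [← h2]; simp
    · have h2 := hud [2, 0] (l ++ [1]) (by
        show ([2, 0].map (Cw w)).flatten = ((l ++ [1]).map (Cw w)).flatten
        simp only [List.map_cons, List.map_nil, List.flatten_cons, List.flatten_nil,
          List.map_append, List.flatten_append, Cw_zero, Cw_one, Cw_two, List.append_nil]
        conv_lhs => rw [← hj]
        simp)
      apply hl
      have hm : (2 : Fin 3) ∈ l ++ [1] := by rw [← h2]; simp
      rcases List.mem_append.mp hm with h | h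
      · exact h
      · simp at h
end

section
/- Over the binary alphabet {0,1}, for every c ≥ 1, the number of uniquely decodable codes with length distribution (1,2,c) equals 3·2^{c+1} − 2F_{c+4} − 2(c mod 2), where F_n is the n-th Fibonacci number (F_1 = F_2 = 1). -/
namespace UDC

abbrev Wd := List Bool

def JJ {m : ℕ} (C : Fin m → List Bool) (l : List (Fin m)) : Wd := (l.map C).flatten

@[simp] lemma JJ_nil {m : ℕ} (C : Fin m → List Bool) : JJ C [] = [] := rfl

@[simp] lemma JJ_cons {m : ℕ} (C : Fin m → List Bool) (i : Fin m) (l : List (Fin m)) :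
    JJ C (i :: l) = C i ++ JJ C l := by simp [JJ]

@[simp] lemma JJ_append {m : ℕ} (C : Fin m → List Bool) (g l : List (Fin m)) :
    JJ C (g ++ l) = JJ C g ++ JJ C l := by simp [JJ]

lemma isUD_iff_JJ {m : ℕ} (C : Fin m → List Bool) :
    IsUDCode C ↔ ∀ l₁ l₂ : List (Fin m), JJ C l₁ = JJ C l₂ → l₁ = l₂ := Iff.rfl

inductive M1 : Wd → Prop
  | nil : M1 []
  | zero {l} : M1 l → M1 (false :: l)
  | onezero {l} : M1 l → M1 (true :: false :: l)

inductive M2 : Wd → Prop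
  | nil : M2 []
  | zero {l} : M2 l → M2 (false :: l)
  | ones {l} : M2 l → M2 (true :: true :: l)

lemma fin3 (i : Fin 3) : i = 0 ∨ i = 1 ∨ i = 2 := by omega

lemma first_split {α : Type*} (a : α) : ∀ (l : List α), a ∈ l →
    ∃ g t, l = g ++ a :: t ∧ a ∉ g := by
  intro l hl
  induction l with
  | nil => simp at hl
  | cons b l ih =>
    by_cases hb : a = b
    · exact ⟨[], l, by simp [hb], by simp⟩
    · have hl' : a ∈ l := by
        rcases List.mem_cons.1 hl with h | h
        · exact absurd h hb
        · exact h
      rcases ih hl' with ⟨g, t, h1, h2⟩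
      exact ⟨b :: g, t, by simp [h1], by simp [h2, hb]⟩

-- ===== Family 1 : code ![[false],[true,false],w] =====

def D1 (w : Wd) : Fin 3 → Wd := ![[false], [true, false], w]

@[simp] lemma D1_zero (w : Wd) : D1 w 0 = [false] := rfl
@[simp] lemma D1_one (w : Wd) : D1 w 1 = [true, false] := rfl
@[simp] lemma D1_two (w : Wd) : D1 w 2 = w := rfl

lemma M1.append {a b : Wd} (ha : M1 a) (hb : M1 b) : M1 (a ++ b) := by
  induction ha with
  | nil => simpa
  | zero _ ih => exact .zero ih
  | onezero _ ih => exact .onezero ih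

lemma infix11_cons_false {l : Wd} :
    [true, true] <:+: (false :: l) ↔ [true, true] <:+: l := by
  rw [List.infix_cons_iff]
  constructor
  · rintro (⟨t, ht⟩ | h)
    · simp at ht
    · exact h
  · exact Or.inr

lemma infix11_cons_true {l : Wd} :
    [true, true] <:+: (true :: l) ↔ (∃ l', l = true :: l') ∨ [true, true] <:+: l := by
  rw [List.infix_cons_iff]
  constructor
  · rintro (⟨t, ht⟩ | h)
    · simp at ht
      exact Or.inl ⟨t, ht.symm⟩
    · exact Or.inr h
  · rintro (⟨l', rfl⟩ | h)
    · exact Or.inl ⟨l', rfl⟩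
    · exact Or.inr h

lemma M1.no11 {l : Wd} (h : M1 l) : ¬ ([true, true] <:+: l) := by
  induction h with
  | nil => simp
  | zero _ ih => rw [infix11_cons_false]; exact ih
  | onezero _ ih =>
      rw [infix11_cons_true]
      rintro (⟨l', hl'⟩ | h2)
      · simp at hl'
      · rw [infix11_cons_false] at h2; exact ih h2

lemma M1_false_inv {l : Wd} (h : M1 (false :: l)) : M1 l := by cases h; assumption

lemma M1_true_inv {l : Wd} (h : M1 (true :: l)) : ∃ l', l = false :: l' ∧ M1 l' := by
  cases h; exact ⟨_, rfl, by assumption⟩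

lemma M1_JJ (w : Wd) : ∀ l : List (Fin 3), (∀ i ∈ l, i ≠ 2) → M1 (JJ (D1 w) l) := by
  intro l
  induction l with
  | nil => intro _; exact M1.nil
  | cons i t ih =>
    intro hfree
    have ht := ih (fun j hj => hfree j (List.mem_cons_of_mem _ hj))
    rcases fin3 i with rfl | rfl | rfl
    · simpa using M1.zero ht
    · simpa using M1.onezero ht
    · exact absurd rfl (hfree 2 (List.mem_cons_self))

lemma M1_exists (w : Wd) {u : Wd} (h : M1 u) :
    ∃ l : List (Fin 3), (∀ i ∈ l, i ≠ 2) ∧ JJ (D1 w) l = u := by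
  induction h with
  | nil => exact ⟨[], by simp, rfl⟩
  | zero _ ih =>
      rcases ih with ⟨l, hf, hl⟩
      exact ⟨0 :: l, by simpa using hf, by simp [hl]⟩
  | onezero _ ih =>
      rcases ih with ⟨l, hf, hl⟩
      exact ⟨1 :: l, by simpa using hf, by simp [hl]⟩

lemma UDsub1 (w : Wd) : ∀ l₁ l₂ : List (Fin 3), (∀ i ∈ l₁, i ≠ 2) → (∀ i ∈ l₂, i ≠ 2) →
    JJ (D1 w) l₁ = JJ (D1 w) l₂ → l₁ = l₂ := by
  intro l₁
  induction l₁ with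
  | nil =>
    intro l₂ _ h2 heq
    cases l₂ with
    | nil => rfl
    | cons j t =>
      exfalso
      rcases fin3 j with rfl | rfl | rfl
      · simp [JJ] at heq
      · simp [JJ] at heq
      · exact absurd rfl (h2 2 (List.mem_cons_self))
  | cons i t₁ ih =>
    intro l₂ h1 h2 heq
    cases l₂ with
    | nil =>
      exfalso
      rcases fin3 i with rfl | rfl | rfl
      · simp [JJ] at heq
      · simp [JJ] at heq
      · exact absurd rfl (h1 2 (List.mem_cons_self))
    | cons j t₂ =>
      have h1' : ∀ k ∈ t₁, k ≠ (2 : Fin 3) := fun k hk => h1 k (List.mem_cons_of_mem _ hk)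
      have h2' : ∀ k ∈ t₂, k ≠ (2 : Fin 3) := fun k hk => h2 k (List.mem_cons_of_mem _ hk)
      rcases fin3 i with rfl | rfl | rfl
      · rcases fin3 j with rfl | rfl | rfl
        · simp only [JJ_cons, D1_zero, List.cons_append, List.nil_append, List.cons.injEq] at heq
          rw [ih t₂ h1' h2' heq.2]
        · simp only [JJ_cons, D1_zero, D1_one, List.cons_append, List.nil_append,
            List.cons.injEq] at heq
          exact absurd heq.1 (by simp)
        · exact absurd rfl (h2 2 (List.mem_cons_self))
      · rcases fin3 j with rfl | rfl | rfl
        · simp only [JJ_cons, D1_zero, D1_one, List.cons_append, List.nil_append,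
            List.cons.injEq] at heq
          exact absurd heq.1 (by simp)
        · simp only [JJ_cons, D1_one, List.cons_append, List.nil_append, List.cons.injEq] at heq
          rw [ih t₂ h1' h2' heq.2.2]
        · exact absurd rfl (h2 2 (List.mem_cons_self))
      · exact absurd rfl (h1 2 (List.mem_cons_self))

lemma exists_dec1 : ∀ {u : Wd}, [true, true] <:+: u →
    ∃ m z, u = m ++ [true, true] ++ z ∧ M1 m := by
  intro u
  induction u with
  | nil => intro h; exact absurd (List.eq_nil_of_infix_nil h) (by simp)
  | cons a u' ih =>
    intro h
    cases a with
    | false =>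
      rcases ih (infix11_cons_false.1 h) with ⟨m, z, hdec, hm⟩
      exact ⟨false :: m, z, by simp [hdec], M1.zero hm⟩
    | true =>
      rcases infix11_cons_true.1 h with ⟨l', rfl⟩ | h2
      · exact ⟨[], l', by simp, M1.nil⟩
      · rcases ih h2 with ⟨m, z, hdec, hm⟩
        cases m with
        | nil =>
          exact ⟨[], true :: z, by simp [hdec], M1.nil⟩
        | cons b m₃ =>
          -- u' starts with b; if b = true then again head split, if false use onezero
          cases b with
          | false =>
            exact ⟨true :: false :: m₃, z, by simp [hdec], M1.onezero (M1_false_inv hm)⟩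
          | true =>
            rcases M1_true_inv hm with ⟨m₄, rfl, _⟩
            exact ⟨[], false :: (m₄ ++ [true, true] ++ z), by simp [hdec], M1.nil⟩

lemma dec1_unique : ∀ (m₁ : Wd) {m₂ z₁ z₂ : Wd}, M1 m₁ → M1 m₂ →
    m₁ ++ [true, true] ++ z₁ = m₂ ++ [true, true] ++ z₂ → m₁ = m₂ ∧ z₁ = z₂ := by
  intro m₁
  induction m₁ with
  | nil =>
    intro m₂ z₁ z₂ _ hm₂ heq
    cases m₂ with
    | nil => simpa using heq
    | cons b m₃ =>
      cases b with
      | false => simp at heq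
      | true =>
        rcases M1_true_inv hm₂ with ⟨m₄, rfl, _⟩
        simp at heq
  | cons a m₃ ih =>
    intro m₂ z₁ z₂ hm₁ hm₂ heq
    cases m₂ with
    | nil =>
      cases a with
      | false => simp at heq
      | true =>
        rcases M1_true_inv hm₁ with ⟨m₄, rfl, _⟩
        simp at heq
    | cons b m₅ =>
      have hab : a = b := by
        have := congrArg (fun l => l.head?) heq
        simpa using this
      subst hab
      have heq' : m₃ ++ [true, true] ++ z₁ = m₅ ++ [true, true] ++ z₂ := by
        have := congrArg (fun l => l.tail) heq
        simpa using this
      have hm₃ : M1 m₃ := by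
        cases a with
        | false => exact M1_false_inv hm₁
        | true => rcases M1_true_inv hm₁ with ⟨m₄, rfl, h4⟩; exact M1.zero h4
      have hm₅ : M1 m₅ := by
        cases a with
        | false => exact M1_false_inv hm₂
        | true => rcases M1_true_inv hm₂ with ⟨m₄, rfl, h4⟩; exact M1.zero h4
      rcases ih hm₃ hm₅ heq' with ⟨h1, h2⟩
      exact ⟨by rw [h1], h2⟩
theorem core1_ud {w : Wd} (hw : [true, true] <:+: w) : IsUDCode (D1 w) := by
  rw [isUD_iff_JJ]
  obtain ⟨mw, zw, hwdec, hmw⟩ := exists_dec1 hw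
  have main : ∀ n (l₁ l₂ : List (Fin 3)), l₁.length + l₂.length ≤ n →
      JJ (D1 w) l₁ = JJ (D1 w) l₂ → l₁ = l₂ := by
    intro n
    induction n with
    | zero =>
      intro l₁ l₂ hlen _
      simp only [Nat.le_zero, Nat.add_eq_zero, List.length_eq_zero_iff] at hlen
      rw [hlen.1, hlen.2]
    | succ n ihn =>
      intro l₁ l₂ hlen heq
      by_cases h1 : (2 : Fin 3) ∈ l₁
      · by_cases h2 : (2 : Fin 3) ∈ l₂
        · -- both contain the w-block
          obtain ⟨g₁, t₁, rfl, hg₁⟩ := first_split (2 : Fin 3) l₁ h1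
          obtain ⟨g₂, t₂, rfl, hg₂⟩ := first_split (2 : Fin 3) l₂ h2
          have hg₁' : ∀ i ∈ g₁, i ≠ (2 : Fin 3) := fun i hi h => hg₁ (h ▸ hi)
          have hg₂' : ∀ i ∈ g₂, i ≠ (2 : Fin 3) := fun i hi h => hg₂ (h ▸ hi)
          have e₁ : JJ (D1 w) (g₁ ++ 2 :: t₁) =
              (JJ (D1 w) g₁ ++ mw) ++ [true, true] ++ (zw ++ JJ (D1 w) t₁) := by
            simp [hwdec, List.append_assoc]
          have e₂ : JJ (D1 w) (g₂ ++ 2 :: t₂) =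
              (JJ (D1 w) g₂ ++ mw) ++ [true, true] ++ (zw ++ JJ (D1 w) t₂) := by
            simp [hwdec, List.append_assoc]
          rw [e₁, e₂] at heq
          have hu := dec1_unique _ ((M1_JJ w g₁ hg₁').append hmw) ((M1_JJ w g₂ hg₂').append hmw) heq
          have hJg : JJ (D1 w) g₁ = JJ (D1 w) g₂ := List.append_cancel_right hu.1
          have hJt : JJ (D1 w) t₁ = JJ (D1 w) t₂ := List.append_cancel_left hu.2
          have hgg : g₁ = g₂ := UDsub1 w g₁ g₂ hg₁' hg₂' hJg
          have htlen : t₁.length + t₂.length ≤ n := by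
            simp only [List.length_append, List.length_cons] at hlen
            omega
          rw [hgg, ihn t₁ t₂ htlen hJt]
        · exfalso
          obtain ⟨g₁, t₁, rfl, _⟩ := first_split (2 : Fin 3) l₁ h1
          have hfree₂ : ∀ i ∈ l₂, i ≠ (2 : Fin 3) := fun i hi h => h2 (h ▸ hi)
          have hM : M1 (JJ (D1 w) l₂) := M1_JJ w l₂ hfree₂
          apply hM.no11
          rw [← heq]
          refine hw.trans ⟨JJ (D1 w) g₁, JJ (D1 w) t₁, ?_⟩
          simp [List.append_assoc]
      · by_cases h2 : (2 : Fin 3) ∈ l₂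
        · exfalso
          obtain ⟨g₂, t₂, rfl, _⟩ := first_split (2 : Fin 3) l₂ h2
          have hfree₁ : ∀ i ∈ l₁, i ≠ (2 : Fin 3) := fun i hi h => h1 (h ▸ hi)
          have hM : M1 (JJ (D1 w) l₁) := M1_JJ w l₁ hfree₁
          apply hM.no11
          rw [heq]
          refine hw.trans ⟨JJ (D1 w) g₂, JJ (D1 w) t₂, ?_⟩
          simp [List.append_assoc]
        · exact UDsub1 w l₁ l₂ (fun i hi h => h1 (h ▸ hi)) (fun i hi h => h2 (h ▸ hi)) heq
  exact fun l₁ l₂ => main (l₁.length + l₂.length) l₁ l₂ le_rfl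

lemma no11_M1_append0 : ∀ n (w : Wd), w.length ≤ n → ¬ ([true, true] <:+: w) →
    M1 (w ++ [false]) := by
  intro n
  induction n with
  | zero =>
    intro w hw _
    simp only [Nat.le_zero, List.length_eq_zero_iff] at hw
    rw [hw]
    exact M1.onezero M1.nil |> fun _ => M1.zero M1.nil
  | succ n ihn =>
    intro w hw h
    cases w with
    | nil => exact M1.zero M1.nil
    | cons a w' =>
      cases a with
      | false =>
        have : ¬ ([true, true] <:+: w') := fun hh => h (infix11_cons_false.2 hh)
        exact M1.zero (ihn w' (by simp only [List.length_cons] at hw; omega) this)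
      | true =>
        cases w' with
        | nil => exact M1.onezero M1.nil
        | cons b w'' =>
          cases b with
          | true => exact absurd (infix11_cons_true.2 (Or.inl ⟨w'', rfl⟩)) h
          | false =>
            have hle : w''.length ≤ n := by
              simp only [List.length_cons] at hw
              omega
            have : ¬ ([true, true] <:+: w'') := by
              intro hh
              exact h (infix11_cons_true.2 (Or.inr (infix11_cons_false.2 hh)))
            have := ihn w'' hle this
            exact M1.onezero this

theorem core1_not {w : Wd} (h : ¬ [true, true] <:+: w) : ¬ IsUDCode (D1 w) := by
  intro hud
  have hM : M1 (w ++ [false]) := no11_M1_append0 (w ++ [false]).length (w) (by simp) h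
  obtain ⟨l, hfree, hl⟩ := M1_exists w hM
  have : JJ (D1 w) l = JJ (D1 w) [2, 0] := by simp [hl]
  have hll := hud l [2, 0] this
  exact hfree 2 (by rw [hll]; exact List.mem_cons_self) rfl
-- ===== Family 2 : code ![[false],[true,true],w] =====

def D2 (w : Wd) : Fin 3 → Wd := ![[false], [true, true], w]

@[simp] lemma D2_zero (w : Wd) : D2 w 0 = [false] := rfl
@[simp] lemma D2_one (w : Wd) : D2 w 1 = [true, true] := rfl
@[simp] lemma D2_two (w : Wd) : D2 w 2 = w := rfl

def Ztail (z : Wd) : Prop := z = [] ∨ ∃ z', z = false :: z'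

lemma M2.append {a b : Wd} (ha : M2 a) (hb : M2 b) : M2 (a ++ b) := by
  induction ha with
  | nil => simpa
  | zero _ ih => exact .zero ih
  | ones _ ih => exact .ones ih

lemma M2_false_inv {l : Wd} (h : M2 (false :: l)) : M2 l := by cases h; assumption

lemma M2_true_inv {l : Wd} (h : M2 (true :: l)) : ∃ l', l = true :: l' ∧ M2 l' := by
  cases h; exact ⟨_, rfl, by assumption⟩

lemma M2_JJ (w : Wd) : ∀ l : List (Fin 3), (∀ i ∈ l, i ≠ 2) → M2 (JJ (D2 w) l) := by
  intro l
  induction l with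
  | nil => intro _; exact M2.nil
  | cons i t ih =>
    intro hfree
    have ht := ih (fun j hj => hfree j (List.mem_cons_of_mem _ hj))
    rcases fin3 i with rfl | rfl | rfl
    · simpa using M2.zero ht
    · simpa using M2.ones ht
    · exact absurd rfl (hfree 2 (List.mem_cons_self))

lemma M2_exists (w : Wd) {u : Wd} (h : M2 u) :
    ∃ l : List (Fin 3), (∀ i ∈ l, i ≠ 2) ∧ JJ (D2 w) l = u := by
  induction h with
  | nil => exact ⟨[], by simp, rfl⟩
  | zero _ ih =>
      rcases ih with ⟨l, hf, hl⟩
      exact ⟨0 :: l, by simpa using hf, by simp [hl]⟩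
  | ones _ ih =>
      rcases ih with ⟨l, hf, hl⟩
      exact ⟨1 :: l, by simpa using hf, by simp [hl]⟩

lemma UDsub2 (w : Wd) : ∀ l₁ l₂ : List (Fin 3), (∀ i ∈ l₁, i ≠ 2) → (∀ i ∈ l₂, i ≠ 2) →
    JJ (D2 w) l₁ = JJ (D2 w) l₂ → l₁ = l₂ := by
  intro l₁
  induction l₁ with
  | nil =>
    intro l₂ _ h2 heq
    cases l₂ with
    | nil => rfl
    | cons j t =>
      exfalso
      rcases fin3 j with rfl | rfl | rfl
      · simp [JJ] at heq
      · simp [JJ] at heq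
      · exact absurd rfl (h2 2 (List.mem_cons_self))
  | cons i t₁ ih =>
    intro l₂ h1 h2 heq
    cases l₂ with
    | nil =>
      exfalso
      rcases fin3 i with rfl | rfl | rfl
      · simp [JJ] at heq
      · simp [JJ] at heq
      · exact absurd rfl (h1 2 (List.mem_cons_self))
    | cons j t₂ =>
      have h1' : ∀ k ∈ t₁, k ≠ (2 : Fin 3) := fun k hk => h1 k (List.mem_cons_of_mem _ hk)
      have h2' : ∀ k ∈ t₂, k ≠ (2 : Fin 3) := fun k hk => h2 k (List.mem_cons_of_mem _ hk)
      rcases fin3 i with rfl | rfl | rfl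
      · rcases fin3 j with rfl | rfl | rfl
        · simp only [JJ_cons, D2_zero, List.cons_append, List.nil_append, List.cons.injEq] at heq
          rw [ih t₂ h1' h2' heq.2]
        · simp only [JJ_cons, D2_zero, D2_one, List.cons_append, List.nil_append,
            List.cons.injEq] at heq
          exact absurd heq.1 (by simp)
        · exact absurd rfl (h2 2 (List.mem_cons_self))
      · rcases fin3 j with rfl | rfl | rfl
        · simp only [JJ_cons, D2_zero, D2_one, List.cons_append, List.nil_append,
            List.cons.injEq] at heq
          exact absurd heq.1 (by simp)
        · simp only [JJ_cons, D2_one, List.cons_append, List.nil_append, List.cons.injEq] at heq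
          rw [ih t₂ h1' h2' heq.2.2]
        · exact absurd rfl (h2 2 (List.mem_cons_self))
      · exact absurd rfl (h1 2 (List.mem_cons_self))

lemma M2_quot {a : Wd} (ha : M2 a) : ∀ {b : Wd}, M2 (a ++ b) → M2 b := by
  induction ha with
  | nil => intro b h; simpa using h
  | zero _ ih => intro b h; exact ih (M2_false_inv (by simpa using h))
  | ones _ ih =>
    intro b h
    rw [List.cons_append, List.cons_append] at h
    cases h
    exact ih (by assumption)

lemma M2_replicate (j : ℕ) : M2 (List.replicate (2 * j) true) := by
  induction j with
  | zero => exact M2.nil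
  | succ n ih =>
    have : 2 * (n + 1) = 2 * n + 2 := by ring
    rw [this, List.replicate_add]
    exact M2.append ih (M2.ones M2.nil)

lemma M2_nofalse : ∀ {h : Wd}, M2 h → false ∉ h → ∃ t, h = List.replicate (2 * t) true := by
  intro h hm
  induction hm with
  | nil => intro _; exact ⟨0, rfl⟩
  | zero _ _ => intro hf; simp at hf
  | ones _ ih =>
    intro hf
    rcases ih (fun hx => hf (by simp [hx])) with ⟨t, ht⟩
    refine ⟨t + 1, ?_⟩
    rw [ht, show 2 * (t+1) = 2 + 2 * t by ring, List.replicate_add]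
    rfl

lemma M2_hasfalse : ∀ {m : Wd}, M2 m → false ∈ m →
    ∃ i r, m = List.replicate (2 * i) true ++ false :: r := by
  intro m hm
  induction hm with
  | nil => intro h; simp at h
  | zero hl _ => intro _; exact ⟨0, _, by simp; rfl⟩
  | ones _ ih =>
    intro hf
    rcases ih (by simpa using hf) with ⟨i, r, hr⟩
    refine ⟨i + 1, r, ?_⟩
    rw [show 2 * (i+1) = 2 + 2 * i by ring, List.replicate_add]
    simp [hr, List.replicate_succ]
lemma exists_dec2 : ∀ n {u : Wd}, u.length ≤ n → ¬ M2 u →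
    ∃ m z, u = m ++ [true] ++ z ∧ M2 m ∧ Ztail z := by
  intro n
  induction n with
  | zero =>
    intro u hu hnm
    simp only [Nat.le_zero, List.length_eq_zero_iff] at hu
    exact absurd (hu ▸ M2.nil) hnm
  | succ n ihn =>
    intro u hu hnm
    cases u with
    | nil => exact absurd M2.nil hnm
    | cons a u' =>
      cases a with
      | false =>
        have hnm' : ¬ M2 u' := fun h => hnm (M2.zero h)
        rcases ihn (by simp only [List.length_cons] at hu; omega) hnm' with ⟨m, z, hdec, hm, hz⟩
        exact ⟨false :: m, z, by simp [hdec], M2.zero hm, hz⟩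
      | true =>
        cases u' with
        | nil => exact ⟨[], [], by simp, M2.nil, Or.inl rfl⟩
        | cons b u'' =>
          cases b with
          | false => exact ⟨[], false :: u'', by simp, M2.nil, Or.inr ⟨u'', rfl⟩⟩
          | true =>
            have hnm' : ¬ M2 u'' := fun h => hnm (M2.ones h)
            rcases ihn (by simp only [List.length_cons] at hu; omega) hnm' with
              ⟨m, z, hdec, hm, hz⟩
            exact ⟨true :: true :: m, z, by simp [hdec], M2.ones hm, hz⟩

lemma dec2_unique : ∀ n (m₁ : Wd) {m₂ z₁ z₂ : Wd}, m₁.length ≤ n → M2 m₁ → M2 m₂ →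
    Ztail z₁ → Ztail z₂ →
    m₁ ++ [true] ++ z₁ = m₂ ++ [true] ++ z₂ → m₁ = m₂ ∧ z₁ = z₂ := by
  intro n
  induction n with
  | zero =>
    intro m₁ m₂ z₁ z₂ hlen hm₁ hm₂ hz₁ hz₂ heq
    simp only [Nat.le_zero, List.length_eq_zero_iff] at hlen
    subst hlen
    cases m₂ with
    | nil => simpa using heq
    | cons b m₅ =>
      cases b with
      | false => simp at heq
      | true =>
        rcases M2_true_inv hm₂ with ⟨m₆, rfl, _⟩
        -- heq : [true] ++ z₁ = true::true::m₆ ++ [true] ++ z₂ → z₁ = true::...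
        exfalso
        simp only [List.nil_append, List.cons_append, List.cons.injEq, true_and] at heq
        rcases hz₁ with rfl | ⟨z', rfl⟩
        · simp at heq
        · simp at heq
  | succ n ihn =>
    intro m₁ m₂ z₁ z₂ hlen hm₁ hm₂ hz₁ hz₂ heq
    cases m₁ with
    | nil =>
      cases m₂ with
      | nil => simpa using heq
      | cons b m₅ =>
        cases b with
        | false => simp at heq
        | true =>
          rcases M2_true_inv hm₂ with ⟨m₆, rfl, _⟩
          exfalso
          simp only [List.nil_append, List.cons_append, List.cons.injEq, true_and] at heq
          rcases hz₁ with rfl | ⟨z', rfl⟩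
          · simp at heq
          · simp at heq
    | cons a m₃ =>
      cases m₂ with
      | nil =>
        cases a with
        | false => simp at heq
        | true =>
          rcases M2_true_inv hm₁ with ⟨m₆, rfl, _⟩
          exfalso
          simp only [List.nil_append, List.cons_append, List.cons.injEq, true_and] at heq
          rcases hz₂ with rfl | ⟨z', rfl⟩
          · simp at heq
          · simp at heq
      | cons b m₅ =>
        cases a with
        | false =>
          cases b with
          | false =>
            simp only [List.cons_append, List.cons.injEq, true_and] at heq
            have := ihn m₃ (by simp only [List.length_cons] at hlen; omega)
              (M2_false_inv hm₁) (M2_false_inv hm₂) hz₁ hz₂ heq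
            exact ⟨by rw [this.1], this.2⟩
          | true => simp at heq
        | true =>
          cases b with
          | false => simp at heq
          | true =>
            rcases M2_true_inv hm₁ with ⟨m₄, rfl, hm₄⟩
            rcases M2_true_inv hm₂ with ⟨m₆, rfl, hm₆⟩
            simp only [List.cons_append, List.cons.injEq, true_and] at heq
            have := ihn m₄ (by simp only [List.length_cons] at hlen; omega)
              hm₄ hm₆ hz₁ hz₂ heq
            exact ⟨by rw [this.1], this.2⟩

lemma M2_no_dec {r : Wd} (hr : M2 r) :
    ∀ {m z : Wd}, M2 m → Ztail z → r ≠ m ++ [true] ++ z := by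
  induction hr with
  | nil => intro m z _ _ h; simp at h
  | zero _ ih =>
    intro m z hm hz h
    cases m with
    | nil =>
      simp only [List.nil_append, List.cons_append] at h
      simp at h
    | cons b m' =>
      cases b with
      | false =>
        simp only [List.cons_append, List.cons.injEq, true_and] at h
        exact ih (M2_false_inv hm) hz h
      | true => simp at h
  | ones _ ih =>
    intro m z hm hz h
    cases m with
    | nil =>
      simp only [List.nil_append, List.cons_append, List.cons.injEq, true_and] at h
      rcases hz with rfl | ⟨z', rfl⟩
      · simp at h
      · simp at h
    | cons b m' =>
      cases b with
      | false => simp at h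
      | true =>
        rcases M2_true_inv hm with ⟨m₆, rfl, hm₆⟩
        simp only [List.cons_append, List.cons.injEq, true_and] at h
        exact ih hm₆ hz h

lemma lambda_lemma {w : Wd} {i₀ : ℕ} {w' : Wd}
    (hw : w = List.replicate (2 * i₀) true ++ false :: w') :
    ∀ l : List (Fin 3), ∃ j tail, JJ (D2 w) l = List.replicate (2 * j) true ++ tail ∧
      Ztail tail := by
  intro l
  induction l with
  | nil => exact ⟨0, [], by simp, Or.inl rfl⟩
  | cons i t ih =>
    rcases ih with ⟨j, tail, hjt, hz⟩
    rcases fin3 i with rfl | rfl | rfl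
    · exact ⟨0, false :: JJ (D2 w) t, by simp, Or.inr ⟨_, rfl⟩⟩
    · refine ⟨j + 1, tail, ?_, hz⟩
      rw [JJ_cons, D2_one, hjt, show 2 * (j+1) = 2 + 2 * j by ring, List.replicate_add]
      rfl
    · exact ⟨i₀, false :: (w' ++ JJ (D2 w) t), by simp [hw], Or.inr ⟨_, rfl⟩⟩
lemma rep_true_comm (n : ℕ) : [true] ++ List.replicate n true = List.replicate n true ++ [true] := by
  rw [List.singleton_append, ← List.replicate_succ, List.replicate_succ']

lemma first_true_split : ∀ {l : Wd}, false ∈ l →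
    ∃ i r, l = List.replicate i true ++ false :: r := by
  intro l
  induction l with
  | nil => intro h; simp at h
  | cons a t ih =>
    intro h
    cases a with
    | false => exact ⟨0, t, by simp⟩
    | true =>
      rcases ih (by simpa using h) with ⟨i, r, hr⟩
      exact ⟨i + 1, r, by rw [List.replicate_succ]; simp [hr]⟩

lemma rep_false_inj : ∀ (i : ℕ) {j : ℕ} {X Y : Wd},
    List.replicate i true ++ false :: X = List.replicate j true ++ false :: Y → i = j := by
  intro i
  induction i with
  | zero =>
    intro j X Y h
    cases j with
    | zero => rfl
    | succ k => simp [List.replicate_succ] at h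
  | succ k ih =>
    intro j X Y h
    cases j with
    | zero => simp [List.replicate_succ] at h
    | succ j' =>
      simp only [List.replicate_succ, List.cons_append, List.cons.injEq, true_and] at h
      rw [ih h]

lemma no_false_of_shift {w A B : Wd} {k : ℕ} (hk : 0 < k)
    (h : w ++ A = List.replicate k true ++ w ++ B) : false ∉ w := by
  intro hf
  rcases first_true_split hf with ⟨i, r, hw⟩
  have h1 : List.replicate i true ++ false :: (r ++ A) =
      List.replicate (k + i) true ++ false :: (r ++ B) := by
    rw [List.replicate_add, List.append_assoc]
    calc List.replicate i true ++ false :: (r ++ A)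
        = (List.replicate i true ++ false :: r) ++ A := by simp
    _ = w ++ A := by rw [← hw]
    _ = List.replicate k true ++ w ++ B := h
    _ = List.replicate k true ++ (List.replicate i true ++ false :: (r ++ B)) := by
          rw [hw]; simp
  have := rep_false_inj i h1
  omega

lemma Z2 {w mw zw : Wd} (hwdec : w = mw ++ [true] ++ zw) (hmw : M2 mw) (hzw : Ztail zw)
    (hwf : false ∈ w) (g t : List (Fin 3)) (hg : ∀ i ∈ g, i ≠ 2) :
    ∃ m z, JJ (D2 w) (g ++ 2 :: t) = m ++ [true] ++ z ∧ M2 m ∧ Ztail z ∧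
      m.count false = (JJ (D2 w) g).count false + mw.count false := by
  rcases hzw with rfl | ⟨zw', rfl⟩
  · -- zw = [] : merging case
    have hfmw : false ∈ mw := by
      rw [hwdec] at hwf
      simpa using hwf
    rcases M2_hasfalse hmw hfmw with ⟨i₀, r, hmwshape⟩
    have hwshape : w = List.replicate (2 * i₀) true ++ false :: (r ++ [true]) := by
      rw [hwdec, hmwshape]; simp
    rcases lambda_lemma hwshape t with ⟨j, tail, hjt, hztail⟩
    refine ⟨JJ (D2 w) g ++ mw ++ List.replicate (2 * j) true, tail, ?_, ?_, hztail, ?_⟩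
    · rw [JJ_append, JJ_cons, D2_two, hjt, hwdec]
      simp only [List.append_assoc, List.append_nil]
      rw [show [true] ++ (List.replicate (2 * j) true ++ tail)
            = List.replicate (2 * j) true ++ ([true] ++ tail) from by
          rw [← List.append_assoc, rep_true_comm, List.append_assoc]]
    · exact ((M2_JJ w g hg).append hmw).append (M2_replicate j)
    · simp [List.count_append, List.count_replicate]
  · -- zw starts with false
    refine ⟨JJ (D2 w) g ++ mw, false :: (zw' ++ JJ (D2 w) t), ?_, (M2_JJ w g hg).append hmw,
      Or.inr ⟨_, rfl⟩, by simp [List.count_append]⟩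
    rw [JJ_append, JJ_cons, D2_two, hwdec]
    simp

theorem core2_ud {w : Wd} (hnm : ¬ M2 w) (hwf : false ∈ w) : IsUDCode (D2 w) := by
  rw [isUD_iff_JJ]
  obtain ⟨mw, zw, hwdec, hmw, hzw⟩ := exists_dec2 w.length le_rfl hnm
  have main : ∀ n (l₁ l₂ : List (Fin 3)), l₁.length + l₂.length ≤ n →
      JJ (D2 w) l₁ = JJ (D2 w) l₂ → l₁ = l₂ := by
    intro n
    induction n with
    | zero =>
      intro l₁ l₂ hlen _
      simp only [Nat.le_zero, Nat.add_eq_zero, List.length_eq_zero_iff] at hlen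
      rw [hlen.1, hlen.2]
    | succ n ihn =>
      intro l₁ l₂ hlen heq
      by_cases h1 : (2 : Fin 3) ∈ l₁
      · by_cases h2 : (2 : Fin 3) ∈ l₂
        · obtain ⟨g₁, t₁, rfl, hg₁⟩ := first_split (2 : Fin 3) l₁ h1
          obtain ⟨g₂, t₂, rfl, hg₂⟩ := first_split (2 : Fin 3) l₂ h2
          have hg₁' : ∀ i ∈ g₁, i ≠ (2 : Fin 3) := fun i hi h => hg₁ (h ▸ hi)
          have hg₂' : ∀ i ∈ g₂, i ≠ (2 : Fin 3) := fun i hi h => hg₂ (h ▸ hi)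
          obtain ⟨m₁, z₁, e₁, hm₁, hz₁, hc₁⟩ := Z2 hwdec hmw hzw hwf g₁ t₁ hg₁'
          obtain ⟨m₂, z₂, e₂, hm₂, hz₂, hc₂⟩ := Z2 hwdec hmw hzw hwf g₂ t₂ hg₂'
          have huniq := dec2_unique m₁.length m₁ le_rfl hm₁ hm₂ hz₁ hz₂ (by
            rw [← e₁, ← e₂, heq])
          have hcount : (JJ (D2 w) g₁).count false = (JJ (D2 w) g₂).count false := by
            have := hc₁.symm.trans (huniq.1 ▸ hc₂)
            omega
          -- compare the two prefixes JJ g₁ and JJ g₂ of the same word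
          have heq2 : JJ (D2 w) g₁ ++ (w ++ JJ (D2 w) t₁) =
              JJ (D2 w) g₂ ++ (w ++ JJ (D2 w) t₂) := by
            simpa [List.append_assoc] using heq
          have key : ∀ (ga gb : List (Fin 3)) (ta tb : List (Fin 3)) (a : Wd),
              (∀ i ∈ ga, i ≠ (2:Fin 3)) → (∀ i ∈ gb, i ≠ (2:Fin 3)) →
              JJ (D2 w) gb = JJ (D2 w) ga ++ a →
              w ++ JJ (D2 w) ta = a ++ (w ++ JJ (D2 w) tb) →
              (JJ (D2 w) ga).count false = (JJ (D2 w) gb).count false →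
              a = [] := by
            intro ga gb ta tb a hfa hfb hquot hshift hcnt
            have hM2a : M2 a := M2_quot (M2_JJ w ga hfa) (hquot ▸ M2_JJ w gb hfb)
            have hca : a.count false = 0 := by
              rw [hquot, List.count_append] at hcnt
              omega
            have hnf : false ∉ a := by
              intro hfa'
              have := List.count_pos_iff.2 hfa'
              omega
            rcases M2_nofalse hM2a hnf with ⟨tt, rfl⟩
            rcases Nat.eq_zero_or_pos tt with rfl | hpos
            · rfl
            · exfalso
              have hshift' : w ++ JJ (D2 w) ta =
                  List.replicate (2 * tt) true ++ w ++ JJ (D2 w) tb := by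
                rw [hshift]; simp [List.append_assoc]
              exact no_false_of_shift (by omega) hshift' hwf
          rcases List.append_eq_append_iff.1 heq2 with ⟨a, ha1, ha2⟩ | ⟨a, ha1, ha2⟩
          · have : a = [] := key g₁ g₂ t₁ t₂ a hg₁' hg₂' ha1 ha2 hcount
            subst this
            have hJg : JJ (D2 w) g₁ = JJ (D2 w) g₂ := by simpa using ha1.symm
            have hJt : JJ (D2 w) t₁ = JJ (D2 w) t₂ := by
              have := ha2
              simp only [List.nil_append] at this
              exact List.append_cancel_left this
            have hgg : g₁ = g₂ := UDsub2 w g₁ g₂ hg₁' hg₂' hJg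
            have htlen : t₁.length + t₂.length ≤ n := by
              simp only [List.length_append, List.length_cons] at hlen
              omega
            rw [hgg, ihn t₁ t₂ htlen hJt]
          · have : a = [] := key g₂ g₁ t₂ t₁ a hg₂' hg₁' ha1 ha2 hcount.symm
            subst this
            have hJg : JJ (D2 w) g₁ = JJ (D2 w) g₂ := by simpa using ha1
            have hJt : JJ (D2 w) t₁ = JJ (D2 w) t₂ := by
              have := ha2
              simp only [List.nil_append] at this
              exact List.append_cancel_left this.symm
            have hgg : g₁ = g₂ := UDsub2 w g₁ g₂ hg₁' hg₂' hJg
            have htlen : t₁.length + t₂.length ≤ n := by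
              simp only [List.length_append, List.length_cons] at hlen
              omega
            rw [hgg, ihn t₁ t₂ htlen hJt]
        · exfalso
          obtain ⟨g₁, t₁, rfl, hg₁⟩ := first_split (2 : Fin 3) l₁ h1
          have hg₁' : ∀ i ∈ g₁, i ≠ (2 : Fin 3) := fun i hi h => hg₁ (h ▸ hi)
          have hfree₂ : ∀ i ∈ l₂, i ≠ (2 : Fin 3) := fun i hi h => h2 (h ▸ hi)
          have hM : M2 (JJ (D2 w) l₂) := M2_JJ w l₂ hfree₂
          obtain ⟨m₁, z₁, e₁, hm₁, hz₁, _⟩ := Z2 hwdec hmw hzw hwf g₁ t₁ hg₁'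
          exact M2_no_dec hM hm₁ hz₁ (by rw [← heq, e₁])
      · by_cases h2 : (2 : Fin 3) ∈ l₂
        · exfalso
          obtain ⟨g₂, t₂, rfl, hg₂⟩ := first_split (2 : Fin 3) l₂ h2
          have hg₂' : ∀ i ∈ g₂, i ≠ (2 : Fin 3) := fun i hi h => hg₂ (h ▸ hi)
          have hfree₁ : ∀ i ∈ l₁, i ≠ (2 : Fin 3) := fun i hi h => h1 (h ▸ hi)
          have hM : M2 (JJ (D2 w) l₁) := M2_JJ w l₁ hfree₁
          obtain ⟨m₂, z₂, e₂, hm₂, hz₂, _⟩ := Z2 hwdec hmw hzw hwf g₂ t₂ hg₂'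
          exact M2_no_dec hM hm₂ hz₂ (by rw [heq, e₂])
        · exact UDsub2 w l₁ l₂ (fun i hi h => h1 (h ▸ hi)) (fun i hi h => h2 (h ▸ hi)) heq
  exact fun l₁ l₂ => main (l₁.length + l₂.length) l₁ l₂ le_rfl

theorem core2_not_M2 {w : Wd} (h : M2 w) : ¬ IsUDCode (D2 w) := by
  intro hud
  obtain ⟨l, hfree, hl⟩ := M2_exists w h
  have : JJ (D2 w) l = JJ (D2 w) [2] := by simp [hl]
  have hll := hud l [2] this
  exact hfree 2 (by rw [hll]; exact List.mem_cons_self) rfl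

theorem core2_not_ones {w : Wd} (h : false ∉ w) : ¬ IsUDCode (D2 w) := by
  intro hud
  have hwrep : w = List.replicate w.length true := by
    apply List.eq_replicate_length.2
    intro b hb
    cases b
    · exact absurd hb h
    · rfl
  have hJrep : ∀ L : ℕ, JJ (D2 w) (List.replicate L 1) = List.replicate (2 * L) true := by
    intro L
    induction L with
    | zero => simp
    | succ k ih =>
      rw [List.replicate_succ, JJ_cons, D2_one, ih, show 2 * (k+1) = 2 + 2 * k by ring,
        List.replicate_add]
      rfl
  have hj : JJ (D2 w) [2, 2] = JJ (D2 w) (List.replicate w.length 1) := by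
    have h1 : JJ (D2 w) [2, 2] = w ++ w := by simp [JJ]
    have h2 : w ++ w = List.replicate w.length true ++ List.replicate w.length true := by
      conv_lhs => rw [hwrep]
    rw [h1, h2, hJrep, two_mul, List.replicate_add]
  have := hud [2, 2] (List.replicate w.length 1) hj
  have h2 : (2 : Fin 3) ∈ List.replicate w.length (1 : Fin 3) := by
    rw [← this]; exact List.mem_cons_self
  have := List.eq_of_mem_replicate h2
  simp at this
-- ===== symmetry transports =====

lemma join_map_rev {m : ℕ} (C : Fin m → Wd) : ∀ l : List (Fin m),
    (l.map (fun i => (C i).reverse)).flatten = ((l.reverse.map C).flatten).reverse := by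
  intro l
  induction l with
  | nil => simp
  | cons i t ih =>
    have h1 : ((i :: t).map (fun i => (C i).reverse)).flatten
        = (C i).reverse ++ (t.map (fun i => (C i).reverse)).flatten := by simp
    have h2 : ((i :: t).reverse.map C).flatten = (t.reverse.map C).flatten ++ C i := by simp
    rw [h1, h2, List.reverse_append, ih]

lemma UD_map_rev {m : ℕ} (C : Fin m → Wd) (h : IsUDCode C) :
    IsUDCode (fun i => (C i).reverse) := by
  intro l₁ l₂ heq
  rw [join_map_rev, join_map_rev] at heq
  have h2 := List.reverse_injective heq
  have h3 := h _ _ h2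
  have h4 := List.reverse_injective h3
  simpa using h4

lemma UD_rev_iff {m : ℕ} (C : Fin m → Wd) :
    IsUDCode (fun i => (C i).reverse) ↔ IsUDCode C := by
  constructor
  · intro h
    have := UD_map_rev _ h
    have he : (fun i => ((C i).reverse).reverse) = C := by
      funext i; exact List.reverse_reverse _
    rwa [he] at this
  · exact UD_map_rev C

lemma join_map_not {m : ℕ} (C : Fin m → Wd) : ∀ l : List (Fin m),
    (l.map (fun i => (C i).map not)).flatten = ((l.map C).flatten).map not := by
  intro l
  induction l with
  | nil => simp
  | cons i t ih => simp [ih]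

lemma map_not_injective : Function.Injective (List.map not) := by
  apply List.map_injective_iff.2
  intro a b h
  cases a <;> cases b <;> simp_all

lemma UD_map_not {m : ℕ} (C : Fin m → Wd) (h : IsUDCode C) :
    IsUDCode (fun i => (C i).map not) := by
  intro l₁ l₂ heq
  rw [join_map_not, join_map_not] at heq
  exact h _ _ (map_not_injective heq)

lemma UD_not_iff {m : ℕ} (C : Fin m → Wd) :
    IsUDCode (fun i => (C i).map not) ↔ IsUDCode C := by
  constructor
  · intro h
    have := UD_map_not _ h
    have he : (fun i => ((C i).map not).map not) = C := by
      funext i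
      rw [List.map_map, show (not ∘ not) = id from funext fun b => Bool.not_not b, List.map_id]
    rwa [he] at this
  · exact UD_map_not C

lemma code_rev (x : Bool) (v w : Wd) :
    (fun i => ((![[x], v, w] : Fin 3 → Wd) i).reverse) = ![[x], v.reverse, w.reverse] := by
  funext i
  rcases fin3 i with rfl | rfl | rfl <;> rfl

lemma code_not (x : Bool) (v w : Wd) :
    (fun i => ((![[x], v, w] : Fin 3 → Wd) i).map not) = ![[!x], v.map not, w.map not] := by
  funext i
  rcases fin3 i with rfl | rfl | rfl <;> rfl

lemma UD_rev_code (x : Bool) (v w : Wd) :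
    IsUDCode (![[x], v.reverse, w.reverse] : Fin 3 → Wd) ↔ IsUDCode ![[x], v, w] := by
  rw [← code_rev, UD_rev_iff]

lemma UD_not_code (x : Bool) (v w : Wd) :
    IsUDCode (![[!x], v.map not, w.map not] : Fin 3 → Wd) ↔ IsUDCode ![[x], v, w] := by
  rw [← code_not, UD_not_iff]

lemma infix_map_not {l₁ l₂ : Wd} : l₁.map not <:+: l₂.map not ↔ l₁ <:+: l₂ := by
  constructor
  · intro h
    have h2 := h.map not
    simpa [List.map_map, show (not ∘ not) = id from funext fun b => Bool.not_not b] using h2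
  · intro h
    exact h.map not

lemma ud_not_dup (x : Bool) (w : Wd) : ¬ IsUDCode (![[x], [x, x], w] : Fin 3 → Wd) := by
  intro hud
  have heq : (([0, 0] : List (Fin 3)).map ![[x], [x,x], w]).flatten
      = (([1] : List (Fin 3)).map ![[x], [x,x], w]).flatten := by
    simp
  have := hud [0, 0] [1] heq
  simp at this
-- ===== characterization =====

lemma core1_iff (w : Wd) : IsUDCode (D1 w) ↔ [true, true] <:+: w :=
  ⟨fun h => by by_contra hn; exact core1_not hn h, core1_ud⟩

lemma core2_iff (w : Wd) : IsUDCode (D2 w) ↔ (¬ M2 w ∧ false ∈ w) := by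
  constructor
  · intro h
    constructor
    · intro hm; exact core2_not_M2 hm h
    · by_contra hn; exact core2_not_ones hn h
  · intro h; exact core2_ud h.1 h.2

def GoodF (v w : Wd) : Prop :=
  ((v = [true, false] ∨ v = [false, true]) ∧ [true, true] <:+: w) ∨
    (v = [true, true] ∧ (¬ M2 w ∧ false ∈ w))

lemma char_false (v w : Wd) (hv : v.length = 2) :
    IsUDCode (![[false], v, w] : Fin 3 → Wd) ↔ GoodF v w := by
  obtain ⟨a, b, rfl⟩ := List.length_eq_two.1 hv
  cases a <;> cases b
  · -- [false, false]
    simp only [GoodF]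
    constructor
    · intro h; exact absurd h (ud_not_dup false w)
    · intro h; simp at h
  · -- [false, true] : via reversal
    have h1 : IsUDCode (![[false], [false, true], w] : Fin 3 → Wd) ↔
        IsUDCode (![[false], [true, false], w.reverse] : Fin 3 → Wd) := by
      have := UD_rev_code false [true, false] w.reverse
      simpa using this
    rw [h1]
    have h2 : IsUDCode (![[false], [true, false], w.reverse] : Fin 3 → Wd) ↔
        [true, true] <:+: w.reverse := core1_iff w.reverse
    rw [h2]
    have h3 : [true, true] <:+: w.reverse ↔ [true, true] <:+: w := by
      constructor
      · intro h
        have := h.reverse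
        simpa using this
      · intro h
        have := h.reverse
        simpa using this
    rw [h3]
    simp [GoodF]
  · -- [true, false]
    rw [show (![[false], [true, false], w] : Fin 3 → Wd) = D1 w from rfl, core1_iff]
    simp [GoodF]
  · -- [true, true]
    rw [show (![[false], [true, true], w] : Fin 3 → Wd) = D2 w from rfl, core2_iff]
    simp [GoodF]

def Good (x : Bool) (v w : Wd) : Prop :=
  if x then GoodF (v.map not) (w.map not) else GoodF v w

lemma char_UD (x : Bool) (v w : Wd) (hv : v.length = 2) :
    IsUDCode (![[x], v, w] : Fin 3 → Wd) ↔ Good x v w := by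
  cases x
  · exact char_false v w hv
  · have h := UD_not_code true v w
    rw [show (!true) = false from rfl] at h
    rw [← h, char_false (v.map not) (w.map not) (by simpa using hv)]
    simp [Good]
-- ===== counting =====

attribute [local instance] Classical.propDecidable

def WF : ℕ → Finset Wd
  | 0 => {[]}
  | n + 1 => ((WF n).image (fun l => false :: l)) ∪ ((WF n).image (fun l => true :: l))

lemma mem_WF : ∀ n (l : Wd), l ∈ WF n ↔ l.length = n := by
  intro n
  induction n with
  | zero => intro l; simp [WF, List.length_eq_zero_iff]
  | succ n ih =>
    intro l
    simp only [WF, Finset.mem_union, Finset.mem_image]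
    constructor
    · rintro (⟨a, ha, rfl⟩ | ⟨a, ha, rfl⟩) <;> simp [(ih a).1 ha]
    · intro hl
      cases l with
      | nil => simp at hl
      | cons b t =>
        have ht : t.length = n := by simpa using hl
        cases b
        · exact Or.inl ⟨t, (ih t).2 ht, rfl⟩
        · exact Or.inr ⟨t, (ih t).2 ht, rfl⟩

lemma card_WF : ∀ n, (WF n).card = 2 ^ n := by
  intro n
  induction n with
  | zero => rfl
  | succ n ih =>
    have hdisj : Disjoint ((WF n).image (fun l => false :: l))
        ((WF n).image (fun l => true :: l)) := by
      rw [Finset.disjoint_left]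
      rintro x hx hy
      simp only [Finset.mem_image] at hx hy
      rcases hx with ⟨a, _, rfl⟩
      rcases hy with ⟨b, _, hb⟩
      simp at hb
    have h1 : ((WF n).image (fun l => false :: l)).card = (WF n).card :=
      Finset.card_image_of_injective _ (fun a b h => by simpa using h)
    have h2 : ((WF n).image (fun l => true :: l)).card = (WF n).card :=
      Finset.card_image_of_injective _ (fun a b h => by simpa using h)
    show (((WF n).image (fun l => false :: l)) ∪ ((WF n).image (fun l => true :: l))).card = _
    rw [Finset.card_union_of_disjoint hdisj, h1, h2, ih]
    ring

def NF : ℕ → Finset Wd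
  | 0 => {[]}
  | 1 => {[false], [true]}
  | n + 2 => ((NF (n + 1)).image (fun l => false :: l)) ∪
      ((NF n).image (fun l => true :: false :: l))

lemma mem_NF : ∀ n (l : Wd), l ∈ NF n ↔ (l.length = n ∧ ¬ [true, true] <:+: l) := by
  intro n
  induction n using Nat.strong_induction_on with
  | _ n ih =>
    match n with
    | 0 =>
      intro l
      simp only [NF, Finset.mem_singleton]
      constructor
      · rintro rfl; exact ⟨rfl, by simp⟩
      · rintro ⟨hl, _⟩; exact List.length_eq_zero_iff.1 hl
    | 1 =>
      intro l
      simp only [NF, Finset.mem_insert, Finset.mem_singleton]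
      constructor
      · rintro (rfl | rfl) <;> exact ⟨rfl, by intro h; have := h.length_le; simp at this⟩
      · rintro ⟨hl, _⟩
        rcases List.length_eq_one_iff.1 hl with ⟨a, rfl⟩
        cases a
        · exact Or.inl rfl
        · exact Or.inr rfl
    | (m + 2) =>
      intro l
      simp only [NF, Finset.mem_union, Finset.mem_image]
      constructor
      · rintro (⟨a, ha, rfl⟩ | ⟨a, ha, rfl⟩)
        · rcases (ih (m+1) (by omega) a).1 ha with ⟨hlen, hinf⟩
          exact ⟨by simp [hlen], fun h => hinf (infix11_cons_false.1 h)⟩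
        · rcases (ih m (by omega) a).1 ha with ⟨hlen, hinf⟩
          refine ⟨by simp [hlen], fun h => ?_⟩
          rcases infix11_cons_true.1 h with ⟨l', hl'⟩ | h2
          · simp at hl'
          · exact hinf (infix11_cons_false.1 h2)
      · rintro ⟨hlen, hinf⟩
        cases l with
        | nil => simp at hlen
        | cons b t =>
          cases b
          · refine Or.inl ⟨t, (ih (m+1) (by omega) t).2 ⟨by simpa using hlen, ?_⟩, rfl⟩
            exact fun h => hinf (infix11_cons_false.2 h)
          · cases t with
            | nil => simp at hlen
            | cons b2 t2 =>
              cases b2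
              · refine Or.inr ⟨t2, (ih m (by omega) t2).2 ⟨by simpa using hlen, ?_⟩, rfl⟩
                exact fun h => hinf (infix11_cons_true.2 (Or.inr (infix11_cons_false.2 h)))
              · exact absurd (infix11_cons_true.2 (Or.inl ⟨t2, rfl⟩)) hinf

lemma card_NF : ∀ n, (NF n).card = Nat.fib (n + 2) := by
  intro n
  induction n using Nat.strong_induction_on with
  | _ n ih =>
    match n with
    | 0 => rfl
    | 1 => rfl
    | (m + 2) =>
      have hdisj : Disjoint ((NF (m+1)).image (fun l => false :: l))
          ((NF m).image (fun l => true :: false :: l)) := by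
        rw [Finset.disjoint_left]
        rintro x hx hy
        simp only [Finset.mem_image] at hx hy
        rcases hx with ⟨a, _, rfl⟩
        rcases hy with ⟨b, _, hb⟩
        simp at hb
      have h1 : ((NF (m+1)).image (fun l => false :: l)).card = (NF (m+1)).card :=
        Finset.card_image_of_injective _ (fun a b h => by simpa using h)
      have h2 : ((NF m).image (fun l => true :: false :: l)).card = (NF m).card :=
        Finset.card_image_of_injective _ (fun a b h => by simpa using h)
      show (((NF (m+1)).image _) ∪ ((NF m).image _)).card = _
      rw [Finset.card_union_of_disjoint hdisj, h1, h2, ih (m+1) (by omega), ih m (by omega)]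
      have hf : Nat.fib (m + 2 + 2) = Nat.fib (m + 2) + Nat.fib (m + 2 + 1) := Nat.fib_add_two
      have h4 : Nat.fib (m + 2 + 1) = Nat.fib (m + 1 + 2) := rfl
      omega

def MF : ℕ → Finset Wd
  | 0 => {[]}
  | 1 => {[false]}
  | n + 2 => ((MF (n + 1)).image (fun l => false :: l)) ∪
      ((MF n).image (fun l => true :: true :: l))

lemma mem_MF : ∀ n (l : Wd), l ∈ MF n ↔ (l.length = n ∧ M2 l) := by
  intro n
  induction n using Nat.strong_induction_on with
  | _ n ih =>
    match n with
    | 0 =>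
      intro l
      simp only [MF, Finset.mem_singleton]
      constructor
      · rintro rfl; exact ⟨rfl, M2.nil⟩
      · rintro ⟨hl, _⟩; exact List.length_eq_zero_iff.1 hl
    | 1 =>
      intro l
      simp only [MF, Finset.mem_singleton]
      constructor
      · rintro rfl; exact ⟨rfl, M2.zero M2.nil⟩
      · rintro ⟨hl, hm⟩
        rcases List.length_eq_one_iff.1 hl with ⟨a, rfl⟩
        cases a
        · rfl
        · rcases M2_true_inv hm with ⟨l', hl', _⟩
          simp at hl'
    | (m + 2) =>
      intro l
      simp only [MF, Finset.mem_union, Finset.mem_image]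
      constructor
      · rintro (⟨a, ha, rfl⟩ | ⟨a, ha, rfl⟩)
        · rcases (ih (m+1) (by omega) a).1 ha with ⟨hlen, hm⟩
          exact ⟨by simp [hlen], M2.zero hm⟩
        · rcases (ih m (by omega) a).1 ha with ⟨hlen, hm⟩
          exact ⟨by simp [hlen], M2.ones hm⟩
      · rintro ⟨hlen, hm⟩
        cases l with
        | nil => simp at hlen
        | cons b t =>
          cases b
          · exact Or.inl ⟨t, (ih (m+1) (by omega) t).2
              ⟨by simpa using hlen, M2_false_inv hm⟩, rfl⟩
          · rcases M2_true_inv hm with ⟨t2, rfl, hm2⟩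
            exact Or.inr ⟨t2, (ih m (by omega) t2).2 ⟨by simpa using hlen, hm2⟩, rfl⟩

lemma card_MF : ∀ n, (MF n).card = Nat.fib (n + 1) := by
  intro n
  induction n using Nat.strong_induction_on with
  | _ n ih =>
    match n with
    | 0 => rfl
    | 1 => rfl
    | (m + 2) =>
      have hdisj : Disjoint ((MF (m+1)).image (fun l => false :: l))
          ((MF m).image (fun l => true :: true :: l)) := by
        rw [Finset.disjoint_left]
        rintro x hx hy
        simp only [Finset.mem_image] at hx hy
        rcases hx with ⟨a, _, rfl⟩
        rcases hy with ⟨b, _, hb⟩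
        simp at hb
      have h1 : ((MF (m+1)).image (fun l => false :: l)).card = (MF (m+1)).card :=
        Finset.card_image_of_injective _ (fun a b h => by simpa using h)
      have h2 : ((MF m).image (fun l => true :: true :: l)).card = (MF m).card :=
        Finset.card_image_of_injective _ (fun a b h => by simpa using h)
      show (((MF (m+1)).image _) ∪ ((MF m).image _)).card = _
      rw [Finset.card_union_of_disjoint hdisj, h1, h2, ih (m+1) (by omega), ih m (by omega)]
      have hf : Nat.fib (m + 1 + 2) = Nat.fib (m + 1) + Nat.fib (m + 1 + 1) := Nat.fib_add_two
      have h4 : Nat.fib (m + 1 + 2) = Nat.fib (m + 2 + 1) := rfl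
      have h5 : Nat.fib (m + 1 + 1) = Nat.fib (m + 2) := rfl
      omega
noncomputable def N1F (c : ℕ) : Finset Wd := (WF c).filter (fun w => [true, true] <:+: w)
noncomputable def N2F (c : ℕ) : Finset Wd := (WF c).filter (fun w => ¬ M2 w ∧ false ∈ w)
noncomputable def G1T (c : ℕ) : Finset Wd := (WF c).filter (fun w => [false, false] <:+: w)
noncomputable def G2T (c : ℕ) : Finset Wd :=
  (WF c).filter (fun w => ¬ M2 (w.map not) ∧ true ∈ w)

lemma card_N1F (c : ℕ) : (N1F c).card + Nat.fib (c + 2) = 2 ^ c := by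
  have h := Finset.card_filter_add_card_filter_not
    (s := WF c) (p := fun w => [true, true] <:+: w)
  have h2 : (WF c).filter (fun w => ¬ [true, true] <:+: w) = NF c := by
    ext l
    simp only [Finset.mem_filter, mem_WF, mem_NF]
  rw [h2, card_NF, card_WF] at h
  exact h

lemma notM2_rep_odd (k : ℕ) : ¬ M2 (List.replicate (2 * k + 1) true) := by
  intro h
  rcases M2_nofalse h (by simp) with ⟨t, ht⟩
  have := congrArg List.length ht
  simp at this
  omega

lemma nofalse_rep {w : Wd} (h : false ∉ w) : w = List.replicate w.length true := by
  apply List.eq_replicate_length.2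
  intro b hb
  cases b
  · exact absurd hb h
  · rfl

noncomputable def BadF (c : ℕ) : Finset Wd :=
  MF c ∪ (if c % 2 = 1 then {List.replicate c true} else ∅)

lemma mem_BadF (c : ℕ) (w : Wd) :
    w ∈ BadF c ↔ (w.length = c ∧ (M2 w ∨ false ∉ w)) := by
  simp only [BadF, Finset.mem_union]
  constructor
  · rintro (h | h)
    · rcases (mem_MF c w).1 h with ⟨h1, h2⟩
      exact ⟨h1, Or.inl h2⟩
    · rcases Nat.even_or_odd c with ⟨k, hk⟩ | ⟨k, hk⟩
      · exfalso
        rw [if_neg (by omega)] at h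
        simp at h
      · rw [if_pos (by omega)] at h
        simp only [Finset.mem_singleton] at h
        subst h
        exact ⟨by simp, Or.inr (by simp)⟩
  · rintro ⟨hlen, hm | hnf⟩
    · exact Or.inl ((mem_MF c w).2 ⟨hlen, hm⟩)
    · have hrep : w = List.replicate c true := by rw [← hlen]; exact nofalse_rep hnf
      rcases Nat.even_or_odd c with ⟨k, hk⟩ | ⟨k, hk⟩
      · refine Or.inl ((mem_MF c w).2 ⟨hlen, ?_⟩)
        rw [hrep, hk, show k + k = 2 * k by ring]
        exact M2_replicate k
      · refine Or.inr ?_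
        rw [if_pos (by omega)]
        simp [hrep]

lemma card_BadF (c : ℕ) : (BadF c).card = Nat.fib (c + 1) + c % 2 := by
  rcases Nat.even_or_odd c with ⟨k, hk⟩ | ⟨k, hk⟩
  · have : BadF c = MF c := by
      rw [BadF, if_neg (by omega)]
      simp
    rw [this, card_MF]
    omega
  · rw [BadF, if_pos (by omega)]
    have hdisj : Disjoint (MF c) ({List.replicate c true} : Finset Wd) := by
      rw [Finset.disjoint_right]
      intro x hx hmem
      simp only [Finset.mem_singleton] at hx
      subst hx
      rcases (mem_MF c _).1 hmem with ⟨_, hm⟩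
      rw [hk] at hm
      exact notM2_rep_odd k hm
    rw [Finset.card_union_of_disjoint hdisj, card_MF]
    simp
    omega

lemma card_N2F (c : ℕ) : (N2F c).card + (Nat.fib (c + 1) + c % 2) = 2 ^ c := by
  have h := Finset.card_filter_add_card_filter_not
    (s := WF c) (p := fun w => ¬ M2 w ∧ false ∈ w)
  have h2 : (WF c).filter (fun w => ¬ (¬ M2 w ∧ false ∈ w)) = BadF c := by
    ext l
    simp only [Finset.mem_filter, mem_WF, mem_BadF]
    constructor
    · rintro ⟨h1, h2⟩
      refine ⟨h1, ?_⟩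
      by_cases hm : M2 l
      · exact Or.inl hm
      · exact Or.inr (fun hf => h2 ⟨hm, hf⟩)
    · rintro ⟨h1, h2 | h2⟩
      · exact ⟨h1, fun hc => hc.1 h2⟩
      · exact ⟨h1, fun hc => h2 hc.2⟩
  rw [h2, card_BadF, card_WF] at h
  exact h

lemma false_mem_map_not (w : Wd) : false ∈ w.map not ↔ true ∈ w := by
  simp only [List.mem_map]
  constructor
  · rintro ⟨a, ha, hna⟩
    cases a
    · simp at hna
    · exact ha
  · intro h; exact ⟨true, h, rfl⟩

lemma true_mem_map_not (w : Wd) : true ∈ w.map not ↔ false ∈ w := by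
  simp only [List.mem_map]
  constructor
  · rintro ⟨a, ha, hna⟩
    cases a
    · exact ha
    · simp at hna
  · intro h; exact ⟨false, h, rfl⟩

lemma card_G1T (c : ℕ) : (G1T c).card = (N1F c).card := by
  apply Finset.card_bij' (fun w _ => w.map not) (fun w _ => w.map not)
  · intro a _
    rw [List.map_map, show (not ∘ not) = id from funext fun b => Bool.not_not b, List.map_id]
  · intro a _
    rw [List.map_map, show (not ∘ not) = id from funext fun b => Bool.not_not b, List.map_id]
  · intro a ha
    simp only [G1T, N1F, Finset.mem_filter, mem_WF] at ha ⊢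
    refine ⟨by simpa using ha.1, ?_⟩
    have : ([false, false] : Wd).map not <:+: a.map not := infix_map_not.2 ha.2
    simpa using this
  · intro a ha
    simp only [G1T, N1F, Finset.mem_filter, mem_WF] at ha ⊢
    refine ⟨by simpa using ha.1, ?_⟩
    have : ([true, true] : Wd).map not <:+: a.map not := infix_map_not.2 ha.2
    simpa using this

lemma card_G2T (c : ℕ) : (G2T c).card = (N2F c).card := by
  apply Finset.card_bij' (fun w _ => w.map not) (fun w _ => w.map not)
  · intro a _
    rw [List.map_map, show (not ∘ not) = id from funext fun b => Bool.not_not b, List.map_id]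
  · intro a _
    rw [List.map_map, show (not ∘ not) = id from funext fun b => Bool.not_not b, List.map_id]
  · intro a ha
    simp only [G2T, N2F, Finset.mem_filter, mem_WF] at ha ⊢
    exact ⟨by simpa using ha.1, ha.2.1, (false_mem_map_not a).2 ha.2.2⟩
  · intro a ha
    simp only [G2T, N2F, Finset.mem_filter, mem_WF] at ha ⊢
    refine ⟨by simpa using ha.1, ?_, (true_mem_map_not a).2 ha.2.2⟩
    rw [List.map_map, show (not ∘ not) = id from funext fun b => Bool.not_not b, List.map_id]
    exact ha.2.1
noncomputable def TRIP (c : ℕ) : Finset (Bool × Wd × Wd) :=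
  (({false} : Finset Bool) ×ˢ
    ((({[true, false], [false, true]} : Finset Wd) ×ˢ N1F c) ∪
      (({[true, true]} : Finset Wd) ×ˢ N2F c))) ∪
  (({true} : Finset Bool) ×ˢ
    ((({[false, true], [true, false]} : Finset Wd) ×ˢ G1T c) ∪
      (({[false, false]} : Finset Wd) ×ˢ G2T c)))

lemma pred_iff_mem (c : ℕ) (T : Bool × Wd × Wd) :
    (T.2.1.length = 2 ∧ T.2.2.length = c ∧ IsUDCode ![[T.1], T.2.1, T.2.2]) ↔ T ∈ TRIP c := by
  obtain ⟨x, v, w⟩ := T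
  simp only [TRIP, Finset.mem_union, Finset.mem_product, Finset.mem_singleton,
    Finset.mem_insert, N1F, N2F, G1T, G2T, Finset.mem_filter, mem_WF]
  constructor
  · rintro ⟨hv, hw, hud⟩
    rw [char_UD x v w hv] at hud
    cases x
    · left
      refine ⟨rfl, ?_⟩
      rcases hud with ⟨hv', hinf⟩ | ⟨hv', h2⟩
      · exact Or.inl ⟨hv', hw, hinf⟩
      · exact Or.inr ⟨hv', hw, h2⟩
    · right
      refine ⟨rfl, ?_⟩
      rcases hud with ⟨hv', hinf⟩ | ⟨hv', h2⟩
      · refine Or.inl ⟨?_, hw, ?_⟩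
        · rcases hv' with h | h
          · exact Or.inl (map_not_injective (h.trans (rfl : [true, false] =
              ([false, true] : Wd).map not)))
          · exact Or.inr (map_not_injective (h.trans (rfl : [false, true] =
              ([true, false] : Wd).map not)))
        · have : ([false, false] : Wd).map not <:+: w.map not := by exact hinf
          exact infix_map_not.1 this
      · refine Or.inr ⟨map_not_injective (hv'.trans (rfl : [true, true] =
          ([false, false] : Wd).map not)), hw, h2.1, (false_mem_map_not w).1 h2.2⟩
  · rintro (⟨rfl, h⟩ | ⟨rfl, h⟩)
    · rcases h with ⟨hv, hw, hP⟩ | ⟨rfl, hw, hP⟩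
      · have hv2 : v.length = 2 := by rcases hv with rfl | rfl <;> rfl
        refine ⟨hv2, hw, ?_⟩
        rw [char_UD false v w hv2]
        exact Or.inl ⟨hv, hP⟩
      · exact ⟨rfl, hw, by rw [char_UD false [true, true] w rfl]; exact Or.inr ⟨rfl, hP⟩⟩
    · rcases h with ⟨hv, hw, hP⟩ | ⟨rfl, hw, hP⟩
      · have hv2 : v.length = 2 := by rcases hv with rfl | rfl <;> rfl
        refine ⟨hv2, hw, ?_⟩
        rw [char_UD true v w hv2]
        refine Or.inl ⟨?_, ?_⟩
        · rcases hv with rfl | rfl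
          · exact Or.inl rfl
          · exact Or.inr rfl
        · have := infix_map_not.2 hP
          exact this
      · refine ⟨rfl, hw, ?_⟩
        rw [char_UD true [false, false] w rfl]
        exact Or.inr ⟨rfl, hP.1, (false_mem_map_not w).2 hP.2⟩

lemma card_TRIP (c : ℕ) :
    (TRIP c).card = 2 * (2 * (N1F c).card + (N2F c).card) := by
  have hdO : Disjoint
      (({false} : Finset Bool) ×ˢ
        ((({[true, false], [false, true]} : Finset Wd) ×ˢ N1F c) ∪
          (({[true, true]} : Finset Wd) ×ˢ N2F c)))
      (({true} : Finset Bool) ×ˢ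
        ((({[false, true], [true, false]} : Finset Wd) ×ˢ G1T c) ∪
          (({[false, false]} : Finset Wd) ×ˢ G2T c))) := by
    rw [Finset.disjoint_left]
    rintro ⟨x, v, w⟩ h1 h2
    simp only [Finset.mem_product, Finset.mem_singleton] at h1 h2
    rw [h1.1] at h2
    exact (by simp at h2 : False)
  have hd1 : Disjoint (({[true, false], [false, true]} : Finset Wd) ×ˢ N1F c)
      (({[true, true]} : Finset Wd) ×ˢ N2F c) := by
    rw [Finset.disjoint_left]
    rintro ⟨v, w⟩ h1 h2
    simp only [Finset.mem_product, Finset.mem_singleton, Finset.mem_insert] at h1 h2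
    rcases h1.1 with h | h <;> rw [h] at h2 <;> simp at h2
  have hd2 : Disjoint (({[false, true], [true, false]} : Finset Wd) ×ˢ G1T c)
      (({[false, false]} : Finset Wd) ×ˢ G2T c) := by
    rw [Finset.disjoint_left]
    rintro ⟨v, w⟩ h1 h2
    simp only [Finset.mem_product, Finset.mem_singleton, Finset.mem_insert] at h1 h2
    rcases h1.1 with h | h <;> rw [h] at h2 <;> simp at h2
  have hc2 : ({[true, false], [false, true]} : Finset Wd).card = 2 := by
    rw [Finset.card_insert_of_notMem (by simp), Finset.card_singleton]
  have hc2' : ({[false, true], [true, false]} : Finset Wd).card = 2 := by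
    rw [Finset.card_insert_of_notMem (by simp), Finset.card_singleton]
  rw [TRIP, Finset.card_union_of_disjoint hdO, Finset.card_product, Finset.card_product,
    Finset.card_union_of_disjoint hd1, Finset.card_union_of_disjoint hd2,
    Finset.card_product, Finset.card_product, Finset.card_product, Finset.card_product,
    hc2, hc2', Finset.card_singleton, Finset.card_singleton, Finset.card_singleton,
    Finset.card_singleton, card_G1T, card_G2T]
  ring

end UDC

theorem count_ud_one_two_c (c : ℕ) (hc : 1 ≤ c) :
    (Nat.card {T : Bool × List Bool × List Bool //
        T.2.1.length = 2 ∧ T.2.2.length = c ∧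
        IsUDCode ![[T.1], T.2.1, T.2.2]} : ℤ) =
      3 * 2 ^ (c + 1) - 2 * Nat.fib (c + 4) - 2 * (c % 2) := by
  classical
  have hcard : Nat.card {T : Bool × List Bool × List Bool //
      T.2.1.length = 2 ∧ T.2.2.length = c ∧ IsUDCode ![[T.1], T.2.1, T.2.2]}
      = (UDC.TRIP c).card := by
    rw [Nat.card_congr (Equiv.subtypeEquivRight (UDC.pred_iff_mem c))]
    rw [Nat.card_eq_fintype_card, Fintype.card_coe]
  rw [hcard, UDC.card_TRIP c]
  have h1 := UDC.card_N1F c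
  have h2 := UDC.card_N2F c
  have hf1 : Nat.fib (c + 4) = Nat.fib (c + 2) + Nat.fib (c + 3) := Nat.fib_add_two
  have hf2 : Nat.fib (c + 3) = Nat.fib (c + 1) + Nat.fib (c + 2) := Nat.fib_add_two
  have hmod : ((c : ℤ) % 2) = ((c % 2 : ℕ) : ℤ) := by omega
  have h1' : ((UDC.N1F c).card : ℤ) + Nat.fib (c + 2) = 2 ^ c := by exact_mod_cast h1
  have h2' : ((UDC.N2F c).card : ℤ) + (Nat.fib (c + 1) + (c % 2 : ℕ)) = 2 ^ c := by
    exact_mod_cast h2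
  have hf1' : (Nat.fib (c + 4) : ℤ) = Nat.fib (c + 2) + Nat.fib (c + 3) := by exact_mod_cast hf1
  have hf2' : (Nat.fib (c + 3) : ℤ) = Nat.fib (c + 1) + Nat.fib (c + 2) := by exact_mod_cast hf2
  have hp : (2 : ℤ) ^ (c + 1) = 2 * 2 ^ c := by rw [pow_succ]; ring
  push_cast
  rw [hmod]
  push_cast
  linarith
end
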